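/- arXiv:2202.08312 — 10 statements merged into one kernel-verified Lean document; each statement's English description precedes it below -/
import Mathlib

section
/- Let n ≥ 1, let S be an invertible n×n real matrix, and let c > 0 be such that vᵀ(SᵀS)v ≥ c·‖v‖² for every v ∈ ℝⁿ. If X is an n×n real symmetric positive-definite matrix with all diagonal entries at most 1 and tr(SᵀS X⁻¹) ≤ tr(SᵀS), then vᵀXv ≥ (c / tr(SᵀS))·‖v‖² for every v ∈ ℝⁿ. In particular, every minimizer of X ↦ tr(SᵀS X⁻¹) over positive-definite matrices with diagonal entries at most 1 has all eigenvalues at least c / tr(SᵀS). -/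
open Matrix

lemma my_trace_conjTranspose_mul_self_nonneg {n : ℕ} (M : Matrix (Fin n) (Fin n) ℝ) :
    0 ≤ Matrix.trace (Mᴴ * M) := by
  simp only [Matrix.trace, Matrix.diag, Matrix.mul_apply, Matrix.conjTranspose_apply,
    star_trivial]
  exact Finset.sum_nonneg fun i _ => Finset.sum_nonneg fun j _ => mul_self_nonneg _

lemma my_trace_mul_nonneg {n : ℕ} {A B : Matrix (Fin n) (Fin n) ℝ}
    (hA : A.PosSemidef) (hB : B.PosSemidef) : 0 ≤ Matrix.trace (A * B) := by
  obtain ⟨C, rfl⟩ : ∃ C : Matrix (Fin n) (Fin n) ℝ, A = Cᴴ * C := by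
    open scoped MatrixOrder in
    exact ⟨CFC.sqrt A, by rw [← Matrix.star_eq_conjTranspose,
      (IsSelfAdjoint.of_nonneg (CFC.sqrt_nonneg A)).star_eq,
      CFC.sqrt_mul_sqrt_self A (Matrix.nonneg_iff_posSemidef.mpr hA)]⟩
  obtain ⟨D, rfl⟩ : ∃ D : Matrix (Fin n) (Fin n) ℝ, B = Dᴴ * D := by
    open scoped MatrixOrder in
    exact ⟨CFC.sqrt B, by rw [← Matrix.star_eq_conjTranspose,
      (IsSelfAdjoint.of_nonneg (CFC.sqrt_nonneg B)).star_eq,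
      CFC.sqrt_mul_sqrt_self B (Matrix.nonneg_iff_posSemidef.mpr hB)]⟩
  have key : Matrix.trace (Cᴴ * C * (Dᴴ * D)) = Matrix.trace ((D * Cᴴ)ᴴ * (D * Cᴴ)) := by
    rw [Matrix.conjTranspose_mul, Matrix.conjTranspose_conjTranspose, Matrix.mul_assoc Cᴴ,
      Matrix.trace_mul_comm]
    simp only [Matrix.mul_assoc]
  rw [key]
  exact my_trace_conjTranspose_mul_self_nonneg _

/-- Lemma `compact_constraints`: if `vᵀ(SᵀS)v ≥ c‖v‖²` with `c > 0`, and `X` is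
symmetric positive definite with diagonal entries at most `1` and
`tr(SᵀS X⁻¹) ≤ tr(SᵀS)`, then `vᵀXv ≥ (c / tr(SᵀS))·‖v‖²` for all `v`. -/
theorem minimizer_eigenvalue_lower_bound (n : ℕ) (hn : 1 ≤ n)
    (S : Matrix (Fin n) (Fin n) ℝ) (hS : IsUnit S.det)
    (c : ℝ) (hc : 0 < c)
    (hlb : ∀ v : Fin n → ℝ, c * (∑ i, (v i) ^ 2) ≤ v ⬝ᵥ ((Sᵀ * S) *ᵥ v))
    (X : Matrix (Fin n) (Fin n) ℝ) (hX : X.PosDef)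
    (hdiag : ∀ i : Fin n, X i i ≤ 1)
    (hloss : Matrix.trace (Sᵀ * S * X⁻¹) ≤ Matrix.trace (Sᵀ * S)) :
    ∀ v : Fin n → ℝ,
      (c / Matrix.trace (Sᵀ * S)) * (∑ i, (v i) ^ 2) ≤ v ⬝ᵥ (X *ᵥ v) := by
  intro v
  set A := Sᵀ * S with hAdef
  have hXinv : (X⁻¹).PosDef := hX.inv
  -- trace A > 0
  have hAi : ∀ i, c ≤ A i i := by
    intro i
    have := hlb (Pi.single i 1)
    simpa [dotProduct, Matrix.mulVec, Pi.single_apply, Finset.sum_ite_eq'] using this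
  have htrA : 0 < Matrix.trace A := by
    have : (0:ℝ) < ∑ i : Fin n, c := by
      have : (0:ℝ) < n * c := by positivity
      simpa [Finset.sum_const, nsmul_eq_mul] using
        (by positivity : (0:ℝ) < (n:ℝ) * c)
    calc (0:ℝ) < ∑ i : Fin n, c := this
      _ ≤ ∑ i, A i i := Finset.sum_le_sum fun i _ => hAi i
      _ = Matrix.trace A := rfl
  -- PSD facts
  have hAherm : A.IsHermitian := Matrix.isHermitian_conjTranspose_mul_self S
  have hXipsd := hXinv.posSemidef
  have hPSD1 : (A - c • (1 : Matrix (Fin n) (Fin n) ℝ)).PosSemidef := by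
    refine Matrix.posSemidef_iff_dotProduct_mulVec.mpr ⟨?_, ?_⟩
    · have hAt : Aᵀ = A := by rw [hAdef, Matrix.transpose_mul, Matrix.transpose_transpose]
      show (A - c • 1)ᴴ = A - c • 1
      simp [Matrix.conjTranspose_sub, Matrix.conjTranspose_smul, hAt]
    · intro x
      have h := hlb x
      have hx : x ⬝ᵥ x = ∑ i, x i ^ 2 := by simp [dotProduct, sq]
      simp only [star_trivial, Matrix.sub_mulVec, dotProduct_sub,
        Matrix.smul_mulVec, Matrix.one_mulVec, dotProduct_smul, smul_eq_mul]
      rw [hx]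
      linarith
  have h1 : c * Matrix.trace X⁻¹ ≤ Matrix.trace (A * X⁻¹) := by
    have h0 := my_trace_mul_nonneg hPSD1 hXipsd
    rw [Matrix.sub_mul, Matrix.trace_sub, Matrix.smul_mul, Matrix.trace_smul,
      Matrix.one_mul, smul_eq_mul] at h0
    linarith
  have htrXi : 0 ≤ Matrix.trace X⁻¹ :=
    Finset.sum_nonneg fun i _ => by
      have := hXipsd.dotProduct_mulVec_nonneg (Pi.single i 1)
      simpa [dotProduct, Matrix.mulVec, Pi.single_apply] using this
  by_cases hv : v = 0
  · subst hv; simp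
  set t := ∑ i, v i ^ 2 with htdef
  have htpos : 0 < t := by
    obtain ⟨i, hi⟩ := Function.ne_iff.mp hv
    refine Finset.sum_pos' (fun j _ => sq_nonneg _) ⟨i, Finset.mem_univ i, ?_⟩
    have hvi : v i ≠ 0 := by simpa using hi
    positivity
  have hPSD2 : (t • (1 : Matrix (Fin n) (Fin n) ℝ) - Matrix.vecMulVec v v).PosSemidef := by
    refine Matrix.posSemidef_iff_dotProduct_mulVec.mpr ⟨?_, ?_⟩
    · show (t • 1 - Matrix.vecMulVec v v)ᴴ = t • 1 - Matrix.vecMulVec v v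
      have hvv : (Matrix.vecMulVec v v)ᵀ = Matrix.vecMulVec v v := by
        ext i j
        simp [Matrix.vecMulVec_apply, mul_comm]
      simp [Matrix.conjTranspose_sub, Matrix.conjTranspose_smul, hvv]
    · intro x
      have hq : x ⬝ᵥ (Matrix.vecMulVec v v *ᵥ x) = (∑ i, v i * x i) ^ 2 := by
        simp only [dotProduct, Matrix.mulVec, Matrix.vecMulVec_apply, sq,
          Finset.mul_sum, Finset.sum_mul]
        exact Finset.sum_congr rfl fun i _ => Finset.sum_congr rfl fun j _ => by ring
      have cs := Finset.sum_mul_sq_le_sq_mul_sq Finset.univ v x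
      have hx : x ⬝ᵥ x = ∑ i, x i ^ 2 := by simp [dotProduct, sq]
      simp only [star_trivial, Matrix.sub_mulVec, dotProduct_sub,
        Matrix.smul_mulVec, Matrix.one_mulVec, dotProduct_smul, smul_eq_mul]
      rw [hq, hx]
      linarith
  have htr : Matrix.trace (X⁻¹ * Matrix.vecMulVec v v) = v ⬝ᵥ X⁻¹ *ᵥ v := by
    simp only [Matrix.trace, Matrix.diag, Matrix.mul_apply, Matrix.vecMulVec_apply,
      dotProduct, Matrix.mulVec, Finset.mul_sum]
    exact Finset.sum_congr rfl fun i _ => Finset.sum_congr rfl fun j _ => by ring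
  have h2 : v ⬝ᵥ X⁻¹ *ᵥ v ≤ Matrix.trace X⁻¹ * t := by
    have h0 := my_trace_mul_nonneg hXipsd hPSD2
    rw [Matrix.mul_sub, Matrix.trace_sub, Matrix.mul_smul, Matrix.trace_smul,
      Matrix.mul_one, smul_eq_mul, htr] at h0
    linarith
  -- Cauchy-Schwarz in the X-inner product
  have hXX : X * X⁻¹ = 1 := Matrix.mul_nonsing_inv X (isUnit_iff_ne_zero.mpr hX.det_pos.ne')
  have cs := @real_inner_mul_inner_self_le _ (X.toSeminormedAddCommGroup hX.posSemidef)
      (X.toInnerProductSpace hX.posSemidef) v (X⁻¹ *ᵥ v)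
  change ((X *ᵥ (X⁻¹ *ᵥ v)) ⬝ᵥ star v) * ((X *ᵥ (X⁻¹ *ᵥ v)) ⬝ᵥ star v) ≤
      ((X *ᵥ v) ⬝ᵥ star v) * ((X *ᵥ (X⁻¹ *ᵥ v)) ⬝ᵥ star (X⁻¹ *ᵥ v)) at cs
  simp only [dotProduct_comm (X *ᵥ _) (star _)] at cs
  change (star v ⬝ᵥ X *ᵥ (X⁻¹ *ᵥ v)) * (star v ⬝ᵥ X *ᵥ (X⁻¹ *ᵥ v)) ≤
      (star v ⬝ᵥ X *ᵥ v) * (star (X⁻¹ *ᵥ v) ⬝ᵥ X *ᵥ (X⁻¹ *ᵥ v)) at cs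
  rw [Matrix.mulVec_mulVec, hXX, Matrix.one_mulVec] at cs
  simp only [star_trivial] at cs
  have hvt : v ⬝ᵥ v = t := by simp [dotProduct, htdef, sq]
  have hcom : (X⁻¹ *ᵥ v) ⬝ᵥ v = v ⬝ᵥ X⁻¹ *ᵥ v := dotProduct_comm _ _
  rw [hvt, hcom] at cs
  have hq0 : 0 ≤ v ⬝ᵥ X *ᵥ v := by
    have := hX.posSemidef.dotProduct_mulVec_nonneg v
    simpa using this
  rw [div_mul_eq_mul_div, div_le_iff₀ htrA]
  nlinarith [mul_le_mul_of_nonneg_left h2 hq0, mul_le_mul_of_nonneg_right h1 htpos.le,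
    mul_le_mul_of_nonneg_right hloss htpos.le]
end

section
/- Let n ≥ 1 and let S be an invertible n×n real matrix. Then the function f(X) = tr(SᵀS X⁻¹) is strictly convex on the set of n×n real symmetric positive-definite matrices; i.e., this set is convex and for all positive-definite X ≠ Y and all t ∈ (0,1), tr(SᵀS (tX + (1−t)Y)⁻¹) < t·tr(SᵀS X⁻¹) + (1−t)·tr(SᵀS Y⁻¹). -/
open Matrix

section AuxTraceInv

variable {n : ℕ}

private lemma posDef_smul_aux {c : ℝ} (hc : 0 < c) {X : Matrix (Fin n) (Fin n) ℝ}
    (hX : X.PosDef) : (c • X).PosDef := by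
  refine Matrix.PosDef.of_dotProduct_mulVec_pos ?_ (fun x hx => ?_)
  · unfold Matrix.IsHermitian
    rw [conjTranspose_smul, hX.1]; simp
  · rw [smul_mulVec, dotProduct_smul]
    simpa [smul_eq_mul] using mul_pos hc (hX.dotProduct_mulVec_pos hx)

private lemma quad_identity_aux {X : Matrix (Fin n) (Fin n) ℝ} (hX : X.PosDef)
    (u v : Fin n → ℝ) :
    v ⬝ᵥ X⁻¹ *ᵥ v - (2 * (u ⬝ᵥ v) - u ⬝ᵥ X *ᵥ u) = (X *ᵥ u - v) ⬝ᵥ X⁻¹ *ᵥ (X *ᵥ u - v) := by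
  have hdet : IsUnit X.det := isUnit_iff_ne_zero.2 hX.det_pos.ne'
  have hT : Xᵀ = X := by
    have := hX.1; rwa [← Matrix.conjTranspose_eq_transpose_of_trivial]
  have h1 : X⁻¹ *ᵥ (X *ᵥ u) = u := by
    rw [mulVec_mulVec, nonsing_inv_mul _ hdet, one_mulVec]
  have h2 : ∀ z : Fin n → ℝ, (X *ᵥ u) ⬝ᵥ z = u ⬝ᵥ (X *ᵥ z) := by
    intro z
    rw [dotProduct_comm, dotProduct_mulVec, ← mulVec_transpose, hT, dotProduct_comm]
  have h3 : X *ᵥ (X⁻¹ *ᵥ v) = v := by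
    rw [mulVec_mulVec, mul_nonsing_inv _ hdet, one_mulVec]
  rw [mulVec_sub, dotProduct_sub, sub_dotProduct, sub_dotProduct, h1, h2,
    dotProduct_comm v u, h2, h3]
  ring

private lemma quad_le_aux {X : Matrix (Fin n) (Fin n) ℝ} (hX : X.PosDef) (u v : Fin n → ℝ) :
    2 * (u ⬝ᵥ v) - u ⬝ᵥ X *ᵥ u ≤ v ⬝ᵥ X⁻¹ *ᵥ v := by
  have h0 := hX.inv.posSemidef.dotProduct_mulVec_nonneg (X *ᵥ u - v)
  rw [star_trivial] at h0
  linarith [quad_identity_aux hX u v]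

private lemma quad_lt_aux {X : Matrix (Fin n) (Fin n) ℝ} (hX : X.PosDef) (u v : Fin n → ℝ)
    (h : X *ᵥ u ≠ v) :
    2 * (u ⬝ᵥ v) - u ⬝ᵥ X *ᵥ u < v ⬝ᵥ X⁻¹ *ᵥ v := by
  have h0 := hX.inv.dotProduct_mulVec_pos (sub_ne_zero.2 h)
  rw [star_trivial] at h0
  linarith [quad_identity_aux hX u v]

end AuxTraceInv

/-- Lemma `convex_trace`: for invertible `S`, the map `X ↦ tr(SᵀS X⁻¹)` is
strictly convex on the (convex) set of symmetric positive-definite matrices. -/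
theorem trace_inv_strictly_convex (n : ℕ) (hn : 1 ≤ n)
    (S : Matrix (Fin n) (Fin n) ℝ) (hS : IsUnit S.det) :
    Convex ℝ {X : Matrix (Fin n) (Fin n) ℝ | X.PosDef} ∧
    ∀ X Y : Matrix (Fin n) (Fin n) ℝ, X.PosDef → Y.PosDef → X ≠ Y →
      ∀ t : ℝ, 0 < t → t < 1 →
        Matrix.trace (Sᵀ * S * (t • X + (1 - t) • Y)⁻¹) <
          t * Matrix.trace (Sᵀ * S * X⁻¹) + (1 - t) * Matrix.trace (Sᵀ * S * Y⁻¹) := by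
  constructor
  · intro X hX Y hY a b ha hb hab
    rcases ha.eq_or_lt with rfl | ha'
    · simpa [show b = 1 by linarith] using hY
    rcases hb.eq_or_lt with rfl | hb'
    · simpa [show a = 1 by linarith] using hX
    exact (posDef_smul_aux ha' hX).add (posDef_smul_aux hb' hY)
  · intro X Y hX hY hne t ht ht1
    set Z : Matrix (Fin n) (Fin n) ℝ := t • X + (1 - t) • Y with hZdef
    have hZ : Z.PosDef := (posDef_smul_aux ht hX).add (posDef_smul_aux (by linarith) hY)
    have hZdet : IsUnit Z.det := isUnit_iff_ne_zero.2 hZ.det_pos.ne'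
    -- quadratic form of Z⁻¹ at v, in terms of u := Z⁻¹ *ᵥ v
    have hform : ∀ v : Fin n → ℝ,
        v ⬝ᵥ Z⁻¹ *ᵥ v = t * (2 * ((Z⁻¹ *ᵥ v) ⬝ᵥ v) - (Z⁻¹ *ᵥ v) ⬝ᵥ X *ᵥ (Z⁻¹ *ᵥ v))
          + (1 - t) * (2 * ((Z⁻¹ *ᵥ v) ⬝ᵥ v) - (Z⁻¹ *ᵥ v) ⬝ᵥ Y *ᵥ (Z⁻¹ *ᵥ v)) := by
      intro v
      set u := Z⁻¹ *ᵥ v with hu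
      have hZu : Z *ᵥ u = v := by
        rw [hu, mulVec_mulVec, mul_nonsing_inv _ hZdet, one_mulVec]
      have e1 : u ⬝ᵥ Z *ᵥ u = t * (u ⬝ᵥ X *ᵥ u) + (1 - t) * (u ⬝ᵥ Y *ᵥ u) := by
        simp [hZdef, add_mulVec, smul_mulVec, dotProduct_add, dotProduct_smul,
          smul_eq_mul]
      have e2 : v ⬝ᵥ u = u ⬝ᵥ v := dotProduct_comm _ _
      rw [hZu] at e1
      linarith [e1, e2]
    -- the per-vector inequalities
    have hle : ∀ v : Fin n → ℝ,
        v ⬝ᵥ Z⁻¹ *ᵥ v ≤ t * (v ⬝ᵥ X⁻¹ *ᵥ v) + (1 - t) * (v ⬝ᵥ Y⁻¹ *ᵥ v) := by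
      intro v
      rw [hform v]
      have h1 := quad_le_aux hX (Z⁻¹ *ᵥ v) v
      have h2 := quad_le_aux hY (Z⁻¹ *ᵥ v) v
      nlinarith
    -- the difference matrix M
    set M : Matrix (Fin n) (Fin n) ℝ := t • X⁻¹ + (1 - t) • Y⁻¹ - Z⁻¹ with hMdef
    have hMform : ∀ v : Fin n → ℝ,
        v ⬝ᵥ M *ᵥ v = t * (v ⬝ᵥ X⁻¹ *ᵥ v) + (1 - t) * (v ⬝ᵥ Y⁻¹ *ᵥ v) - v ⬝ᵥ Z⁻¹ *ᵥ v := by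
      intro v
      simp [hMdef, sub_mulVec, add_mulVec, smul_mulVec, dotProduct_sub,
        dotProduct_add, dotProduct_smul, smul_eq_mul]
    have hXi : X⁻¹ᵀ = X⁻¹ := by
      rw [← Matrix.conjTranspose_eq_transpose_of_trivial]; exact hX.inv.1
    have hYi : Y⁻¹ᵀ = Y⁻¹ := by
      rw [← Matrix.conjTranspose_eq_transpose_of_trivial]; exact hY.inv.1
    have hZi : Z⁻¹ᵀ = Z⁻¹ := by
      rw [← Matrix.conjTranspose_eq_transpose_of_trivial]; exact hZ.inv.1
    have hMherm : M.IsHermitian := by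
      unfold Matrix.IsHermitian
      simp [hMdef, conjTranspose_sub, conjTranspose_add, conjTranspose_smul,
        hXi, hYi, hZi]
    have hMpsd : M.PosSemidef := by
      refine PosSemidef.of_dotProduct_mulVec_nonneg hMherm (fun x => ?_)
      rw [star_trivial, hMform x]
      linarith [hle x]
    -- a vector where the form is strictly positive
    have hw : ∃ w : Fin n → ℝ, X *ᵥ w ≠ Y *ᵥ w := by
      by_contra h
      push_neg at h
      apply hne
      ext i j
      have := congrFun (h (Pi.single j 1)) i
      simpa [mulVec_single] using this
    obtain ⟨w, hw⟩ := hw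
    have hv0 : 0 < (Z *ᵥ w) ⬝ᵥ M *ᵥ (Z *ᵥ w) := by
      set v := Z *ᵥ w with hv
      have hu : Z⁻¹ *ᵥ v = w := by
        rw [hv, mulVec_mulVec, nonsing_inv_mul _ hZdet, one_mulVec]
      have hXne : X *ᵥ w ≠ v := by
        intro hXw
        apply hw
        funext j
        have hc := congrFun hXw j
        have hvj : v j = t * (X *ᵥ w) j + (1 - t) * (Y *ᵥ w) j := by
          simp [hv, hZdef, add_mulVec, smul_mulVec]
        rw [hvj] at hc
        have h1t : (1 : ℝ) - t ≠ 0 := by linarith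
        exact mul_left_cancel₀ h1t (by linarith)
      have h1 := quad_lt_aux hX w v hXne
      have h2 := quad_le_aux hY w v
      rw [hMform v, hform v, hu]
      nlinarith
    -- trace positivity
    have hdiag : ∀ (N : Matrix (Fin n) (Fin n) ℝ) (i : Fin n),
        (S * N * Sᵀ) i i = (S i) ⬝ᵥ N *ᵥ (S i) := by
      intro N i
      simp only [mul_apply, mulVec, dotProduct, transpose_apply, Finset.sum_mul,
        Finset.mul_sum, mul_assoc]
      rw [Finset.sum_comm]
    have hnonneg : ∀ i : Fin n, 0 ≤ (S i) ⬝ᵥ M *ᵥ (S i) := by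
      intro i
      have := hMpsd.dotProduct_mulVec_nonneg (S i)
      rwa [star_trivial] at this
    have hex : ∃ i : Fin n, 0 < (S i) ⬝ᵥ M *ᵥ (S i) := by
      by_contra hc
      push_neg at hc
      have hall : ∀ i : Fin n, M *ᵥ (S i) = 0 := by
        intro i
        have hz : (S i) ⬝ᵥ M *ᵥ (S i) = 0 := le_antisymm (hc i) (hnonneg i)
        have := (hMpsd.dotProduct_mulVec_zero_iff (S i)).1 (by rwa [star_trivial])
        exact this
      have hMS : M * Sᵀ = 0 := by
        ext i j
        have := congrFun (hall j) i
        simpa [mul_apply, mulVec, dotProduct, transpose_apply] using this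
      have hM0 : M = 0 := by
        have hStdet : IsUnit Sᵀ.det := by rwa [det_transpose]
        have := congrArg (fun N => N * (Sᵀ)⁻¹) hMS
        simpa [Matrix.mul_assoc, mul_nonsing_inv _ hStdet] using this
      rw [hM0] at hv0
      simp at hv0
    obtain ⟨i0, hi0⟩ := hex
    have htrpos : 0 < Matrix.trace (S * M * Sᵀ) := by
      have : Matrix.trace (S * M * Sᵀ) = ∑ i : Fin n, (S i) ⬝ᵥ M *ᵥ (S i) := by
        simp [Matrix.trace, Matrix.diag, hdiag]
      rw [this]
      exact Finset.sum_pos' (fun i _ => hnonneg i) ⟨i0, Finset.mem_univ i0, hi0⟩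
    have hcyc : Matrix.trace (Sᵀ * S * M) = Matrix.trace (S * M * Sᵀ) := by
      rw [Matrix.mul_assoc, Matrix.trace_mul_comm, Matrix.mul_assoc]
    have hsplit : Matrix.trace (Sᵀ * S * M)
        = t * Matrix.trace (Sᵀ * S * X⁻¹) + (1 - t) * Matrix.trace (Sᵀ * S * Y⁻¹)
          - Matrix.trace (Sᵀ * S * Z⁻¹) := by
      simp [hMdef, Matrix.mul_sub, Matrix.mul_add, Matrix.mul_smul, Matrix.trace_sub,
        Matrix.trace_add, Matrix.trace_smul, smul_eq_mul]
    rw [hcyc] at hsplit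
    linarith [htrpos, hsplit.symm.le, hsplit.le]
end

section
/- Let n ≥ 1 and let S be an invertible n×n real matrix. Suppose X is an n×n real symmetric positive-definite matrix with all diagonal entries at most 1 that minimizes tr(SᵀS X⁻¹), i.e., tr(SᵀS X⁻¹) ≤ tr(SᵀS Y⁻¹) for every symmetric positive-definite Y with all diagonal entries at most 1. Then X_{ii} = 1 for every index i. -/
open Matrix

lemma trace_mul_stdBasis {n : ℕ} (A : Matrix (Fin n) (Fin n) ℝ) (i : Fin n) :
    Matrix.trace (A * Matrix.single i i (1:ℝ)) = A i i := by
  rw [Matrix.trace_mul_comm]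
  have h : ∀ j, (Matrix.single i i (1:ℝ) * A) j j = if j = i then A i i else 0 := by
    intro j
    by_cases hj : j = i
    · subst hj
      simp [Matrix.mul_apply, Matrix.single, Matrix.of_apply, ite_and]
    · simp [Matrix.mul_apply, Matrix.single, Matrix.of_apply, ite_and, Ne.symm hj, hj]
  simp [Matrix.trace, Matrix.diag, h]

lemma stdBasis_mul_mul {n : ℕ} (A : Matrix (Fin n) (Fin n) ℝ) (i : Fin n) :
    Matrix.single i i (1:ℝ) * A * Matrix.single i i (1:ℝ)
      = (A i i) • Matrix.single i i (1:ℝ) := by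
  ext a b
  by_cases ha : a = i <;> by_cases hb : b = i <;>
    simp [ha, hb, Matrix.mul_apply, Matrix.single, Matrix.of_apply, ite_and,
      Finset.sum_ite_eq, Finset.sum_ite_eq', eq_comm, Ne.symm, *]

lemma stdBasis_isHermitian {n : ℕ} (i : Fin n) :
    (Matrix.single i i (1:ℝ)).IsHermitian := by
  ext a b
  simp [Matrix.single, Matrix.conjTranspose_apply, Matrix.of_apply, and_comm]

/-- Lemma `solutions_on_boundary`: any minimizer of `X ↦ tr(SᵀS X⁻¹)` over
symmetric positive-definite matrices with diagonal entries at most `1` has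
all diagonal entries equal to `1`. -/
theorem minimizer_diagonal_eq_one (n : ℕ) (hn : 1 ≤ n)
    (S : Matrix (Fin n) (Fin n) ℝ) (hS : IsUnit S.det)
    (X : Matrix (Fin n) (Fin n) ℝ) (hX : X.PosDef)
    (hdiag : ∀ i : Fin n, X i i ≤ 1)
    (hmin : ∀ Y : Matrix (Fin n) (Fin n) ℝ, Y.PosDef → (∀ i : Fin n, Y i i ≤ 1) →
      Matrix.trace (Sᵀ * S * X⁻¹) ≤ Matrix.trace (Sᵀ * S * Y⁻¹)) :
    ∀ i : Fin n, X i i = 1 := by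
  intro i
  by_contra hne
  have hlt : X i i < 1 := lt_of_le_of_ne (hdiag i) hne
  set ε : ℝ := 1 - X i i with hε
  have hεpos : 0 < ε := by simp only [hε]; linarith
  set E : Matrix (Fin n) (Fin n) ℝ := Matrix.single i i (1:ℝ) with hE
  set a : ℝ := X⁻¹ i i with ha
  have hXinv : X⁻¹.PosDef := hX.inv
  have hXdet : IsUnit X.det := isUnit_iff_ne_zero.mpr hX.det_pos.ne'
  have hXinvdet : IsUnit X⁻¹.det := isUnit_iff_ne_zero.mpr hXinv.det_pos.ne'
  have hapos : 0 < a := by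
    have h0 := hXinv.dotProduct_mulVec_pos (x := Pi.single i (1:ℝ)) (by
      intro h
      have := congrFun h i
      simp at this)
    have heq : dotProduct (star (Pi.single i (1:ℝ))) (X⁻¹ *ᵥ Pi.single i 1) = a := by
      simp [ha, dotProduct, Matrix.mulVec, Pi.single_apply, Finset.sum_ite_eq,
        Finset.sum_ite_eq', mul_comm]
    rw [heq] at h0
    exact h0
  have hden : 0 < 1 + ε * a := by positivity
  set c : ℝ := ε / (1 + ε * a) with hc
  have hcpos : 0 < c := div_pos hεpos hden
  set Y : Matrix (Fin n) (Fin n) ℝ := X + ε • E with hY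
  -- Y is positive definite
  have hYpd : Y.PosDef := by
    refine Matrix.PosDef.of_dotProduct_mulVec_pos ?_ ?_
    · have hEsm : (ε • E).IsHermitian := by
        show (ε • E)ᴴ = ε • E
        rw [Matrix.conjTranspose_smul, hE, stdBasis_isHermitian i]
        simp
      exact hX.1.add hEsm
    · intro x hx
      have h1 := hX.dotProduct_mulVec_pos hx
      have h2 : 0 ≤ dotProduct (star x) ((ε • E) *ᵥ x) := by
        have heq : dotProduct (star x) ((ε • E) *ᵥ x) = ε * (x i * x i) := by
          simp [hE, dotProduct, Matrix.mulVec, Matrix.single, Matrix.of_apply,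
            ite_and, Finset.sum_ite_eq, Finset.sum_ite_eq']
          ring
        rw [heq]
        have := mul_self_nonneg (x i)
        nlinarith
      calc 0 < dotProduct (star x) (X *ᵥ x) := h1
        _ ≤ dotProduct (star x) (X *ᵥ x) + dotProduct (star x) ((ε • E) *ᵥ x) := by linarith
        _ = dotProduct (star x) (Y *ᵥ x) := by
            rw [hY, Matrix.add_mulVec, dotProduct_add]
  -- diag of Y ≤ 1
  have hYdiag : ∀ j : Fin n, Y j j ≤ 1 := by
    intro j
    by_cases hj : j = i
    · subst hj
      simp [hY, hE, Matrix.single, Matrix.of_apply, hε]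
    · have hEjj : E j j = 0 := by
        rw [hE]
        exact Matrix.single_apply_of_ne i i (1:ℝ) j j (by tauto)
      have : Y j j = X j j := by simp [hY, hEjj]
      rw [this]
      exact hdiag j
  -- explicit inverse of Y
  have hXinvmul : X * X⁻¹ = 1 := Matrix.mul_nonsing_inv X hXdet
  set Z : Matrix (Fin n) (Fin n) ℝ := X⁻¹ - c • (X⁻¹ * E * X⁻¹) with hZ
  have hYZ : Y * Z = 1 := by
    have hEXE : E * X⁻¹ * E = a • E := stdBasis_mul_mul X⁻¹ i
    have expand : Y * Z = 1 - c • (E * X⁻¹) + ε • (E * X⁻¹) - (ε * (c * a)) • (E * X⁻¹) := by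
      rw [hY, hZ]
      rw [add_mul, mul_sub, mul_sub]
      rw [hXinvmul]
      have h1 : X * (c • (X⁻¹ * E * X⁻¹)) = c • (E * X⁻¹) := by
        rw [mul_smul_comm, ← Matrix.mul_assoc, ← Matrix.mul_assoc, hXinvmul, Matrix.one_mul]
      have h2 : (ε • E) * X⁻¹ = ε • (E * X⁻¹) := smul_mul_assoc ε E X⁻¹
      have h3 : (ε • E) * (c • (X⁻¹ * E * X⁻¹)) = (ε * (c * a)) • (E * X⁻¹) := by
        rw [smul_mul_assoc, mul_smul_comm, ← Matrix.mul_assoc, ← Matrix.mul_assoc, hEXE,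
          smul_mul_assoc, smul_smul, smul_smul]
        ring_nf
      rw [h1, h2, h3]
      abel
    rw [expand]
    have hscal : ε - ε * (c * a) - c = 0 := by
      rw [hc]
      field_simp
      ring
    have hz : ε • (E * X⁻¹) - (ε * (c * a)) • (E * X⁻¹) - c • (E * X⁻¹) = 0 := by
      rw [← sub_smul, ← sub_smul, hscal, zero_smul]
    calc 1 - c • (E * X⁻¹) + ε • (E * X⁻¹) - (ε * (c * a)) • (E * X⁻¹)
        = 1 + (ε • (E * X⁻¹) - (ε * (c * a)) • (E * X⁻¹) - c • (E * X⁻¹)) := by abel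
      _ = 1 := by rw [hz, add_zero]
  have hYinv : Y⁻¹ = Z := Matrix.inv_eq_right_inv hYZ
  -- quadratic form positivity
  set q : ℝ := (X⁻¹ * (Sᵀ * S) * X⁻¹) i i with hq
  have hqpos : 0 < q := by
    set M : Matrix (Fin n) (Fin n) ℝ := S * X⁻¹ with hM
    have hXih : X⁻¹ᵀ = X⁻¹ := hXinv.1
    have hfact : X⁻¹ * (Sᵀ * S) * X⁻¹ = Mᵀ * M := by
      rw [hM, Matrix.transpose_mul, hXih]
      noncomm_ring
    have hqsum : q = ∑ k, (M k i) ^ 2 := by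
      rw [hq, hfact, Matrix.mul_apply]
      congr 1
      ext k
      rw [Matrix.transpose_apply]
      ring
    have hMdet : IsUnit M.det := by
      rw [hM, Matrix.det_mul]
      exact hS.mul hXinvdet
    have hMunit : IsUnit M := (Matrix.isUnit_iff_isUnit_det M).mpr hMdet
    have hinj : Function.Injective M.mulVec := Matrix.mulVec_injective_iff_isUnit.mpr hMunit
    have hcol : ∃ k, M k i ≠ 0 := by
      by_contra h
      push_neg at h
      have hz : M *ᵥ Pi.single i 1 = M *ᵥ 0 := by
        ext k
        simp [Matrix.mulVec_single, h k]
      have := hinj hz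
      have := congrFun this i
      simp at this
    obtain ⟨k, hk⟩ := hcol
    rw [hqsum]
    have hterm : 0 < (M k i) ^ 2 := by positivity
    have hle : ∀ j ∈ Finset.univ, (0:ℝ) ≤ (M j i) ^ 2 := fun j _ => sq_nonneg _
    exact Finset.sum_pos' hle ⟨k, Finset.mem_univ k, hterm⟩
  -- trace computation
  have htr : Matrix.trace (Sᵀ * S * Y⁻¹) = Matrix.trace (Sᵀ * S * X⁻¹) - c * q := by
    rw [hYinv, hZ, mul_sub, Matrix.trace_sub, mul_smul_comm, Matrix.trace_smul]
    congr 1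
    rw [smul_eq_mul]
    congr 1
    have h1 : Sᵀ * S * (X⁻¹ * E * X⁻¹) = (Sᵀ * S * X⁻¹ * E) * X⁻¹ := by
      noncomm_ring
    rw [h1, Matrix.trace_mul_comm, ← Matrix.mul_assoc, ← Matrix.mul_assoc, hE,
      trace_mul_stdBasis, hq]
  have hcontra := hmin Y hYpd hYdiag
  rw [htr] at hcontra
  nlinarith
end

section
/- Let n ≥ 1, let S be an invertible n×n real matrix, and let λ ∈ ℝⁿ have all entries strictly positive. Set D = diag(λ), D^{1/2} = diag(√λ₁, …, √λₙ), and let M^{1/2} denote the unique positive-semidefinite square root of the positive-definite matrix M = D^{1/2}(SᵀS)D^{1/2}. Then the matrix X = D^{−1/2} M^{1/2} D^{−1/2} is symmetric positive definite and satisfies SᵀS = X·diag(λ)·X. -/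
open Matrix

open scoped ComplexOrder in
/-- The positive semidefinite square root of a positive semidefinite matrix
(Mathlib's former `Matrix.PosSemidef.sqrt`, removed since; restored verbatim). -/
noncomputable def Matrix.PosSemidef.sqrt {n : Type*} {𝕜 : Type*} [Fintype n] [DecidableEq n]
    [RCLike 𝕜] {A : Matrix n n 𝕜} (hA : A.PosSemidef) : Matrix n n 𝕜 :=
  hA.1.eigenvectorUnitary.1 * diagonal ((↑) ∘ (√·) ∘ hA.1.eigenvalues) *
  (star hA.1.eigenvectorUnitary : Matrix n n 𝕜)

lemma Matrix.PosSemidef.sqrt_mul_self {m : Type*} [Fintype m] [DecidableEq m]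
    {A : Matrix m m ℝ} (hA : A.PosSemidef) : hA.sqrt * hA.sqrt = A := by
  have hU : star (hA.1.eigenvectorUnitary : Matrix m m ℝ) * hA.1.eigenvectorUnitary = 1 :=
    Unitary.coe_star_mul_self _
  have key : diagonal (((↑) : ℝ → ℝ) ∘ (√·) ∘ hA.1.eigenvalues) *
      diagonal (((↑) : ℝ → ℝ) ∘ (√·) ∘ hA.1.eigenvalues) =
      diagonal (RCLike.ofReal ∘ hA.1.eigenvalues) := by
    rw [diagonal_mul_diagonal]
    congr 1
    funext i
    simp [Real.mul_self_sqrt (hA.eigenvalues_nonneg i)]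
  conv_rhs => rw [hA.1.spectral_theorem, Unitary.conjStarAlgAut_apply, ← key]
  unfold Matrix.PosSemidef.sqrt
  calc _ = (hA.1.eigenvectorUnitary : Matrix m m ℝ) *
        (diagonal (((↑) : ℝ → ℝ) ∘ (√·) ∘ hA.1.eigenvalues) *
          (star (hA.1.eigenvectorUnitary : Matrix m m ℝ) * hA.1.eigenvectorUnitary) *
          diagonal (((↑) : ℝ → ℝ) ∘ (√·) ∘ hA.1.eigenvalues)) *
        star (hA.1.eigenvectorUnitary : Matrix m m ℝ) := by
        simp only [Matrix.mul_assoc]; rfl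
    _ = _ := by rw [hU, Matrix.mul_one]

lemma Matrix.PosSemidef.posSemidef_sqrt {m : Type*} [Fintype m] [DecidableEq m]
    {A : Matrix m m ℝ} (hA : A.PosSemidef) : hA.sqrt.PosSemidef := by
  have hD : (diagonal (((↑) : ℝ → ℝ) ∘ (√·) ∘ hA.1.eigenvalues)).PosSemidef :=
    posSemidef_diagonal_iff.mpr fun i => by simp [Real.sqrt_nonneg]
  have := hD.mul_mul_conjTranspose_same (hA.1.eigenvectorUnitary : Matrix m m ℝ)
  unfold Matrix.PosSemidef.sqrt
  rw [star_eq_conjTranspose]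
  exact this

lemma aux_conj {n : ℕ} {A B : Matrix (Fin n) (Fin n) ℝ} (hA : A.PosDef)
    (hB : IsUnit B.det) : (Bᵀ * A * B).PosDef := by
  have hinj : Function.Injective (B.mulVec) :=
    mulVec_injective_iff_isUnit.mpr ((isUnit_iff_isUnit_det _).2 hB)
  constructor
  · have h := hA.isHermitian
    simp only [Matrix.IsHermitian, conjTranspose_eq_transpose_of_trivial] at h ⊢
    rw [transpose_mul, transpose_mul, transpose_transpose, h, mul_assoc]
  · have h2 := hA.conjTranspose_mul_mul_same hinj
    rw [conjTranspose_eq_transpose_of_trivial] at h2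
    exact h2.2

lemma aux_posDef_of_posSemidef {n : ℕ} {A : Matrix (Fin n) (Fin n) ℝ}
    (hA : A.PosSemidef) (hdet : IsUnit A.det) : A.PosDef := by
  exact hA.posDef_iff_isUnit.mpr ((isUnit_iff_isUnit_det _).2 hdet)

/-- The generalized matrix square root construction (`eq:gen_sqrt_x`): for
`λ` with strictly positive entries and `M = D^{1/2}(SᵀS)D^{1/2}` (with
`D = diag(λ)`), the matrix `X = D^{-1/2} M^{1/2} D^{-1/2}` is symmetric
positive definite and satisfies `SᵀS = X·diag(λ)·X`. -/
theorem gen_sqrt_solves_stationarity (n : ℕ) (hn : 1 ≤ n)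
    (S : Matrix (Fin n) (Fin n) ℝ) (hS : IsUnit S.det)
    (lam : Fin n → ℝ) (hlam : ∀ i, 0 < lam i)
    (hM : (Matrix.diagonal (fun i => Real.sqrt (lam i)) * (Sᵀ * S) *
            Matrix.diagonal (fun i => Real.sqrt (lam i))).PosSemidef) :
    (Matrix.diagonal (fun i => (Real.sqrt (lam i))⁻¹) * hM.sqrt *
        Matrix.diagonal (fun i => (Real.sqrt (lam i))⁻¹)).PosDef ∧
    Sᵀ * S =
      (Matrix.diagonal (fun i => (Real.sqrt (lam i))⁻¹) * hM.sqrt *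
        Matrix.diagonal (fun i => (Real.sqrt (lam i))⁻¹)) *
      Matrix.diagonal lam *
      (Matrix.diagonal (fun i => (Real.sqrt (lam i))⁻¹) * hM.sqrt *
        Matrix.diagonal (fun i => (Real.sqrt (lam i))⁻¹)) := by
  set Dh : Matrix (Fin n) (Fin n) ℝ := Matrix.diagonal (fun i => Real.sqrt (lam i)) with hDh
  set Dinv : Matrix (Fin n) (Fin n) ℝ :=
    Matrix.diagonal (fun i => (Real.sqrt (lam i))⁻¹) with hDinv
  set Q := hM.sqrt with hQ
  have hs : ∀ i, Real.sqrt (lam i) ≠ 0 := fun i => (Real.sqrt_pos.mpr (hlam i)).ne'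
  have hDsdet : IsUnit Dh.det := by
    rw [hDh, det_diagonal]
    exact (Finset.prod_ne_zero_iff.mpr fun i _ => hs i).isUnit
  have hDinvdet : IsUnit Dinv.det := by
    rw [hDinv, det_diagonal]
    exact (Finset.prod_ne_zero_iff.mpr fun i _ => inv_ne_zero (hs i)).isUnit
  have hone : Dinv * Dh = 1 := by
    rw [hDinv, hDh, diagonal_mul_diagonal]
    convert diagonal_one with i
    exact inv_mul_cancel₀ (hs i)
  have hone' : Dh * Dinv = 1 := by
    rw [hDinv, hDh, diagonal_mul_diagonal]
    convert diagonal_one with i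
    exact mul_inv_cancel₀ (hs i)
  have hSTS : (Sᵀ * S).PosDef := by
    have := aux_conj (Matrix.PosDef.one (n := Fin n) (R := ℝ)) hS
    simpa using this
  have hMpd : (Dh * (Sᵀ * S) * Dh).PosDef := by
    have := aux_conj hSTS hDsdet
    rwa [hDh, diagonal_transpose] at this
  have hQQ : Q * Q = Dh * (Sᵀ * S) * Dh := hM.sqrt_mul_self
  have hQdet : IsUnit Q.det := by
    have hdet : Q.det * Q.det = (Dh * (Sᵀ * S) * Dh).det := by rw [← det_mul, hQQ]
    have : Q.det ≠ 0 := by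
      intro h
      have := hMpd.det_pos
      rw [← hdet, h, mul_zero] at this
      exact lt_irrefl 0 this
    exact this.isUnit
  have hQpd : Q.PosDef := aux_posDef_of_posSemidef hM.posSemidef_sqrt hQdet
  have hXpd : (Dinv * Q * Dinv).PosDef := by
    have := aux_conj hQpd hDinvdet
    rwa [hDinv, diagonal_transpose] at this
  refine ⟨hXpd, ?_⟩
  have h1 : Dinv * Matrix.diagonal lam * Dinv = 1 := by
    rw [hDinv, diagonal_mul_diagonal, diagonal_mul_diagonal]
    convert diagonal_one with i
    rw [← Real.mul_self_sqrt (hlam i).le]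
    field_simp
    rw [Real.sqrt_sq (Real.sqrt_nonneg _)]
    exact div_self (pow_ne_zero 2 (hs i))
  symm
  calc (Dinv * Q * Dinv) * Matrix.diagonal lam * (Dinv * Q * Dinv)
      = Dinv * (Q * ((Dinv * Matrix.diagonal lam * Dinv) * (Q * Dinv))) := by
        simp only [Matrix.mul_assoc]
    _ = Dinv * (Q * Q) * Dinv := by rw [h1, one_mul]; simp only [Matrix.mul_assoc]
    _ = (Dinv * Dh) * (Sᵀ * S) * (Dh * Dinv) := by rw [hQQ]; simp only [Matrix.mul_assoc]
    _ = Sᵀ * S := by rw [hone, hone', one_mul, mul_one]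
end

section
/- Let n ≥ 1 and let S be an invertible n×n real matrix. Define φ on vectors v ∈ ℝⁿ with strictly positive entries by φ(v) = diag-part of (diag(v)^{1/2} (SᵀS) diag(v)^{1/2})^{1/2}, i.e., the vector of diagonal entries of the positive-semidefinite square root of diag(v)^{1/2}(SᵀS)diag(v)^{1/2}. Then an n×n real symmetric positive-definite matrix X with all diagonal entries at most 1 satisfies tr(SᵀS X⁻¹) ≤ tr(SᵀS Y⁻¹) for every symmetric positive-definite Y with diagonal entries at most 1 IF AND ONLY IF there exists λ ∈ ℝⁿ with strictly positive entries such that φ(λ) = λ and X = diag(λ)^{−1/2} (diag(λ)^{1/2}(SᵀS)diag(λ)^{1/2})^{1/2} diag(λ)^{−1/2}. -/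
open Matrix

namespace MinFix

variable {n : ℕ}

/-- diagonal entries of a PSD matrix are nonneg -/
lemma diag_nonneg {A : Matrix (Fin n) (Fin n) ℝ} (hA : A.PosSemidef) (i : Fin n) :
    0 ≤ A i i := by
  have := hA.dotProduct_mulVec_nonneg (Pi.single i 1)
  simpa [dotProduct, Matrix.mulVec, Pi.single_apply, Finset.sum_ite_eq] using this

lemma diag_pos {A : Matrix (Fin n) (Fin n) ℝ} (hA : A.PosDef) (i : Fin n) :
    0 < A i i := by
  have := hA.dotProduct_mulVec_pos (x := Pi.single i 1) (by simp [Function.ne_iff])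
  simpa [dotProduct, Matrix.mulVec, Pi.single_apply, Finset.sum_ite_eq] using this

lemma trace_nonneg_of_psd {A : Matrix (Fin n) (Fin n) ℝ} (hA : A.PosSemidef) :
    0 ≤ A.trace := by
  rw [Matrix.trace]
  exact Finset.sum_nonneg fun i _ => diag_nonneg hA i

open scoped MatrixOrder in
lemma trace_mul_nonneg {A B : Matrix (Fin n) (Fin n) ℝ} (hA : A.PosSemidef)
    (hB : B.PosSemidef) : 0 ≤ (A * B).trace := by
  obtain ⟨C, rfl⟩ : ∃ C : Matrix (Fin n) (Fin n) ℝ, B = Cᵀ * C := ⟨CFC.sqrt B, by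
    have h := (CFC.sqrt_nonneg B).posSemidef.1.eq
    rw [Matrix.conjTranspose_eq_transpose_of_trivial] at h
    rw [h, CFC.sqrt_mul_sqrt_self B hB.nonneg]⟩
  rw [← Matrix.mul_assoc, Matrix.trace_mul_cycle]
  exact trace_nonneg_of_psd (hA.mul_mul_conjTranspose_same C)

lemma posDef_of_psd_unit {A : Matrix (Fin n) (Fin n) ℝ} (hA : A.PosSemidef)
    (h : IsUnit A.det) : A.PosDef := by
  refine PosDef.of_dotProduct_mulVec_pos hA.1 fun x hx => ?_
  rcases (hA.dotProduct_mulVec_nonneg x).lt_or_eq with h3 | h3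
  · exact h3
  · exfalso
    have hz : A *ᵥ x = 0 := (hA.dotProduct_mulVec_zero_iff x).mp h3.symm
    have hinj : Function.Injective A.mulVec :=
      Matrix.mulVec_injective_iff_isUnit.mpr ((Matrix.isUnit_iff_isUnit_det _).mpr h)
    exact hx (hinj (by rw [hz, Matrix.mulVec_zero]))

lemma posDef_conj {A B : Matrix (Fin n) (Fin n) ℝ} (hA : A.PosDef) (hB : IsUnit B.det) :
    (Bᵀ * A * B).PosDef := by
  have h1 : (Bᵀ * A * B).PosSemidef := by
    have := hA.posSemidef.conjTranspose_mul_mul_same B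
    rwa [Matrix.conjTranspose_eq_transpose_of_trivial] at this
  refine posDef_of_psd_unit h1 ?_
  rw [Matrix.det_mul, Matrix.det_mul, Matrix.det_transpose]
  exact (hB.mul hA.det_pos.ne'.isUnit).mul hB



open scoped MatrixOrder in
lemma coercive {A : Matrix (Fin n) (Fin n) ℝ} (hA : A.PosDef) :
    ∃ c : ℝ, 0 < c ∧ ∀ v : Fin n → ℝ, (∑ i, v i ^ 2) ≤ c * (v ⬝ᵥ A *ᵥ v) := by
  classical
  set B := CFC.sqrt A with hBdef
  have hBB : B * B = A := CFC.sqrt_mul_sqrt_self A hA.posSemidef.nonneg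
  have hBpsd : B.PosSemidef := (CFC.sqrt_nonneg A).posSemidef
  have hBsym : Bᵀ = B := by
    have h := hBpsd.1.eq
    rwa [Matrix.conjTranspose_eq_transpose_of_trivial] at h
  have hdet : IsUnit B.det := by
    have : B.det * B.det = A.det := by rw [← Matrix.det_mul, hBB]
    have hApos := hA.det_pos
    refine isUnit_iff_ne_zero.mpr fun h => ?_
    rw [h, mul_zero] at this
    exact hApos.ne (by rw [this])
  have hBinv : B⁻¹ * B = 1 := Matrix.nonsing_inv_mul B hdet
  refine ⟨(∑ i, ∑ k, (B⁻¹ i k) ^ 2) + 1, by positivity, fun v => ?_⟩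
  set w := B *ᵥ v with hw
  have hvAv : v ⬝ᵥ A *ᵥ v = ∑ k, w k ^ 2 := by
    have h5 : v ᵥ* B = B *ᵥ v := by
      conv_lhs => rw [← hBsym]
      rw [Matrix.vecMul_transpose]
    rw [← hBB, ← Matrix.mulVec_mulVec, Matrix.dotProduct_mulVec, h5]
    simp [dotProduct, hw, pow_two]
  have hvw : ∀ i, v i = ∑ k, B⁻¹ i k * w k := by
    intro i
    have : B⁻¹ *ᵥ w = v := by
      rw [hw, Matrix.mulVec_mulVec, hBinv, Matrix.one_mulVec]
    rw [← this]
    rfl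
  have key : ∀ i, v i ^ 2 ≤ (∑ k, (B⁻¹ i k) ^ 2) * (∑ k, w k ^ 2) := by
    intro i
    rw [hvw i]
    exact Finset.sum_mul_sq_le_sq_mul_sq _ _ _
  have hwnn : 0 ≤ ∑ k, w k ^ 2 := by positivity
  calc ∑ i, v i ^ 2 ≤ ∑ i, (∑ k, (B⁻¹ i k) ^ 2) * (∑ k, w k ^ 2) :=
        Finset.sum_le_sum fun i _ => key i
    _ = (∑ i, ∑ k, (B⁻¹ i k) ^ 2) * (∑ k, w k ^ 2) := by rw [Finset.sum_mul]
    _ ≤ ((∑ i, ∑ k, (B⁻¹ i k) ^ 2) + 1) * (∑ k, w k ^ 2) := by nlinarith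
    _ = _ := by rw [hvAv]

lemma perturb {X P : Matrix (Fin n) (Fin n) ℝ} (hX : X.PosDef) (hP : Pᵀ = P)
    (hPb : ∀ v : Fin n → ℝ, |v ⬝ᵥ P *ᵥ v| ≤ ∑ i, v i ^ 2) :
    ∃ t : ℝ, 0 < t ∧ ∀ s : ℝ, |s| ≤ t → (X + s • P).PosDef := by
  obtain ⟨c, hc, hcoer⟩ := coercive hX
  refine ⟨1 / (2 * c), by positivity, fun s hs => ?_⟩
  have hXsym : Xᵀ = X := by
    have h := hX.1.eq
    rwa [Matrix.conjTranspose_eq_transpose_of_trivial] at h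
  refine PosDef.of_dotProduct_mulVec_pos ?_ ?_
  · rw [Matrix.IsHermitian, Matrix.conjTranspose_eq_transpose_of_trivial,
      Matrix.transpose_add, Matrix.transpose_smul, hP, hXsym]
  · intro v hv
    have h1 : (star v) ⬝ᵥ (X + s • P) *ᵥ v = v ⬝ᵥ X *ᵥ v + s * (v ⬝ᵥ P *ᵥ v) := by
      rw [Matrix.add_mulVec, dotProduct_add, Matrix.smul_mulVec,
        dotProduct_smul]
      simp [star, smul_eq_mul]
    rw [h1]
    have h2 : 0 < v ⬝ᵥ X *ᵥ v := hX.dotProduct_mulVec_pos hv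
    have h3 : |s * (v ⬝ᵥ P *ᵥ v)| ≤ (1 / (2 * c)) * (c * (v ⬝ᵥ X *ᵥ v)) := by
      rw [abs_mul]
      exact mul_le_mul hs ((hPb v).trans (hcoer v)) (abs_nonneg _) (by positivity)
    have h4 : (1 / (2 * c)) * (c * (v ⬝ᵥ X *ᵥ v)) = (v ⬝ᵥ X *ᵥ v) / 2 := by
      field_simp
    have := abs_le.mp h3
    nlinarith [this.1, this.2]



lemma symm_of_herm {A : Matrix (Fin n) (Fin n) ℝ} (h : A.IsHermitian) : Aᵀ = A := by
  have h2 := h.eq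
  rwa [Matrix.conjTranspose_eq_transpose_of_trivial] at h2

lemma psd_conj {A B : Matrix (Fin n) (Fin n) ℝ} (hA : A.PosSemidef) :
    (Bᵀ * A * B).PosSemidef := by
  have := hA.conjTranspose_mul_mul_same B
  rwa [Matrix.conjTranspose_eq_transpose_of_trivial] at this

/-- Loewner antitonicity of the inverse. -/
lemma inv_antitone {P Q : Matrix (Fin n) (Fin n) ℝ} (hP : P.PosDef) (hQ : Q.PosDef)
    (h : (Q - P).PosSemidef) : (P⁻¹ - Q⁻¹).PosSemidef := by
  have hPu : IsUnit P.det := hP.det_pos.ne'.isUnit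
  have hQu : IsUnit Q.det := hQ.det_pos.ne'.isUnit
  have hPi : P * P⁻¹ = 1 := Matrix.mul_nonsing_inv P hPu
  have hPi' : P⁻¹ * P = 1 := Matrix.nonsing_inv_mul P hPu
  have hQi : Q * Q⁻¹ = 1 := Matrix.mul_nonsing_inv Q hQu
  have hQi' : Q⁻¹ * Q = 1 := Matrix.nonsing_inv_mul Q hQu
  set Sd := Q - P with hSd
  have hSdsym : Sdᵀ = Sd := by
    rw [hSd, Matrix.transpose_sub, symm_of_herm hQ.1, symm_of_herm hP.1]
  have hQisym : (Q⁻¹)ᵀ = Q⁻¹ := symm_of_herm hQ.inv.1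
  have e1 : Q⁻¹ * Sd * P⁻¹ = P⁻¹ - Q⁻¹ := by
    rw [hSd, Matrix.mul_sub, hQi', Matrix.sub_mul, Matrix.one_mul, Matrix.mul_assoc, hPi,
      Matrix.mul_one]
  have key : P⁻¹ - Q⁻¹ = (Sd * Q⁻¹)ᵀ * P⁻¹ * (Sd * Q⁻¹) + (Q⁻¹)ᵀ * Sd * Q⁻¹ := by
    rw [Matrix.transpose_mul, hQisym, hSdsym]
    have : Q⁻¹ * Sd * (P⁻¹ * (Sd * Q⁻¹)) = (P⁻¹ - Q⁻¹) * (Sd * Q⁻¹) := by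
      rw [← e1]; noncomm_ring
    have e2 : P⁻¹ * Sd * Q⁻¹ = P⁻¹ - Q⁻¹ := by
      rw [hSd, Matrix.mul_sub, hPi', Matrix.sub_mul, Matrix.one_mul, Matrix.mul_assoc, hQi,
        Matrix.mul_one]
    calc P⁻¹ - Q⁻¹ = P⁻¹ * Sd * Q⁻¹ := e2.symm
      _ = (P⁻¹ * (Sd * Q⁻¹) - Q⁻¹ * (Sd * Q⁻¹)) + Q⁻¹ * Sd * Q⁻¹ := by noncomm_ring
      _ = (P⁻¹ - Q⁻¹) * (Sd * Q⁻¹) + Q⁻¹ * Sd * Q⁻¹ := by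
          simp only [hSd, Matrix.sub_mul]
      _ = Q⁻¹ * Sd * (P⁻¹ * (Sd * Q⁻¹)) + Q⁻¹ * Sd * Q⁻¹ := by rw [this]
      _ = _ := by noncomm_ring
  rw [key]
  exact ((psd_conj hP.inv.posSemidef)).add (psd_conj h)



lemma smul_posSemidef {A : Matrix (Fin n) (Fin n) ℝ} {c : ℝ} (hc : 0 ≤ c)
    (hA : A.PosSemidef) : (c • A).PosSemidef := by
  refine PosSemidef.of_dotProduct_mulVec_nonneg ?_ fun v => ?_
  · rw [Matrix.IsHermitian, Matrix.conjTranspose_smul]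
    simp only [star_trivial]
    rw [hA.1.eq]
  · rw [Matrix.smul_mulVec, dotProduct_smul]
    exact mul_nonneg hc (hA.dotProduct_mulVec_nonneg v)

lemma smul_posDef {A : Matrix (Fin n) (Fin n) ℝ} {c : ℝ} (hc : 0 < c)
    (hA : A.PosDef) : (c • A).PosDef := by
  refine PosDef.of_dotProduct_mulVec_pos ?_ fun v hv => ?_
  · rw [Matrix.IsHermitian, Matrix.conjTranspose_smul]
    simp only [star_trivial]
    rw [hA.1.eq]
  · rw [Matrix.smul_mulVec, dotProduct_smul]
    exact mul_pos hc (hA.dotProduct_mulVec_pos hv)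


lemma foc {A X : Matrix (Fin n) (Fin n) ℝ} (hA : A.PosDef) (hX : X.PosDef)
    (hdiag : ∀ i, X i i ≤ 1)
    (hmin : ∀ Y : Matrix (Fin n) (Fin n) ℝ, Y.PosDef → (∀ i, Y i i ≤ 1) →
      (A * X⁻¹).trace ≤ (A * Y⁻¹).trace)
    {Y : Matrix (Fin n) (Fin n) ℝ} (hY : Y.PosDef) (hYd : ∀ i, Y i i ≤ 1) :
    ((X⁻¹ * A * X⁻¹) * (Y - X)).trace ≤ 0 := by
  have hXu : IsUnit X.det := hX.det_pos.ne'.isUnit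
  have hXi : X * X⁻¹ = 1 := Matrix.mul_nonsing_inv X hXu
  have hXi' : X⁻¹ * X = 1 := Matrix.nonsing_inv_mul X hXu
  have hXinvsym : (X⁻¹)ᵀ = X⁻¹ := symm_of_herm hX.inv.1
  set M := X⁻¹ * A * X⁻¹ with hMdef
  set H := Y - X with hHdef
  have hHsym : Hᵀ = H := by
    rw [hHdef, Matrix.transpose_sub, symm_of_herm hY.1, symm_of_herm hX.1]
  have hMpsd : M.PosSemidef := by
    have := psd_conj (B := X⁻¹) hA.posSemidef
    rwa [hXinvsym] at this
  have hHMH : (H * M * H).PosSemidef := by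
    have := psd_conj (B := H) hMpsd
    rwa [hHsym] at this
  set C0 := ((H * M * H) * X⁻¹).trace with hC0def
  have hC0 : 0 ≤ C0 := trace_mul_nonneg hHMH hX.inv.posSemidef
  have key : ∀ t : ℝ, 0 < t → t ≤ 1/2 → (M * H).trace ≤ t * (2 * C0) := by
    intro t ht ht2
    set Yt := X + t • H with hYtdef
    have hYtalt : Yt = (1 - t) • X + t • Y := by
      rw [hYtdef, hHdef]; module
    have hYt : Yt.PosDef := by
      rw [hYtalt]
      exact (smul_posDef (by linarith) hX).add_posSemidef
        (smul_posSemidef ht.le hY.posSemidef)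
    have hYtd : ∀ i, Yt i i ≤ 1 := by
      intro i
      rw [hYtalt]
      have h1 := hdiag i; have h2 := hYd i
      simp only [Matrix.add_apply, Matrix.smul_apply, smul_eq_mul]
      nlinarith
    have hYtu : IsUnit Yt.det := hYt.det_pos.ne'.isUnit
    have hYti : Yt * Yt⁻¹ = 1 := Matrix.mul_nonsing_inv Yt hYtu
    have hYti' : Yt⁻¹ * Yt = 1 := Matrix.nonsing_inv_mul Yt hYtu
    have I1 : Yt⁻¹ = X⁻¹ - t • (X⁻¹ * H * Yt⁻¹) := by
      have e1 : X⁻¹ * Yt = 1 + t • (X⁻¹ * H) := by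
        rw [hYtdef, Matrix.mul_add, hXi', Matrix.mul_smul]
      have e : t • (X⁻¹ * H * Yt⁻¹) = X⁻¹ - Yt⁻¹ := by
        calc t • (X⁻¹ * H * Yt⁻¹) = (X⁻¹ * Yt - 1) * Yt⁻¹ := by
              rw [e1, add_sub_cancel_left, Matrix.smul_mul, Matrix.mul_assoc]
          _ = X⁻¹ - Yt⁻¹ := by
              rw [Matrix.sub_mul, Matrix.one_mul, Matrix.mul_assoc, hYti, Matrix.mul_one]
      rw [e, sub_sub_cancel]
    have I2 : Yt⁻¹ = X⁻¹ - t • (Yt⁻¹ * H * X⁻¹) := by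
      have e1 : Yt * X⁻¹ = 1 + t • (H * X⁻¹) := by
        rw [hYtdef, Matrix.add_mul, hXi, Matrix.smul_mul]
      have e : t • (Yt⁻¹ * H * X⁻¹) = X⁻¹ - Yt⁻¹ := by
        calc t • (Yt⁻¹ * H * X⁻¹) = Yt⁻¹ * (Yt * X⁻¹ - 1) := by
              rw [e1, add_sub_cancel_left, Matrix.mul_smul, Matrix.mul_assoc]
          _ = X⁻¹ - Yt⁻¹ := by
              rw [Matrix.mul_sub, Matrix.mul_one, ← Matrix.mul_assoc, hYti', Matrix.one_mul]
      rw [e, sub_sub_cancel]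
    have exp1 : Yt⁻¹ = X⁻¹ - t • (X⁻¹ * H * X⁻¹)
        + (t * t) • (X⁻¹ * H * (Yt⁻¹ * H * X⁻¹)) := by
      conv_lhs => rw [I1]
      rw [show X⁻¹ * H * Yt⁻¹ = X⁻¹ * H * (X⁻¹ - t • (Yt⁻¹ * H * X⁻¹)) from by rw [← I2]]
      rw [Matrix.mul_sub, Matrix.mul_smul, smul_sub, smul_smul]
      module
    have tr1 : (A * (X⁻¹ * H * X⁻¹)).trace = (M * H).trace := by
      rw [show A * (X⁻¹ * H * X⁻¹) = (A * X⁻¹ * H) * X⁻¹ from by noncomm_ring,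
        Matrix.trace_mul_comm,
        show X⁻¹ * (A * X⁻¹ * H) = M * H from by rw [hMdef]; noncomm_ring]
    have tr2 : (A * (X⁻¹ * H * (Yt⁻¹ * H * X⁻¹))).trace = ((H * M * H) * Yt⁻¹).trace := by
      rw [show A * (X⁻¹ * H * (Yt⁻¹ * H * X⁻¹)) = (A * X⁻¹ * H) * (Yt⁻¹ * (H * X⁻¹)) from by
          noncomm_ring,
        Matrix.trace_mul_comm,
        show (Yt⁻¹ * (H * X⁻¹)) * (A * X⁻¹ * H) = Yt⁻¹ * (H * M * H) from by
          rw [hMdef]; noncomm_ring,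
        Matrix.trace_mul_comm]
    have texp : (A * Yt⁻¹).trace = (A * X⁻¹).trace - t * (M * H).trace
        + (t * t) * ((H * M * H) * Yt⁻¹).trace := by
      conv_lhs => rw [exp1, Matrix.mul_add, Matrix.mul_sub, Matrix.mul_smul, Matrix.mul_smul]
      rw [Matrix.trace_add, Matrix.trace_sub, Matrix.trace_smul, Matrix.trace_smul, tr1, tr2]
      simp only [smul_eq_mul, mul_assoc]
    have hhalf : ((2:ℝ)⁻¹ • X).PosDef := smul_posDef (by norm_num) hX
    have hhalfinv : ((2:ℝ)⁻¹ • X)⁻¹ = (2:ℝ) • X⁻¹ := by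
      apply Matrix.inv_eq_right_inv
      rw [Matrix.smul_mul, Matrix.mul_smul, smul_smul, hXi]
      norm_num
    have hdiff : (Yt - (2:ℝ)⁻¹ • X).PosSemidef := by
      have e : Yt - (2:ℝ)⁻¹ • X = ((1:ℝ) - t - 2⁻¹) • X + t • Y := by rw [hYtalt]; module
      rw [e]
      exact (smul_posSemidef (by linarith) hX.posSemidef).add
        (smul_posSemidef ht.le hY.posSemidef)
    have hmono := inv_antitone hhalf hYt hdiff
    rw [hhalfinv] at hmono
    have hrb : ((H * M * H) * Yt⁻¹).trace ≤ 2 * C0 := by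
      have h0 := trace_mul_nonneg hHMH hmono
      rw [Matrix.mul_sub, Matrix.trace_sub, Matrix.mul_smul, Matrix.trace_smul] at h0
      simp only [smul_eq_mul] at h0
      rw [hC0def]; linarith
    have hm := hmin Yt hYt hYtd
    rw [texp] at hm
    have h3 : (t * t) * ((H * M * H) * Yt⁻¹).trace ≤ (t * t) * (2 * C0) :=
      mul_le_mul_of_nonneg_left hrb (mul_pos ht ht).le
    have h2 : t * (M * H).trace ≤ t * (t * (2 * C0)) := by
      rw [← mul_assoc]; linarith
    exact (mul_le_mul_iff_right₀ ht).mp h2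
  by_contra hpos
  push_neg at hpos
  set d := (M * H).trace with hd
  have htpos : 0 < min (1/2 : ℝ) (d / (4 * C0 + 1)) := by
    exact lt_min (by norm_num) (div_pos hpos (by linarith))
  have hk := key _ htpos (min_le_left _ _)
  have hle : min (1/2 : ℝ) (d / (4 * C0 + 1)) ≤ d / (4 * C0 + 1) := min_le_right _ _
  have : d ≤ (d / (4 * C0 + 1)) * (2 * C0) := by
    calc d ≤ min (1/2 : ℝ) (d / (4 * C0 + 1)) * (2 * C0) := hk
      _ ≤ (d / (4 * C0 + 1)) * (2 * C0) := by
          apply mul_le_mul_of_nonneg_right hle (by linarith)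
  have h4 : (d / (4 * C0 + 1)) * (2 * C0) < d := by
    rw [div_mul_eq_mul_div, div_lt_iff₀ (by linarith)]
    nlinarith
  linarith


lemma backward {A X : Matrix (Fin n) (Fin n) ℝ} (hA : A.PosDef)
    (lam : Fin n → ℝ) (hlam : ∀ i, 0 < lam i)
    (R : Matrix (Fin n) (Fin n) ℝ) (hRpsd : R.PosSemidef)
    (hRR : R * R = Matrix.diagonal (fun i => Real.sqrt (lam i)) * A *
      Matrix.diagonal (fun i => Real.sqrt (lam i)))
    (hRdiag : ∀ i, R i i = lam i)
    (hXeq : X = Matrix.diagonal (fun i => (Real.sqrt (lam i))⁻¹) * R *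
      Matrix.diagonal (fun i => (Real.sqrt (lam i))⁻¹))
    {Y : Matrix (Fin n) (Fin n) ℝ} (hY : Y.PosDef) (hYd : ∀ i, Y i i ≤ 1) :
    (A * X⁻¹).trace ≤ (A * Y⁻¹).trace := by
  have hsq : ∀ i, Real.sqrt (lam i) ≠ 0 := fun i =>
    (Real.sqrt_pos.mpr (hlam i)).ne'
  set D := Matrix.diagonal (fun i => Real.sqrt (lam i)) with hDdef
  set Dinv := Matrix.diagonal (fun i => (Real.sqrt (lam i))⁻¹) with hDinvdef
  have hDinvD : Dinv * D = 1 := by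
    rw [hDdef, hDinvdef, Matrix.diagonal_mul_diagonal,
      show (fun i => (Real.sqrt (lam i))⁻¹ * Real.sqrt (lam i)) = fun _ => (1:ℝ) from
        funext fun i => inv_mul_cancel₀ (hsq i), Matrix.diagonal_one]
  have hDDinv : D * Dinv = 1 := by
    rw [hDdef, hDinvdef, Matrix.diagonal_mul_diagonal,
      show (fun i => Real.sqrt (lam i) * (Real.sqrt (lam i))⁻¹) = fun _ => (1:ℝ) from
        funext fun i => mul_inv_cancel₀ (hsq i), Matrix.diagonal_one]
  have hDdet : IsUnit D.det := by
    rw [hDdef, Matrix.det_diagonal]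
    exact isUnit_iff_ne_zero.mpr (Finset.prod_ne_zero_iff.mpr fun i _ => hsq i)
  have hDsym : Dᵀ = D := by rw [hDdef, Matrix.diagonal_transpose]
  have hDAD : (D * A * D).PosDef := by
    have := posDef_conj hA hDdet
    rwa [hDsym] at this
  have hRpd : R.PosDef := by
    refine posDef_of_psd_unit hRpsd (isUnit_iff_ne_zero.mpr fun h => ?_)
    have : R.det * R.det = (D * A * D).det := by rw [← Matrix.det_mul, hRR]
    rw [h, mul_zero] at this
    exact hDAD.det_pos.ne (by rw [this])
  have hRi : R * R⁻¹ = 1 := Matrix.mul_nonsing_inv R hRpd.det_pos.ne'.isUnit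
  have hXinv : X⁻¹ = D * R⁻¹ * D := by
    apply Matrix.inv_eq_right_inv
    rw [hXeq]
    calc Dinv * R * Dinv * (D * R⁻¹ * D)
        = Dinv * R * (Dinv * D) * R⁻¹ * D := by noncomm_ring
      _ = Dinv * (R * R⁻¹) * D := by rw [hDinvD]; noncomm_ring
      _ = 1 := by rw [hRi, Matrix.mul_one, hDinvD]
  have htrX : (A * X⁻¹).trace = R.trace := by
    rw [hXinv,
      show A * (D * R⁻¹ * D) = (A * D * R⁻¹) * D from by noncomm_ring,
      Matrix.trace_mul_comm,
      show D * (A * D * R⁻¹) = (D * A * D) * R⁻¹ from by noncomm_ring,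
      ← hRR,
      show R * R * R⁻¹ = R * (R * R⁻¹) from by noncomm_ring, hRi, Matrix.mul_one]
  -- now the competitor Y
  set Z := D * Y * D with hZdef
  have hZpd : Z.PosDef := by
    have := posDef_conj hY hDdet
    rwa [hDsym] at this
  have hZi : Z * Z⁻¹ = 1 := Matrix.mul_nonsing_inv Z hZpd.det_pos.ne'.isUnit
  have hZi' : Z⁻¹ * Z = 1 := Matrix.nonsing_inv_mul Z hZpd.det_pos.ne'.isUnit
  have hYinv : Y⁻¹ = D * Z⁻¹ * D := by
    apply Matrix.inv_eq_right_inv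
    have e : Y * D = Dinv * Z := by
      calc Y * D = (Dinv * D) * (Y * D) := by rw [hDinvD, Matrix.one_mul]
        _ = Dinv * (D * Y * D) := by noncomm_ring
        _ = Dinv * Z := by rw [hZdef]
    calc Y * (D * Z⁻¹ * D) = (Y * D) * Z⁻¹ * D := by noncomm_ring
      _ = Dinv * (Z * Z⁻¹) * D := by rw [e]; noncomm_ring
      _ = 1 := by rw [hZi, Matrix.mul_one, hDinvD]
  have htrY : (A * Y⁻¹).trace = ((R * R) * Z⁻¹).trace := by
    rw [hYinv,
      show A * (D * Z⁻¹ * D) = (A * D * Z⁻¹) * D from by noncomm_ring,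
      Matrix.trace_mul_comm,
      show D * (A * D * Z⁻¹) = (D * A * D) * Z⁻¹ from by noncomm_ring,
      ← hRR]
  -- the PSD matrix W
  have hRsym : Rᵀ = R := symm_of_herm hRpsd.1
  have hZsym : Zᵀ = Z := symm_of_herm hZpd.1
  have hRZsym : (R - Z)ᵀ = R - Z := by rw [Matrix.transpose_sub, hRsym, hZsym]
  have hW : ((R - Z) * Z⁻¹ * (R - Z)).PosSemidef := by
    have := psd_conj (B := R - Z) hZpd.inv.posSemidef
    rwa [hRZsym] at this
  have eW : (R - Z) * Z⁻¹ * (R - Z) = R * Z⁻¹ * R - R - R + Z := by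
    have h1 : R * Z⁻¹ * Z = R := by rw [Matrix.mul_assoc, hZi', Matrix.mul_one]
    have h2 : Z * Z⁻¹ * R = R := by rw [hZi, Matrix.one_mul]
    have h3 : Z * Z⁻¹ * Z = Z := by rw [hZi, Matrix.one_mul]
    calc (R - Z) * Z⁻¹ * (R - Z)
        = R * Z⁻¹ * R - R * Z⁻¹ * Z - Z * Z⁻¹ * R + Z * Z⁻¹ * Z := by noncomm_ring
      _ = _ := by rw [h1, h2, h3]
  have htrW : 0 ≤ ((R * R) * Z⁻¹).trace - R.trace - R.trace + Z.trace := by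
    have h0 := trace_nonneg_of_psd hW
    rw [eW] at h0
    rw [Matrix.trace_add, Matrix.trace_sub, Matrix.trace_sub,
      Matrix.trace_mul_comm (R * Z⁻¹) R,
      show R * (R * Z⁻¹) = (R * R) * Z⁻¹ from by noncomm_ring] at h0
    linarith
  have htrZ : Z.trace = ∑ i, lam i * Y i i := by
    rw [hZdef, Matrix.trace]
    simp only [hDdef, Matrix.diag, Matrix.mul_diagonal, Matrix.diagonal_mul]
    refine Finset.sum_congr rfl fun i _ => ?_
    have h := Real.mul_self_sqrt (hlam i).le
    linear_combination Y i i * h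
  have htrR : R.trace = ∑ i, lam i := by
    rw [Matrix.trace]
    exact Finset.sum_congr rfl fun i _ => hRdiag i
  have hZle : Z.trace ≤ R.trace := by
    rw [htrZ, htrR]
    exact Finset.sum_le_sum fun i _ => mul_le_of_le_one_right (hlam i).le (hYd i)
  rw [htrX, htrY]
  linarith


lemma forward {A X : Matrix (Fin n) (Fin n) ℝ} (hA : A.PosDef) (hX : X.PosDef)
    (hdiag : ∀ i, X i i ≤ 1)
    (hmin : ∀ Y : Matrix (Fin n) (Fin n) ℝ, Y.PosDef → (∀ i, Y i i ≤ 1) →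
      (A * X⁻¹).trace ≤ (A * Y⁻¹).trace) :
    ∃ lam : Fin n → ℝ, (∀ i, 0 < lam i) ∧
      ∃ R : Matrix (Fin n) (Fin n) ℝ, R.PosSemidef ∧
        R * R = Matrix.diagonal (fun i => Real.sqrt (lam i)) * A *
          Matrix.diagonal (fun i => Real.sqrt (lam i)) ∧
        (∀ i : Fin n, R i i = lam i) ∧
        X = Matrix.diagonal (fun i => (Real.sqrt (lam i))⁻¹) * R *
          Matrix.diagonal (fun i => (Real.sqrt (lam i))⁻¹) := by
  classical
  have hXu : IsUnit X.det := hX.det_pos.ne'.isUnit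
  have hXi : X * X⁻¹ = 1 := Matrix.mul_nonsing_inv X hXu
  have hXi' : X⁻¹ * X = 1 := Matrix.nonsing_inv_mul X hXu
  have hXinvsym : (X⁻¹)ᵀ = X⁻¹ := symm_of_herm hX.inv.1
  set M := X⁻¹ * A * X⁻¹ with hMdef
  have hM : M.PosDef := by
    have := posDef_conj (B := X⁻¹) hA hX.inv.det_pos.ne'.isUnit
    rwa [hXinvsym] at this
  have hMsym : Mᵀ = M := symm_of_herm hM.1
  have hfoc : ∀ Y : Matrix (Fin n) (Fin n) ℝ, Y.PosDef → (∀ i, Y i i ≤ 1) →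
      (M * (Y - X)).trace ≤ 0 := fun Y hY hYd => foc hA hX hdiag hmin hY hYd
  -- Step A : the diagonal of X is 1
  have hX1 : ∀ j, X j j = 1 := by
    intro j
    by_contra hne
    have hlt : X j j < 1 := lt_of_le_of_ne (hdiag j) hne
    set d : Fin n → ℝ := Pi.single j (1 - X j j) with hddef
    have hdnn : ∀ i, 0 ≤ d i := by
      intro i
      rw [hddef]
      rcases eq_or_ne i j with rfl | h
      · simp; linarith
      · simp [Pi.single_eq_of_ne h]
    have hDpsd : (Matrix.diagonal d).PosSemidef := Matrix.PosSemidef.diagonal hdnn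
    have hYpd : (X + Matrix.diagonal d).PosDef := hX.add_posSemidef hDpsd
    have hYd : ∀ i, (X + Matrix.diagonal d) i i ≤ 1 := by
      intro i
      simp only [Matrix.add_apply, Matrix.diagonal_apply_eq]
      rcases eq_or_ne i j with rfl | h
      · rw [hddef, Pi.single_eq_same]; linarith
      · rw [hddef, Pi.single_eq_of_ne h, add_zero]; exact hdiag i
    have h0 := hfoc _ hYpd hYd
    rw [add_sub_cancel_left] at h0
    have htr : (M * Matrix.diagonal d).trace = M j j * (1 - X j j) := by
      rw [Matrix.trace, Finset.sum_eq_single j]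
      · simp [Matrix.diag, Matrix.mul_diagonal, hddef]
      · intro b _ hb
        simp [Matrix.diag, Matrix.mul_diagonal, hddef, Pi.single_eq_of_ne hb]
      · simp
    rw [htr] at h0
    have := diag_pos hM j
    nlinarith
  -- Step B : M is diagonal
  have hMoff : ∀ i j, i ≠ j → M i j = 0 := by
    intro i j hij
    set P : Matrix (Fin n) (Fin n) ℝ :=
      Matrix.single i j 1 + Matrix.single j i 1 with hPdef
    have hPsym : Pᵀ = P := by
      ext a b
      simp only [hPdef, Matrix.transpose_apply, Matrix.add_apply, Matrix.single,
        Matrix.of_apply]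
      rw [add_comm]
      congr 1 <;> exact if_congr and_comm rfl rfl
    have hPdiag : ∀ a, P a a = 0 := by
      intro a
      rw [hPdef]
      simp only [Matrix.add_apply]
      rw [Matrix.single_apply_of_ne, Matrix.single_apply_of_ne]
      · ring
      · rintro ⟨rfl, rfl⟩; exact hij rfl
      · rintro ⟨rfl, rfl⟩; exact hij rfl
    have hPb : ∀ v : Fin n → ℝ, |v ⬝ᵥ P *ᵥ v| ≤ ∑ k, v k ^ 2 := by
      intro v
      have hvPv : v ⬝ᵥ P *ᵥ v = v i * v j + v j * v i := by
        rw [hPdef, Matrix.add_mulVec, dotProduct_add,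
          Matrix.single_mulVec, Matrix.single_mulVec]
        simp [dotProduct, Function.update_apply, mul_ite, Finset.sum_ite_eq']
      rw [hvPv]
      have hsub : v i ^ 2 + v j ^ 2 ≤ ∑ k, v k ^ 2 := by
        have h1 : ∑ k ∈ ({i, j} : Finset (Fin n)), v k ^ 2 ≤ ∑ k, v k ^ 2 :=
          Finset.sum_le_sum_of_subset_of_nonneg (Finset.subset_univ _)
            (fun k _ _ => sq_nonneg _)
        rwa [Finset.sum_pair hij] at h1
      rw [abs_le]
      constructor <;> nlinarith [sq_nonneg (v i + v j), sq_nonneg (v i - v j)]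
    have hMji : M j i = M i j := by
      have := congrFun (congrFun hMsym i) j
      rw [Matrix.transpose_apply] at this
      exact this
    have htrMP : (M * P).trace = 2 * M i j := by
      have t1 : (M * Matrix.single i j (1:ℝ)).trace = M j i := by
        rw [Matrix.trace, Finset.sum_eq_single j]
        · simp [Matrix.diag]
        · intro b _ hb
          simp [Matrix.diag, hb]
        · simp
      have t2 : (M * Matrix.single j i (1:ℝ)).trace = M i j := by
        rw [Matrix.trace, Finset.sum_eq_single i]
        · simp [Matrix.diag]
        · intro b _ hb
          simp [Matrix.diag, hb]
        · simp
      rw [hPdef, Matrix.mul_add, Matrix.trace_add, t1, t2, hMji]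
      ring
    obtain ⟨t, ht, hpert⟩ := perturb hX hPsym hPb
    have hdiagP : ∀ (s : ℝ), ∀ a, (X + s • P) a a ≤ 1 := by
      intro s a
      simp only [Matrix.add_apply, Matrix.smul_apply, hPdiag a, smul_eq_mul, mul_zero,
        add_zero]
      exact hdiag a
    have htr : ∀ s : ℝ, (M * ((X + s • P) - X)).trace = s * (2 * M i j) := by
      intro s
      rw [add_sub_cancel_left, Matrix.mul_smul, Matrix.trace_smul, smul_eq_mul, htrMP]
    have hp := hfoc _ (hpert t (by rw [abs_of_pos ht])) (hdiagP t)
    have hm := hfoc _ (hpert (-t) (by rw [abs_neg, abs_of_pos ht])) (hdiagP (-t))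
    rw [htr t] at hp
    rw [htr (-t)] at hm
    nlinarith
  -- Step C : assemble
  refine ⟨fun i => M i i, fun i => diag_pos hM i, ?_⟩
  have hMdiag : M = Matrix.diagonal (fun i => M i i) := by
    ext a b
    rcases eq_or_ne a b with rfl | h
    · rw [Matrix.diagonal_apply_eq]
    · rw [Matrix.diagonal_apply_ne _ h, hMoff a b h]
  clear hfoc hMoff
  set D := Matrix.diagonal (fun i => Real.sqrt (M i i)) with hDdef
  set Dinv := Matrix.diagonal (fun i => (Real.sqrt (M i i))⁻¹) with hDinvdef
  have hsq : ∀ i, Real.sqrt (M i i) ≠ 0 := fun i =>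
    (Real.sqrt_pos.mpr (diag_pos hM i)).ne'
  have hDD : D * D = Matrix.diagonal (fun i => M i i) := by
    rw [hDdef, Matrix.diagonal_mul_diagonal,
      show (fun i => Real.sqrt (M i i) * Real.sqrt (M i i)) = fun i => M i i from
        funext fun i => Real.mul_self_sqrt (diag_pos hM i).le]
  have hDinvD : Dinv * D = 1 := by
    rw [hDdef, hDinvdef, Matrix.diagonal_mul_diagonal,
      show (fun i => (Real.sqrt (M i i))⁻¹ * Real.sqrt (M i i)) = fun _ => (1:ℝ) from
        funext fun i => inv_mul_cancel₀ (hsq i), Matrix.diagonal_one]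
  have hDDinv : D * Dinv = 1 := by
    rw [hDdef, hDinvdef, Matrix.diagonal_mul_diagonal,
      show (fun i => Real.sqrt (M i i) * (Real.sqrt (M i i))⁻¹) = fun _ => (1:ℝ) from
        funext fun i => mul_inv_cancel₀ (hsq i), Matrix.diagonal_one]
  have hDsym : Dᵀ = D := by rw [hDdef, Matrix.diagonal_transpose]
  refine ⟨D * X * D, ?_, ?_, ?_, ?_⟩
  · have h := hX.posSemidef.conjTranspose_mul_mul_same D
    rwa [Matrix.conjTranspose_eq_transpose_of_trivial, hDsym] at h
  · have e1 : X * M * X = A := by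
      rw [hMdef]
      calc X * (X⁻¹ * A * X⁻¹) * X = (X * X⁻¹) * A * (X⁻¹ * X) := by noncomm_ring
        _ = A := by rw [hXi, hXi', Matrix.one_mul, Matrix.mul_one]
    calc D * X * D * (D * X * D) = D * (X * (D * D) * X) * D := by noncomm_ring
      _ = D * (X * M * X) * D := by rw [hDD, ← hMdiag]
      _ = D * A * D := by rw [e1]
  · intro i
    have e : (D * X * D) i i = Real.sqrt (M i i) * X i i * Real.sqrt (M i i) := by
      simp [hDdef, Matrix.mul_diagonal, Matrix.diagonal_mul]
    rw [e, hX1 i, mul_one]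
    exact Real.mul_self_sqrt (diag_pos hM i).le
  · calc X = (Dinv * D) * X * (D * Dinv) := by
          rw [hDinvD, hDDinv, Matrix.one_mul, Matrix.mul_one]
      _ = Dinv * (D * X * D) * Dinv := by noncomm_ring



end MinFix

open MinFix in
/-- Lemma `expressions_for_x`: a symmetric positive-definite `X` with diagonal
entries at most `1` minimizes `tr(SᵀS X⁻¹)` over all such matrices if and only
if there is a vector `λ` with strictly positive entries which is a fixed point
of `φ` (i.e. the diagonal of the PSD square root `R` of
`diag(λ)^{1/2}(SᵀS)diag(λ)^{1/2}` equals `λ`) and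
`X = diag(λ)^{-1/2} R diag(λ)^{-1/2}`. -/
theorem minimizer_iff_fixed_point (n : ℕ) (hn : 1 ≤ n)
    (S : Matrix (Fin n) (Fin n) ℝ) (hS : IsUnit S.det)
    (X : Matrix (Fin n) (Fin n) ℝ) (hX : X.PosDef)
    (hdiag : ∀ i : Fin n, X i i ≤ 1) :
    (∀ Y : Matrix (Fin n) (Fin n) ℝ, Y.PosDef → (∀ i : Fin n, Y i i ≤ 1) →
        Matrix.trace (Sᵀ * S * X⁻¹) ≤ Matrix.trace (Sᵀ * S * Y⁻¹)) ↔
    (∃ lam : Fin n → ℝ, (∀ i, 0 < lam i) ∧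
      ∃ R : Matrix (Fin n) (Fin n) ℝ, R.PosSemidef ∧
        R * R = Matrix.diagonal (fun i => Real.sqrt (lam i)) * (Sᵀ * S) *
          Matrix.diagonal (fun i => Real.sqrt (lam i)) ∧
        (∀ i : Fin n, R i i = lam i) ∧
        X = Matrix.diagonal (fun i => (Real.sqrt (lam i))⁻¹) * R *
          Matrix.diagonal (fun i => (Real.sqrt (lam i))⁻¹)) := by
  have hApsd : (Sᵀ * S).PosSemidef := by
    have h := Matrix.posSemidef_conjTranspose_mul_self S
    rwa [Matrix.conjTranspose_eq_transpose_of_trivial] at h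
  have hAdet : IsUnit (Sᵀ * S).det := by
    rw [Matrix.det_mul, Matrix.det_transpose]
    exact hS.mul hS
  have hA : (Sᵀ * S).PosDef := posDef_of_psd_unit hApsd hAdet
  constructor
  · intro hmin
    exact forward hA hX hdiag hmin
  · rintro ⟨lam, hlam, R, hRpsd, hRR, hRdiag, hXeq⟩ Y hY hYd
    exact backward hA lam hlam R hRpsd hRR hRdiag hXeq hY hYd
end

section
/- Let n ≥ 1 and let S be an invertible n×n real matrix. Then there exists a unique n×n real symmetric positive-definite matrix X with all diagonal entries at most 1 such that tr(SᵀS X⁻¹) ≤ tr(SᵀS Y⁻¹) for every n×n real symmetric positive-definite matrix Y with all diagonal entries at most 1. -/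
open Matrix

open Finset

variable {n : ℕ}

section helpers

/-- For a real symmetric matrix, the quadratic form is symmetric in its arguments. -/
lemma sym_dot (A : Matrix (Fin n) (Fin n) ℝ) (hA : A.IsHermitian) (v x : Fin n → ℝ) :
    v ⬝ᵥ A *ᵥ x = (A *ᵥ v) ⬝ᵥ x := by
  have h : Aᵀ = A := by
    rw [← conjTranspose_eq_transpose_of_trivial]; exact hA.eq
  rw [dotProduct_mulVec, ← mulVec_transpose, h]

lemma psd_nonneg {A : Matrix (Fin n) (Fin n) ℝ} (hA : A.PosSemidef) (v : Fin n → ℝ) :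
    0 ≤ v ⬝ᵥ A *ᵥ v := by simpa using hA.dotProduct_mulVec_nonneg v

lemma pd_pos {A : Matrix (Fin n) (Fin n) ℝ} (hA : A.PosDef) {v : Fin n → ℝ} (hv : v ≠ 0) :
    0 < v ⬝ᵥ A *ᵥ v := by simpa using hA.dotProduct_mulVec_pos hv

lemma pd_mul_inv {A : Matrix (Fin n) (Fin n) ℝ} (hA : A.PosDef) : A * A⁻¹ = 1 :=
  Matrix.mul_nonsing_inv _ hA.det_pos.ne'.isUnit

lemma pd_inv_mul {A : Matrix (Fin n) (Fin n) ℝ} (hA : A.PosDef) : A⁻¹ * A = 1 :=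
  Matrix.nonsing_inv_mul _ hA.det_pos.ne'.isUnit

/-- key quadratic inequality : `2⟨w,v⟩ - ⟨w, Zw⟩ ≤ ⟨v, Z⁻¹ v⟩`. -/
lemma quad_ineq {Z : Matrix (Fin n) (Fin n) ℝ} (hZ : Z.PosDef) (v w : Fin n → ℝ) :
    2 * (w ⬝ᵥ v) - w ⬝ᵥ Z *ᵥ w ≤ v ⬝ᵥ Z⁻¹ *ᵥ v := by
  have key : (Z *ᵥ w - v) ⬝ᵥ Z⁻¹ *ᵥ (Z *ᵥ w - v)
      = w ⬝ᵥ Z *ᵥ w - 2 * (w ⬝ᵥ v) + v ⬝ᵥ Z⁻¹ *ᵥ v := by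
    have h1 : Z⁻¹ *ᵥ (Z *ᵥ w - v) = w - Z⁻¹ *ᵥ v := by
      rw [mulVec_sub, mulVec_mulVec, pd_inv_mul hZ, one_mulVec]
    rw [h1, sub_dotProduct, dotProduct_sub, dotProduct_sub]
    have h2 : (Z *ᵥ w) ⬝ᵥ (Z⁻¹ *ᵥ v) = w ⬝ᵥ v := by
      rw [← sym_dot Z hZ.isHermitian w (Z⁻¹ *ᵥ v), mulVec_mulVec, pd_mul_inv hZ, one_mulVec]
    have h3 : (Z *ᵥ w) ⬝ᵥ w = w ⬝ᵥ Z *ᵥ w := dotProduct_comm _ _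
    have h4 : v ⬝ᵥ w = w ⬝ᵥ v := dotProduct_comm _ _
    rw [h2, h3, h4]; ring
  have h0 : 0 ≤ (Z *ᵥ w - v) ⬝ᵥ Z⁻¹ *ᵥ (Z *ᵥ w - v) := psd_nonneg hZ.inv.posSemidef _
  linarith [h0, key ▸ h0]

/-- equality case of the quadratic inequality. -/
lemma quad_eq {Z : Matrix (Fin n) (Fin n) ℝ} (hZ : Z.PosDef) (v w : Fin n → ℝ)
    (h : 2 * (w ⬝ᵥ v) - w ⬝ᵥ Z *ᵥ w = v ⬝ᵥ Z⁻¹ *ᵥ v) : Z *ᵥ w = v := by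
  have key : (Z *ᵥ w - v) ⬝ᵥ Z⁻¹ *ᵥ (Z *ᵥ w - v)
      = w ⬝ᵥ Z *ᵥ w - 2 * (w ⬝ᵥ v) + v ⬝ᵥ Z⁻¹ *ᵥ v := by
    have h1 : Z⁻¹ *ᵥ (Z *ᵥ w - v) = w - Z⁻¹ *ᵥ v := by
      rw [mulVec_sub, mulVec_mulVec, pd_inv_mul hZ, one_mulVec]
    rw [h1, sub_dotProduct, dotProduct_sub, dotProduct_sub]
    have h2 : (Z *ᵥ w) ⬝ᵥ (Z⁻¹ *ᵥ v) = w ⬝ᵥ v := by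
      rw [← sym_dot Z hZ.isHermitian w (Z⁻¹ *ᵥ v), mulVec_mulVec, pd_mul_inv hZ, one_mulVec]
    have h3 : (Z *ᵥ w) ⬝ᵥ w = w ⬝ᵥ Z *ᵥ w := dotProduct_comm _ _
    have h4 : v ⬝ᵥ w = w ⬝ᵥ v := dotProduct_comm _ _
    rw [h2, h3, h4]; ring
  have : (Z *ᵥ w - v) ⬝ᵥ Z⁻¹ *ᵥ (Z *ᵥ w - v) = 0 := by rw [key]; linarith
  by_contra hne
  have hne' : Z *ᵥ w - v ≠ 0 := sub_ne_zero.mpr hne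
  exact absurd this (ne_of_gt (pd_pos hZ.inv hne'))

end helpers

section trace

/-- trace expansion: `tr(SᵀS B) = Σᵢ rowᵢ(S) ⬝ B rowᵢ(S)`. -/
lemma trace_expand (S B : Matrix (Fin n) (Fin n) ℝ) :
    Matrix.trace (Sᵀ * S * B) = ∑ i, (fun j => S i j) ⬝ᵥ B *ᵥ (fun j => S i j) := by
  rw [show Sᵀ * S * B = Sᵀ * (S * B) from by rw [Matrix.mul_assoc], Matrix.trace_mul_comm]
  simp only [Matrix.trace, Matrix.diag, Matrix.mul_apply, Matrix.transpose_apply,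
    dotProduct, mulVec, Finset.mul_sum, Finset.sum_mul]
  refine Finset.sum_congr rfl fun i _ => ?_
  rw [Finset.sum_comm]
  refine Finset.sum_congr rfl fun j _ => Finset.sum_congr rfl fun k _ => by ring

end trace

section midpoint

variable {X Y : Matrix (Fin n) (Fin n) ℝ}

lemma half_pd (hX : X.PosDef) (hY : Y.PosDef) : ((1/2 : ℝ) • (X + Y)).PosDef := by
  refine Matrix.PosDef.of_dotProduct_mulVec_pos ?_ fun x hx => ?_
  · have := (hX.isHermitian.add hY.isHermitian)
    simpa [Matrix.IsHermitian, Matrix.conjTranspose_smul] using congrArg (fun M => (1/2:ℝ) • M) this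
  · have h : (star x) ⬝ᵥ ((1/2 : ℝ) • (X + Y)) *ᵥ x
        = (1/2 : ℝ) * ((star x) ⬝ᵥ (X + Y) *ᵥ x) := by
      rw [smul_mulVec, dotProduct_smul, smul_eq_mul]
    rw [h]
    have := (hX.add hY).dotProduct_mulVec_pos hx
    positivity

lemma midpoint_le (hX : X.PosDef) (hY : Y.PosDef) (v : Fin n → ℝ) :
    v ⬝ᵥ ((1/2 : ℝ) • (X + Y))⁻¹ *ᵥ v
      ≤ (1/2) * (v ⬝ᵥ X⁻¹ *ᵥ v) + (1/2) * (v ⬝ᵥ Y⁻¹ *ᵥ v) := by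
  set M := (1/2 : ℝ) • (X + Y) with hM
  have hMpd : M.PosDef := half_pd hX hY
  set w := M⁻¹ *ᵥ v with hw
  have hMw : M *ᵥ w = v := by rw [hw, mulVec_mulVec, pd_mul_inv hMpd, one_mulVec]
  have hsplit : w ⬝ᵥ M *ᵥ w = (1/2) * (w ⬝ᵥ X *ᵥ w) + (1/2) * (w ⬝ᵥ Y *ᵥ w) := by
    rw [hM, smul_mulVec, dotProduct_smul, add_mulVec, dotProduct_add]
    simp [mul_add]
  have hLHS : v ⬝ᵥ M⁻¹ *ᵥ v = 2 * (w ⬝ᵥ v) - w ⬝ᵥ M *ᵥ w := by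
    rw [← hw, hMw, dotProduct_comm]; ring
  have q1 := quad_ineq hX v w
  have q2 := quad_ineq hY v w
  rw [hLHS, hsplit]; linarith

lemma midpoint_eq (hX : X.PosDef) (hY : Y.PosDef) (v : Fin n → ℝ)
    (h : v ⬝ᵥ ((1/2 : ℝ) • (X + Y))⁻¹ *ᵥ v
      = (1/2) * (v ⬝ᵥ X⁻¹ *ᵥ v) + (1/2) * (v ⬝ᵥ Y⁻¹ *ᵥ v)) :
    X *ᵥ (((1/2 : ℝ) • (X + Y))⁻¹ *ᵥ v) = v ∧ Y *ᵥ (((1/2 : ℝ) • (X + Y))⁻¹ *ᵥ v) = v := by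
  set M := (1/2 : ℝ) • (X + Y) with hM
  have hMpd : M.PosDef := half_pd hX hY
  set w := M⁻¹ *ᵥ v with hw
  have hMw : M *ᵥ w = v := by rw [hw, mulVec_mulVec, pd_mul_inv hMpd, one_mulVec]
  have hsplit : w ⬝ᵥ M *ᵥ w = (1/2) * (w ⬝ᵥ X *ᵥ w) + (1/2) * (w ⬝ᵥ Y *ᵥ w) := by
    rw [hM, smul_mulVec, dotProduct_smul, add_mulVec, dotProduct_add]
    simp [mul_add]
  have hLHS : v ⬝ᵥ M⁻¹ *ᵥ v = 2 * (w ⬝ᵥ v) - w ⬝ᵥ M *ᵥ w := by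
    rw [← hw, hMw, dotProduct_comm]; ring
  have q1 := quad_ineq hX v w
  have q2 := quad_ineq hY v w
  have e1 : 2 * (w ⬝ᵥ v) - w ⬝ᵥ X *ᵥ w = v ⬝ᵥ X⁻¹ *ᵥ v := by
    rw [hLHS, hsplit] at h; linarith
  have e2 : 2 * (w ⬝ᵥ v) - w ⬝ᵥ Y *ᵥ w = v ⬝ᵥ Y⁻¹ *ᵥ v := by
    rw [hLHS, hsplit] at h; linarith
  exact ⟨quad_eq hX v w e1, quad_eq hY v w e2⟩

end midpoint

section unique

lemma unique_min (S : Matrix (Fin n) (Fin n) ℝ) (hS : IsUnit S.det)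
    {X Y : Matrix (Fin n) (Fin n) ℝ} (hX : X.PosDef) (hY : Y.PosDef)
    (hXd : ∀ i, X i i ≤ 1) (hYd : ∀ i, Y i i ≤ 1)
    (hXm : ∀ Z : Matrix (Fin n) (Fin n) ℝ, Z.PosDef → (∀ i, Z i i ≤ 1) →
      Matrix.trace (Sᵀ * S * X⁻¹) ≤ Matrix.trace (Sᵀ * S * Z⁻¹))
    (hYm : ∀ Z : Matrix (Fin n) (Fin n) ℝ, Z.PosDef → (∀ i, Z i i ≤ 1) →
      Matrix.trace (Sᵀ * S * Y⁻¹) ≤ Matrix.trace (Sᵀ * S * Z⁻¹)) :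
    X = Y := by
  set M := (1/2 : ℝ) • (X + Y) with hMdef
  have hMpd : M.PosDef := half_pd hX hY
  have hMd : ∀ i, M i i ≤ 1 := by
    intro i
    have : M i i = (1/2) * (X i i + Y i i) := by
      simp [hMdef, Matrix.add_apply]; ring
    rw [this]; linarith [hXd i, hYd i]
  have hXY : Matrix.trace (Sᵀ * S * X⁻¹) = Matrix.trace (Sᵀ * S * Y⁻¹) :=
    le_antisymm (hXm Y hY hYd) (hYm X hX hXd)
  have hXM := hXm M hMpd hMd
  -- termwise functions
  set v : Fin n → Fin n → ℝ := fun i => (fun j => S i j) with hv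
  have hle : ∀ i ∈ Finset.univ, v i ⬝ᵥ M⁻¹ *ᵥ v i
      ≤ (1/2) * (v i ⬝ᵥ X⁻¹ *ᵥ v i) + (1/2) * (v i ⬝ᵥ Y⁻¹ *ᵥ v i) :=
    fun i _ => midpoint_le hX hY (v i)
  have hsum : ∑ i, (v i ⬝ᵥ M⁻¹ *ᵥ v i)
      = ∑ i, ((1/2) * (v i ⬝ᵥ X⁻¹ *ᵥ v i) + (1/2) * (v i ⬝ᵥ Y⁻¹ *ᵥ v i)) := by
    have h1 : ∑ i, (v i ⬝ᵥ M⁻¹ *ᵥ v i) = Matrix.trace (Sᵀ * S * M⁻¹) :=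
      (trace_expand S M⁻¹).symm
    have h2 : ∑ i, ((1/2) * (v i ⬝ᵥ X⁻¹ *ᵥ v i) + (1/2) * (v i ⬝ᵥ Y⁻¹ *ᵥ v i))
        = (1/2) * Matrix.trace (Sᵀ * S * X⁻¹) + (1/2) * Matrix.trace (Sᵀ * S * Y⁻¹) := by
      rw [trace_expand S X⁻¹, trace_expand S Y⁻¹, Finset.sum_add_distrib,
        Finset.mul_sum, Finset.mul_sum]
    have h3 : ∑ i, (v i ⬝ᵥ M⁻¹ *ᵥ v i)
        ≤ ∑ i, ((1/2) * (v i ⬝ᵥ X⁻¹ *ᵥ v i) + (1/2) * (v i ⬝ᵥ Y⁻¹ *ᵥ v i)) :=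
      Finset.sum_le_sum hle
    rw [h1, h2] at h3 ⊢
    have h4 : Matrix.trace (Sᵀ * S * X⁻¹) ≤ Matrix.trace (Sᵀ * S * M⁻¹) := hXM
    linarith [hXY ▸ h4]
  have heach := (Finset.sum_eq_sum_iff_of_le hle).1 hsum
  -- each row gives X *ᵥ w = Y *ᵥ w
  have hrow : ∀ i, ((X - Y) * M⁻¹) *ᵥ v i = 0 := by
    intro i
    obtain ⟨e1, e2⟩ := midpoint_eq hX hY (v i) (heach i (Finset.mem_univ i))
    rw [← Matrix.mulVec_mulVec, Matrix.sub_mulVec, e1, e2, sub_self]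
  -- hence (X - Y) * M⁻¹ * Sᵀ = 0
  have hmat : (X - Y) * M⁻¹ * Sᵀ = 0 := by
    ext j i
    have := congrFun (hrow i) j
    simpa [Matrix.mul_apply, Matrix.mulVec, dotProduct, Matrix.transpose_apply] using this
  have hSt : IsUnit (Sᵀ).det := by rwa [Matrix.det_transpose]
  have h0 : (X - Y) * M⁻¹ = 0 := by
    have := congrArg (fun E => E * (Sᵀ)⁻¹) hmat
    simpa [Matrix.mul_assoc, Matrix.mul_nonsing_inv _ hSt] using this
  have h1 : X - Y = 0 := by
    have := congrArg (fun E => E * M) h0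
    simpa [Matrix.mul_assoc, pd_inv_mul hMpd] using this
  exact sub_eq_zero.mp h1

end unique

section psd_helpers

lemma smul_one_psd {a : ℝ} (ha : 0 ≤ a) :
    ((a • 1 : Matrix (Fin n) (Fin n) ℝ)).PosSemidef := by
  refine Matrix.PosSemidef.of_dotProduct_mulVec_nonneg ?_ fun x => ?_
  · simp [Matrix.IsHermitian, Matrix.conjTranspose_smul]
  · have : (star x) ⬝ᵥ ((a • 1 : Matrix (Fin n) (Fin n) ℝ)) *ᵥ x = a * (x ⬝ᵥ x) := by
      simp [smul_mulVec, dotProduct_smul]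
    rw [this]
    exact mul_nonneg ha (Finset.sum_nonneg fun i _ => mul_self_nonneg _)

lemma smul_one_pd {a : ℝ} (ha : 0 < a) :
    ((a • 1 : Matrix (Fin n) (Fin n) ℝ)).PosDef := by
  refine Matrix.PosDef.of_dotProduct_mulVec_pos (smul_one_psd ha.le).1 fun x hx => ?_
  have : (star x) ⬝ᵥ ((a • 1 : Matrix (Fin n) (Fin n) ℝ)) *ᵥ x = a * (x ⬝ᵥ x) := by
    simp [smul_mulVec, dotProduct_smul]
  rw [this]
  refine mul_pos ha ?_
  obtain ⟨i, hi⟩ := Function.ne_iff.mp hx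
  exact Finset.sum_pos' (fun j _ => mul_self_nonneg _)
    ⟨i, Finset.mem_univ i, mul_self_pos.mpr hi⟩

lemma single_quad (B : Matrix (Fin n) (Fin n) ℝ) (i j : Fin n) :
    (Pi.single i (1:ℝ)) ⬝ᵥ B *ᵥ (Pi.single j 1) = B i j := by
  simp [dotProduct, mulVec, Pi.single_apply, Finset.sum_ite_eq, Finset.sum_ite_eq']

lemma herm_symm {B : Matrix (Fin n) (Fin n) ℝ} (hB : B.IsHermitian) (i j : Fin n) :
    B j i = B i j := by
  have := congrFun (congrFun hB.eq i) j
  simpa [Matrix.conjTranspose_apply] using this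

lemma psd_diag_nonneg {B : Matrix (Fin n) (Fin n) ℝ} (hB : B.PosSemidef) (i : Fin n) :
    0 ≤ B i i := by
  have := psd_nonneg hB (Pi.single i 1)
  rwa [single_quad] at this

lemma psd_entry_abs_le {B : Matrix (Fin n) (Fin n) ℝ} (hB : B.PosSemidef) (i j : Fin n) :
    |B i j| ≤ (B i i + B j j) / 2 := by
  have hsym := herm_symm hB.1 i j
  set ei : Fin n → ℝ := Pi.single i 1 with hei
  set ej : Fin n → ℝ := Pi.single j 1 with hej
  have hquad : ∀ s : ℝ, (ei + s • ej) ⬝ᵥ B *ᵥ (ei + s • ej)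
      = B i i + s * B i j + s * B j i + s * s * B j j := by
    intro s
    rw [add_dotProduct, mulVec_add, dotProduct_add, dotProduct_add,
      mulVec_smul, smul_dotProduct, smul_dotProduct, dotProduct_smul, dotProduct_smul]
    simp only [hei, hej, single_quad, smul_eq_mul]
    ring
  have h1 := psd_nonneg hB (ei + (1:ℝ) • ej)
  have h2 := psd_nonneg hB (ei + (-1:ℝ) • ej)
  rw [hquad 1] at h1
  rw [hquad (-1)] at h2
  rw [abs_le]
  constructor <;> nlinarith [hsym]

lemma psd_entry_le_trace {B : Matrix (Fin n) (Fin n) ℝ} (hB : B.PosSemidef) (i j : Fin n) :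
    |B i j| ≤ Matrix.trace B := by
  refine (psd_entry_abs_le hB i j).trans ?_
  have hi : B i i ≤ Matrix.trace B :=
    Finset.single_le_sum (fun k _ => psd_diag_nonneg hB k) (Finset.mem_univ i)
  have hj : B j j ≤ Matrix.trace B :=
    Finset.single_le_sum (fun k _ => psd_diag_nonneg hB k) (Finset.mem_univ j)
  linarith

end psd_helpers

section coercive

/-- Cauchy–Schwarz via the PD form `Y`: `(v⬝v)² ≤ (vᵀYv)(vᵀY⁻¹v)`. -/
lemma cs_ineq {Y : Matrix (Fin n) (Fin n) ℝ} (hY : Y.PosDef) (v : Fin n → ℝ) :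
    (v ⬝ᵥ v) ^ 2 ≤ (v ⬝ᵥ Y *ᵥ v) * (v ⬝ᵥ Y⁻¹ *ᵥ v) := by
  by_cases hv : v = 0
  · simp [hv]
  set α := v ⬝ᵥ Y *ᵥ v with hα
  set β := v ⬝ᵥ v with hβ
  set γ := v ⬝ᵥ Y⁻¹ *ᵥ v with hγ
  have hγpos : 0 < γ := pd_pos hY.inv hv
  set b : Fin n → ℝ := Y⁻¹ *ᵥ v with hb
  set t : ℝ := β / γ with ht
  have hexp : (v - t • b) ⬝ᵥ Y *ᵥ (v - t • b) = α - 2 * t * β + t * t * γ := by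
    have hYb : Y *ᵥ b = v := by rw [hb, mulVec_mulVec, pd_mul_inv hY, one_mulVec]
    have hbYv : b ⬝ᵥ Y *ᵥ v = β := by
      rw [hb, ← sym_dot Y⁻¹ hY.inv.isHermitian v (Y *ᵥ v), mulVec_mulVec, pd_inv_mul hY,
        one_mulVec]
    have hbv : b ⬝ᵥ v = γ := by rw [hb, dotProduct_comm]
    rw [sub_dotProduct, mulVec_sub, mulVec_smul, hYb, dotProduct_sub, dotProduct_sub,
      smul_dotProduct, dotProduct_smul, smul_dotProduct, dotProduct_smul]
    simp only [smul_eq_mul, hbYv, hbv]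
    have : v ⬝ᵥ v = β := rfl
    rw [this]; ring
  have h0 := psd_nonneg hY.posSemidef (v - t • b)
  rw [hexp] at h0
  have ht' : t = β / γ := ht
  rw [ht'] at h0
  have h1 : α - 2 * (β / γ) * β + (β / γ) * (β / γ) * γ = α - β ^ 2 / γ := by
    field_simp; ring
  rw [h1] at h0
  have := (div_le_iff₀ hγpos).mp (by linarith : β ^ 2 / γ ≤ α)
  linarith [this]

/-- The key coercivity bound. -/
lemma inv_quad_bound (S : Matrix (Fin n) (Fin n) ℝ) (hS : IsUnit S.det)
    {Y : Matrix (Fin n) (Fin n) ℝ} (hY : Y.PosDef) {M₀ : ℝ}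
    (htr : Matrix.trace (Sᵀ * S * Y⁻¹) ≤ M₀) (v : Fin n → ℝ) :
    v ⬝ᵥ Y⁻¹ *ᵥ v ≤ ((∑ i, ∑ j, |(Sᵀ)⁻¹ i j|) ^ 2 * M₀) * (v ⬝ᵥ v) := by
  set T : Matrix (Fin n) (Fin n) ℝ := (Sᵀ)⁻¹ with hT
  set κ : ℝ := ∑ i, ∑ j, |T i j| with hκ
  set B : Matrix (Fin n) (Fin n) ℝ := S * Y⁻¹ * Sᵀ with hB
  have hSt : IsUnit (Sᵀ).det := by rwa [Matrix.det_transpose]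
  have hBpsd : B.PosSemidef := by
    have := hY.inv.posSemidef.mul_mul_conjTranspose_same S
    rwa [conjTranspose_eq_transpose_of_trivial] at this
  have htrB : Matrix.trace B = Matrix.trace (Sᵀ * S * Y⁻¹) := by
    rw [hB, Matrix.trace_mul_cycle]
  set c : Fin n → ℝ := T *ᵥ v with hc
  have hrecover : Sᵀ *ᵥ c = v := by
    rw [hc, hT, mulVec_mulVec, Matrix.mul_nonsing_inv _ hSt, one_mulVec]
  have hval : v ⬝ᵥ Y⁻¹ *ᵥ v = c ⬝ᵥ B *ᵥ c := by
    rw [hB, ← Matrix.mulVec_mulVec, ← Matrix.mulVec_mulVec, hrecover,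
      dotProduct_mulVec c S, ← mulVec_transpose, hrecover]
  -- bound c ⬝ᵥ B *ᵥ c
  have hβ : 0 ≤ v ⬝ᵥ v := Finset.sum_nonneg fun i _ => mul_self_nonneg _
  set s : ℝ := Real.sqrt (v ⬝ᵥ v) with hs
  have hvk : ∀ k, |v k| ≤ s := by
    intro k
    rw [hs, ← Real.sqrt_sq_eq_abs]
    refine Real.sqrt_le_sqrt ?_
    have : v k ^ 2 = v k * v k := sq _
    rw [this]
    exact Finset.single_le_sum (f := fun k => v k * v k)
      (fun k _ => mul_self_nonneg _) (Finset.mem_univ k)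
  have hck : ∀ k, |c k| ≤ (∑ l, |T k l|) * s := by
    intro k
    show |∑ l, T k l * v l| ≤ _
    refine (Finset.abs_sum_le_sum_abs _ _).trans ?_
    rw [Finset.sum_mul]
    refine Finset.sum_le_sum fun l _ => ?_
    rw [abs_mul]
    exact mul_le_mul_of_nonneg_left (hvk l) (abs_nonneg _)
  have hcsum : ∑ k, |c k| ≤ κ * s := by
    rw [hκ, Finset.sum_mul]
    exact Finset.sum_le_sum fun k _ => hck k
  have htrB0 : 0 ≤ Matrix.trace B :=
    Finset.sum_nonneg fun k _ => psd_diag_nonneg hBpsd k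
  have hquad : c ⬝ᵥ B *ᵥ c ≤ (∑ k, |c k|) ^ 2 * Matrix.trace B := by
    have expand : c ⬝ᵥ B *ᵥ c = ∑ k, ∑ l, c k * B k l * c l := by
      simp [dotProduct, mulVec, Finset.mul_sum, mul_assoc]
    rw [expand, sq, Finset.sum_mul_sum, Finset.sum_mul]
    refine Finset.sum_le_sum fun k _ => ?_
    rw [Finset.sum_mul]
    refine Finset.sum_le_sum fun l _ => ?_
    have h1 : c k * B k l * c l ≤ |c k * B k l * c l| := le_abs_self _
    have h2 : |c k * B k l * c l| = |c k| * |B k l| * |c l| := by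
      rw [abs_mul, abs_mul]
    have h3 : |c k| * |B k l| * |c l| ≤ |c k| * Matrix.trace B * |c l| :=
      mul_le_mul_of_nonneg_right
        (mul_le_mul_of_nonneg_left (psd_entry_le_trace hBpsd k l) (abs_nonneg (c k)))
        (abs_nonneg (c l))
    calc c k * B k l * c l ≤ |c k| * |B k l| * |c l| := h2 ▸ h1
      _ ≤ |c k| * Matrix.trace B * |c l| := h3
      _ = |c k| * |c l| * Matrix.trace B := by ring
  have hκs : (∑ k, |c k|) ^ 2 ≤ κ ^ 2 * (v ⬝ᵥ v) := by
    have h1 : (0:ℝ) ≤ ∑ k, |c k| := Finset.sum_nonneg fun k _ => abs_nonneg _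
    have h2 : (∑ k, |c k|) ^ 2 ≤ (κ * s) ^ 2 := by
      exact pow_le_pow_left₀ h1 hcsum 2
    have h3 : (κ * s) ^ 2 = κ ^ 2 * s ^ 2 := by ring
    have h4 : s ^ 2 = v ⬝ᵥ v := Real.sq_sqrt hβ
    rw [h3, h4] at h2
    exact h2
  have hκ0 : (0:ℝ) ≤ κ := Finset.sum_nonneg fun k _ =>
    Finset.sum_nonneg fun l _ => abs_nonneg _
  calc v ⬝ᵥ Y⁻¹ *ᵥ v = c ⬝ᵥ B *ᵥ c := hval
    _ ≤ (∑ k, |c k|) ^ 2 * Matrix.trace B := hquad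
    _ ≤ (κ ^ 2 * (v ⬝ᵥ v)) * Matrix.trace B := by
        refine mul_le_mul_of_nonneg_right hκs htrB0
    _ ≤ (κ ^ 2 * M₀) * (v ⬝ᵥ v) := by
        have : Matrix.trace B ≤ M₀ := htrB ▸ htr
        nlinarith [sq_nonneg κ, hβ, htrB0]

end coercive

section topology

lemma lower_quad (S : Matrix (Fin n) (Fin n) ℝ) (hS : IsUnit S.det)
    {Y : Matrix (Fin n) (Fin n) ℝ} (hY : Y.PosDef) {M₀ : ℝ}
    (hKpos : 0 < (∑ i, ∑ j, |(Sᵀ)⁻¹ i j|) ^ 2 * M₀)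
    (htr : Matrix.trace (Sᵀ * S * Y⁻¹) ≤ M₀) (v : Fin n → ℝ) :
    (1 / ((∑ i, ∑ j, |(Sᵀ)⁻¹ i j|) ^ 2 * M₀)) * (v ⬝ᵥ v) ≤ v ⬝ᵥ Y *ᵥ v := by
  set K : ℝ := (∑ i, ∑ j, |(Sᵀ)⁻¹ i j|) ^ 2 * M₀ with hK
  by_cases hv : v = 0
  · simp [hv]
  have hβ : 0 < v ⬝ᵥ v := by
    obtain ⟨i, hi⟩ := Function.ne_iff.mp hv
    exact Finset.sum_pos' (fun j _ => mul_self_nonneg _)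
      ⟨i, Finset.mem_univ i, mul_self_pos.mpr hi⟩
  have hγ : 0 < v ⬝ᵥ Y⁻¹ *ᵥ v := pd_pos hY.inv hv
  have hcs := cs_ineq hY v
  have hb := inv_quad_bound S hS hY htr v
  have hα : 0 ≤ v ⬝ᵥ Y *ᵥ v := psd_nonneg hY.posSemidef v
  rw [div_mul_eq_mul_div, one_mul, div_le_iff₀ hKpos]
  nlinarith [hcs, hb, hα, hβ, hγ]

/-- The feasible truncated set is closed. -/
lemma C_closed (ε : ℝ) :
    IsClosed {X : Matrix (Fin n) (Fin n) ℝ |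
      (X - ε • 1).PosSemidef ∧ ∀ i, X i i ≤ 1} := by
  have h1 : IsClosed {X : Matrix (Fin n) (Fin n) ℝ | (X - ε • 1).IsHermitian} := by
    have : Continuous fun X : Matrix (Fin n) (Fin n) ℝ => X - ε • 1 :=
      continuous_id.sub continuous_const
    exact isClosed_eq this.matrix_conjTranspose this
  have h2 : IsClosed {X : Matrix (Fin n) (Fin n) ℝ |
      ∀ x : Fin n → ℝ, 0 ≤ star x ⬝ᵥ (X - ε • 1) *ᵥ x} := by
    rw [Set.setOf_forall]
    refine isClosed_iInter fun x => isClosed_le continuous_const ?_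
    have hc : Continuous fun X : Matrix (Fin n) (Fin n) ℝ => X - ε • 1 :=
      continuous_id.sub continuous_const
    refine Continuous.dotProduct continuous_const ?_
    exact hc.matrix_mulVec continuous_const
  have h3 : IsClosed {X : Matrix (Fin n) (Fin n) ℝ | ∀ i, X i i ≤ 1} := by
    rw [Set.setOf_forall]
    exact isClosed_iInter fun i =>
      isClosed_le (continuous_id.matrix_elem i i) continuous_const
  have : {X : Matrix (Fin n) (Fin n) ℝ | (X - ε • 1).PosSemidef ∧ ∀ i, X i i ≤ 1}
      = ({X : Matrix (Fin n) (Fin n) ℝ | (X - ε • 1).IsHermitian}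
        ∩ {X : Matrix (Fin n) (Fin n) ℝ | ∀ x : Fin n → ℝ, 0 ≤ star x ⬝ᵥ (X - ε • 1) *ᵥ x})
        ∩ {X : Matrix (Fin n) (Fin n) ℝ | ∀ i, X i i ≤ 1} := by
    ext X
    simp only [Set.mem_setOf_eq, Set.mem_inter_iff, Matrix.posSemidef_iff_dotProduct_mulVec, and_assoc]
  rw [this]
  exact ((h1.inter h2).inter h3)

/-- The feasible truncated set is compact. -/
lemma C_compact {ε : ℝ} (hε : 0 ≤ ε) :
    IsCompact {X : Matrix (Fin n) (Fin n) ℝ |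
      (X - ε • 1).PosSemidef ∧ ∀ i, X i i ≤ 1} := by
  have hbox : IsCompact {X : Matrix (Fin n) (Fin n) ℝ |
      ∀ i j, X i j ∈ Set.Icc (-1 : ℝ) 1} := by
    have h := isCompact_univ_pi (ι := Fin n)
      (s := fun _ => (Set.univ.pi fun _ : Fin n => Set.Icc (-1 : ℝ) 1))
      (fun _ => isCompact_univ_pi fun _ => isCompact_Icc)
    have hset : {X : Matrix (Fin n) (Fin n) ℝ | ∀ i j, X i j ∈ Set.Icc (-1 : ℝ) 1}
        = Set.univ.pi fun _ : Fin n => (Set.univ.pi fun _ : Fin n => Set.Icc (-1 : ℝ) 1) := by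
      ext X
      simp only [Set.mem_setOf_eq, Set.mem_Icc]
      constructor
      · intro h' i _ j _
        exact h' i j
      · intro h' i j
        exact h' i (Set.mem_univ i) j (Set.mem_univ j)
    rw [hset]
    exact h
  refine hbox.of_isClosed_subset (C_closed ε) ?_
  rintro X ⟨hpsd, hdiag⟩
  have hXpsd : X.PosSemidef := by
    have := hpsd.add (smul_one_psd hε)
    rwa [sub_add_cancel] at this
  intro i j
  have habs : |X i j| ≤ 1 := by
    refine (psd_entry_abs_le hXpsd i j).trans ?_
    have h0i := psd_diag_nonneg hXpsd i
    have h0j := psd_diag_nonneg hXpsd j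
    have := hdiag i
    have := hdiag j
    linarith
  exact abs_le.mp habs

end topology

section cont

lemma f_contOn (S : Matrix (Fin n) (Fin n) ℝ) {ε : ℝ} (hε : 0 < ε) :
    ContinuousOn (fun X : Matrix (Fin n) (Fin n) ℝ => Matrix.trace (Sᵀ * S * X⁻¹))
      {X : Matrix (Fin n) (Fin n) ℝ | (X - ε • 1).PosSemidef ∧ ∀ i, X i i ≤ 1} := by
  set C := {X : Matrix (Fin n) (Fin n) ℝ | (X - ε • 1).PosSemidef ∧ ∀ i, X i i ≤ 1} with hC
  have hpd : ∀ X ∈ C, X.PosDef := by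
    rintro X ⟨hpsd, -⟩
    have := Matrix.PosDef.posSemidef_add hpsd (smul_one_pd hε)
    rwa [sub_add_cancel] at this
  have hdet : ∀ X ∈ C, X.det ≠ 0 := fun X hX => ((hpd X hX).det_pos).ne'
  have hg : Continuous fun M : Matrix (Fin n) (Fin n) ℝ => Matrix.trace (Sᵀ * S * M) :=
    (continuous_const.matrix_mul continuous_id).matrix_trace
  have hh : ContinuousOn (fun X : Matrix (Fin n) (Fin n) ℝ => X.det⁻¹ • X.adjugate) C :=
    ContinuousOn.smul ((continuous_id.matrix_det.continuousOn).inv₀ hdet)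
      (continuous_id.matrix_adjugate.continuousOn)
  have hcomp := hg.comp_continuousOn hh
  refine ContinuousOn.congr hcomp fun X hX => ?_
  have : X⁻¹ = X.det⁻¹ • X.adjugate := by
    rw [Matrix.inv_def, Ring.inverse_eq_inv]
  rw [this]; rfl

end cont


/-- Theorem `existence_and_uniqueness`: for invertible `S`, the problem
`min tr(SᵀS X⁻¹)` over symmetric positive-definite `X` with diagonal entries
at most `1` has a unique minimizer. -/
theorem trace_inv_min_exists_unique (n : ℕ) (hn : 1 ≤ n)
    (S : Matrix (Fin n) (Fin n) ℝ) (hS : IsUnit S.det) :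
    ∃! X : Matrix (Fin n) (Fin n) ℝ,
      (X.PosDef ∧ ∀ i : Fin n, X i i ≤ 1) ∧
      ∀ Y : Matrix (Fin n) (Fin n) ℝ, Y.PosDef → (∀ i : Fin n, Y i i ≤ 1) →
        Matrix.trace (Sᵀ * S * X⁻¹) ≤ Matrix.trace (Sᵀ * S * Y⁻¹) := by
  have hne : Nonempty (Fin n) := ⟨⟨0, hn⟩⟩
  have hSt : IsUnit (Sᵀ).det := by rwa [Matrix.det_transpose]
  set T : Matrix (Fin n) (Fin n) ℝ := (Sᵀ)⁻¹ with hT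
  set κ : ℝ := ∑ i, ∑ j, |T i j| with hκ
  set M₀ : ℝ := Matrix.trace (Sᵀ * S * (1 : Matrix (Fin n) (Fin n) ℝ)⁻¹) with hM₀
  -- M₀ > 0
  have hS0 : S ≠ 0 := by
    intro h
    rw [h] at hS
    simp at hS
  have hM₀pos : 0 < M₀ := by
    rw [hM₀, inv_one, trace_expand]
    obtain ⟨i, hi⟩ := Function.ne_iff.mp hS0
    obtain ⟨j, hj⟩ := Function.ne_iff.mp hi
    refine Finset.sum_pos' (fun k _ => ?_) ?_
    · rw [one_mulVec]
      exact Finset.sum_nonneg fun l _ => mul_self_nonneg _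
    · refine ⟨i, Finset.mem_univ i, ?_⟩
      have : (fun l => S i l) ⬝ᵥ (1 : Matrix (Fin n) (Fin n) ℝ) *ᵥ (fun l => S i l)
          = ∑ l, S i l * S i l := by
        rw [one_mulVec]; rfl
      rw [this]
      exact Finset.sum_pos' (fun l _ => mul_self_nonneg _)
        ⟨j, Finset.mem_univ j, mul_self_pos.mpr hj⟩
  -- κ > 0
  have hκ0 : (0:ℝ) ≤ κ := Finset.sum_nonneg fun k _ =>
    Finset.sum_nonneg fun l _ => abs_nonneg _
  have hκpos : 0 < κ := by
    rcases lt_or_eq_of_le hκ0 with h | h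
    · exact h
    have hzero : ∀ i j, T i j = 0 := by
      intro i j
      have h1 : ∀ i ∈ Finset.univ, (0:ℝ) ≤ ∑ j, |T i j| :=
        fun i _ => Finset.sum_nonneg fun l _ => abs_nonneg _
      have h2 := (Finset.sum_eq_zero_iff_of_nonneg h1).mp h.symm i (Finset.mem_univ i)
      have h3 := (Finset.sum_eq_zero_iff_of_nonneg
        (fun j _ => abs_nonneg (T i j))).mp h2 j (Finset.mem_univ j)
      exact abs_eq_zero.mp h3
    have hTzero : T = 0 := by ext i j; exact hzero i j
    have hunit : Sᵀ * T = 1 := Matrix.mul_nonsing_inv _ hSt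
    rw [hTzero, Matrix.mul_zero] at hunit
    have i₀ : Fin n := ⟨0, hn⟩
    have := congrFun (congrFun hunit i₀) i₀
    simp [Matrix.one_apply_eq] at this
  set K : ℝ := κ ^ 2 * M₀ with hKdef
  have hKpos : 0 < K := by positivity
  set ε : ℝ := min 1 (1/K) with hε
  have hεpos : 0 < ε := lt_min one_pos (by positivity)
  have hε1 : ε ≤ 1 := min_le_left _ _
  have hεK : ε ≤ 1/K := min_le_right _ _
  set C := {X : Matrix (Fin n) (Fin n) ℝ | (X - ε • 1).PosSemidef ∧ ∀ i, X i i ≤ 1} with hC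
  -- membership of 1
  have h1C : (1 : Matrix (Fin n) (Fin n) ℝ) ∈ C := by
    constructor
    · have : (1 : Matrix (Fin n) (Fin n) ℝ) - ε • 1 = (1 - ε) • 1 := by
        rw [sub_smul, one_smul]
      rw [this]
      exact smul_one_psd (by linarith)
    · intro i
      simp
  -- minimizer on C
  obtain ⟨X₀, hX₀C, hX₀min⟩ := (C_compact hεpos.le).exists_isMinOn ⟨1, h1C⟩ (f_contOn S hεpos)
  have hX₀pd : X₀.PosDef := by
    have := Matrix.PosDef.posSemidef_add hX₀C.1 (smul_one_pd hεpos)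
    rwa [sub_add_cancel] at this
  have hX₀diag : ∀ i, X₀ i i ≤ 1 := hX₀C.2
  have hX₀1 : Matrix.trace (Sᵀ * S * X₀⁻¹) ≤ M₀ := hX₀min h1C
  -- any feasible Y with small value is in C
  have hYC : ∀ Y : Matrix (Fin n) (Fin n) ℝ, Y.PosDef → (∀ i, Y i i ≤ 1) →
      Matrix.trace (Sᵀ * S * Y⁻¹) ≤ M₀ → Y ∈ C := by
    intro Y hY hYd htr
    refine ⟨Matrix.PosSemidef.of_dotProduct_mulVec_nonneg ?_ ?_, hYd⟩
    · exact hY.isHermitian.sub (smul_one_psd hεpos.le).1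
    · intro x
      have hquad : star x ⬝ᵥ (Y - ε • 1) *ᵥ x = x ⬝ᵥ Y *ᵥ x - ε * (x ⬝ᵥ x) := by
        rw [Matrix.sub_mulVec, dotProduct_sub, smul_mulVec, one_mulVec,
          dotProduct_smul]
        simp [smul_eq_mul]
      rw [hquad]
      have hlow := lower_quad S hS hY (hKpos) (htr) x
      have hxx : 0 ≤ x ⬝ᵥ x := Finset.sum_nonneg fun i _ => mul_self_nonneg _
      have : ε * (x ⬝ᵥ x) ≤ (1/K) * (x ⬝ᵥ x) := mul_le_mul_of_nonneg_right hεK hxx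
      have hKK : (1 / ((∑ i, ∑ j, |(Sᵀ)⁻¹ i j|) ^ 2 * M₀)) = 1/K := by
        rw [hKdef, hκ, hT]
      rw [hKK] at hlow
      linarith
  -- minimality over all feasible matrices
  have hminall : ∀ Y : Matrix (Fin n) (Fin n) ℝ, Y.PosDef → (∀ i, Y i i ≤ 1) →
      Matrix.trace (Sᵀ * S * X₀⁻¹) ≤ Matrix.trace (Sᵀ * S * Y⁻¹) := by
    intro Y hY hYd
    by_cases h : Matrix.trace (Sᵀ * S * X₀⁻¹) ≤ Matrix.trace (Sᵀ * S * Y⁻¹)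
    · exact h
    push_neg at h
    have hYM₀ : Matrix.trace (Sᵀ * S * Y⁻¹) ≤ M₀ := le_of_lt (lt_of_lt_of_le h hX₀1)
    exact absurd (hX₀min (hYC Y hY hYd hYM₀)) (not_le.mpr h)
  refine ⟨X₀, ⟨⟨hX₀pd, hX₀diag⟩, hminall⟩, ?_⟩
  rintro Y ⟨⟨hYpd, hYd⟩, hYmin⟩
  exact unique_min S hS hYpd hX₀pd hYd hX₀diag hYmin hminall
end

section
/- Let n ≥ 1 and let S be an invertible n×n real matrix. Then (i) the infimum of ‖S·H⁻¹‖_F² over all invertible n×n real matrices H whose columns all have ℓ2-norm at most 1 is attained, and equals the infimum of the same quantity over the subset of such H that are additionally lower-triangular; and (ii) there is exactly one invertible lower-triangular H with strictly positive diagonal entries and all column ℓ2-norms at most 1 attaining this infimum, i.e., satisfying ‖S·H⁻¹‖_F² ≤ ‖S·G⁻¹‖_F² for every invertible lower-triangular G with all column ℓ2-norms at most 1. -/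
open Matrix Finset

namespace StreamFact

variable {n : ℕ}

/-- helper: diagonal entries of `S * M * Sᵀ`. -/
lemma conj_diag (S M : Matrix (Fin n) (Fin n) ℝ) (i : Fin n) :
    (S * M * Sᵀ) i i = (S i) ⬝ᵥ (M *ᵥ (S i)) := by
  simp only [Matrix.mul_apply, Matrix.transpose_apply, dotProduct, Matrix.mulVec, dotProduct,
    Finset.sum_mul, Finset.mul_sum]
  rw [Finset.sum_comm]
  apply Finset.sum_congr rfl; intro k _
  apply Finset.sum_congr rfl; intro j _
  ring

/-- quadratic identity -/
lemma quad_identity {A : Matrix (Fin n) (Fin n) ℝ} (hA : A.PosDef) (x y : Fin n → ℝ) :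
    x ⬝ᵥ (A⁻¹ *ᵥ x) - (2 * (y ⬝ᵥ x) - y ⬝ᵥ (A *ᵥ y))
      = (y - A⁻¹ *ᵥ x) ⬝ᵥ (A *ᵥ (y - A⁻¹ *ᵥ x)) := by
  have hu : IsUnit A.det := isUnit_iff_ne_zero.mpr hA.det_pos.ne'
  have hsym : Aᵀ = A := by
    rw [← Matrix.conjTranspose_eq_transpose_of_trivial]; exact hA.isHermitian
  set w := A⁻¹ *ᵥ x with hw
  have hAw : A *ᵥ w = x := by
    rw [hw, Matrix.mulVec_mulVec, Matrix.mul_nonsing_inv _ hu, Matrix.one_mulVec]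
  have h1 : w ⬝ᵥ (A *ᵥ y) = x ⬝ᵥ y := by
    rw [Matrix.dotProduct_mulVec, ← Matrix.mulVec_transpose, hsym, hAw]
  have expand : (y - w) ⬝ᵥ (A *ᵥ (y - w))
      = y ⬝ᵥ (A *ᵥ y) - y ⬝ᵥ x - (x ⬝ᵥ y - w ⬝ᵥ x) := by
    rw [Matrix.mulVec_sub, hAw, sub_dotProduct, dotProduct_sub,
      dotProduct_sub, h1]
  have c1 : x ⬝ᵥ y = y ⬝ᵥ x := dotProduct_comm _ _
  have c2 : w ⬝ᵥ x = x ⬝ᵥ w := dotProduct_comm _ _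
  rw [expand]
  linarith

lemma posdef_quad_pos {A : Matrix (Fin n) (Fin n) ℝ} (hA : A.PosDef) {z : Fin n → ℝ}
    (hz : z ≠ 0) : 0 < z ⬝ᵥ (A *ᵥ z) := by
  have := hA.dotProduct_mulVec_pos hz
  simpa using this

lemma posdef_quad_nonneg {A : Matrix (Fin n) (Fin n) ℝ} (hA : A.PosDef) (z : Fin n → ℝ) :
    0 ≤ z ⬝ᵥ (A *ᵥ z) := by
  rcases eq_or_ne z 0 with h | h
  · simp [h]
  · exact (posdef_quad_pos hA h).le

lemma key_le {A : Matrix (Fin n) (Fin n) ℝ} (hA : A.PosDef) (x y : Fin n → ℝ) :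
    2 * (y ⬝ᵥ x) - y ⬝ᵥ (A *ᵥ y) ≤ x ⬝ᵥ (A⁻¹ *ᵥ x) := by
  have h := quad_identity hA x y
  have h2 := posdef_quad_nonneg hA (y - A⁻¹ *ᵥ x)
  linarith

lemma key_lt {A : Matrix (Fin n) (Fin n) ℝ} (hA : A.PosDef) (x y : Fin n → ℝ)
    (hy : y ≠ A⁻¹ *ᵥ x) :
    2 * (y ⬝ᵥ x) - y ⬝ᵥ (A *ᵥ y) < x ⬝ᵥ (A⁻¹ *ᵥ x) := by
  have h := quad_identity hA x y
  have h2 := posdef_quad_pos hA (z := y - A⁻¹ *ᵥ x) (by intro hz; exact hy (by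
    have := sub_eq_zero.mp hz; exact this))
  linarith

lemma key_eq {A : Matrix (Fin n) (Fin n) ℝ} (hA : A.PosDef) (x : Fin n → ℝ) :
    x ⬝ᵥ (A⁻¹ *ᵥ x) = 2 * ((A⁻¹ *ᵥ x) ⬝ᵥ x) - (A⁻¹ *ᵥ x) ⬝ᵥ (A *ᵥ (A⁻¹ *ᵥ x)) := by
  have h := quad_identity hA x (A⁻¹ *ᵥ x)
  simp only [sub_self, Matrix.mulVec_zero, dotProduct_zero] at h
  simp only [Matrix.mulVec_mulVec] at h ⊢
  linarith


/-- the objective as a function of the Gram matrix -/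
noncomputable def gS (S A : Matrix (Fin n) (Fin n) ℝ) : ℝ :=
  ∑ i, (S i) ⬝ᵥ (A⁻¹ *ᵥ (S i))

lemma f_eq_g (S H : Matrix (Fin n) (Fin n) ℝ) (hH : IsUnit H.det) :
    ∑ i, ∑ j, ((S * H⁻¹) i j) ^ 2 = gS S (Hᵀ * H) := by
  have h1 : (Hᵀ * H)⁻¹ = H⁻¹ * (H⁻¹)ᵀ := by
    rw [Matrix.mul_inv_rev, ← Matrix.transpose_nonsing_inv]
  have h2 : ∀ i, S i ⬝ᵥ ((Hᵀ * H)⁻¹ *ᵥ S i) = ((S * H⁻¹) * (S * H⁻¹)ᵀ) i i := by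
    intro i
    rw [← conj_diag]
    congr 1
    rw [h1, Matrix.transpose_mul]
    simp only [Matrix.mul_assoc]
  have h3 : ∀ i, ((S * H⁻¹) * (S * H⁻¹)ᵀ) i i = ∑ j, ((S * H⁻¹) i j)^2 := by
    intro i; simp only [Matrix.mul_apply, Matrix.transpose_apply, sq, mul_comm]
  unfold gS
  rw [Finset.sum_congr rfl fun i _ => h2 i, Finset.sum_congr rfl fun i _ => h3 i]

lemma posDef_transpose_mul_self {H : Matrix (Fin n) (Fin n) ℝ} (hH : IsUnit H.det) :
    (Hᵀ * H).PosDef := by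
  rw [Matrix.posDef_iff_dotProduct_mulVec]
  constructor
  · exact Matrix.isHermitian_conjTranspose_mul_self H
  · intro x hx
    have hu : IsUnit H := (Matrix.isUnit_iff_isUnit_det _).2 hH
    have hxne : H *ᵥ x ≠ 0 :=
      ((Matrix.mulVec_injective_iff_isUnit.mpr hu).ne_iff' (by simp)).2 hx
    have heq : star x ⬝ᵥ ((Hᵀ * H) *ᵥ x) = (H *ᵥ x) ⬝ᵥ (H *ᵥ x) := by
      rw [star_trivial, ← Matrix.mulVec_mulVec, Matrix.dotProduct_mulVec,
        Matrix.vecMul_transpose]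
    rw [heq]
    have hne0 : (H *ᵥ x) ⬝ᵥ (H *ᵥ x) ≠ 0 := fun h0 =>
      hxne (dotProduct_self_eq_zero.mp h0)
    rcases hne0.lt_or_gt with h | h
    · exact absurd h (not_lt.mpr (Finset.sum_nonneg fun i _ => mul_self_nonneg _))
    · exact h

lemma posDef_half_add {A B : Matrix (Fin n) (Fin n) ℝ} (hA : A.PosDef) (hB : B.PosDef) :
    ((1/2 : ℝ) • (A + B)).PosDef := by
  rw [Matrix.posDef_iff_dotProduct_mulVec]
  constructor
  · have ha : Aᵀ = A := by
      rw [← Matrix.conjTranspose_eq_transpose_of_trivial]; exact hA.isHermitian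
    have hb : Bᵀ = B := by
      rw [← Matrix.conjTranspose_eq_transpose_of_trivial]; exact hB.isHermitian
    simp [Matrix.IsHermitian, Matrix.conjTranspose_smul, Matrix.transpose_smul, ha, hb,
      Matrix.transpose_add]
  · intro x hx
    have h1 := hA.dotProduct_mulVec_pos hx
    have h2 := hB.dotProduct_mulVec_pos hx
    rw [star_trivial] at h1 h2 ⊢
    simp only [Matrix.smul_mulVec, Matrix.add_mulVec, dotProduct_smul,
      dotProduct_add, smul_eq_mul]
    linarith

lemma g_strictConvex {S : Matrix (Fin n) (Fin n) ℝ} (hS : IsUnit S.det)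
    {A B : Matrix (Fin n) (Fin n) ℝ} (hA : A.PosDef) (hB : B.PosDef) (hne : A ≠ B) :
    gS S ((1/2 : ℝ) • (A + B)) < (1/2) * gS S A + (1/2) * gS S B := by
  have hAu : IsUnit A.det := isUnit_iff_ne_zero.mpr hA.det_pos.ne'
  have hBu : IsUnit B.det := isUnit_iff_ne_zero.mpr hB.det_pos.ne'
  set C := (1/2 : ℝ) • (A + B) with hCdef
  have hC : C.PosDef := posDef_half_add hA hB
  obtain ⟨i₀, hi₀⟩ : ∃ i, A⁻¹ *ᵥ S i ≠ B⁻¹ *ᵥ S i := by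
    by_contra h; push_neg at h
    apply hne
    have h2 : A⁻¹ * Sᵀ = B⁻¹ * Sᵀ := by
      ext k i
      simpa [Matrix.mul_apply, Matrix.mulVec, dotProduct] using congrFun (h i) k
    have hSu' : IsUnit Sᵀ.det := by rwa [Matrix.det_transpose]
    have hinv : A⁻¹ = B⁻¹ := by
      have h3 := congrArg (fun M => M * (Sᵀ)⁻¹) h2
      simpa [Matrix.mul_assoc, Matrix.mul_nonsing_inv _ hSu'] using h3
    calc A = (A⁻¹)⁻¹ := (Matrix.nonsing_inv_nonsing_inv _ hAu).symm
      _ = (B⁻¹)⁻¹ := by rw [hinv]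
      _ = B := Matrix.nonsing_inv_nonsing_inv _ hBu
  have hkey : ∀ x : Fin n → ℝ,
      x ⬝ᵥ (C⁻¹ *ᵥ x) = (1/2) * (2 * ((C⁻¹ *ᵥ x) ⬝ᵥ x) - (C⁻¹ *ᵥ x) ⬝ᵥ (A *ᵥ (C⁻¹ *ᵥ x)))
        + (1/2) * (2 * ((C⁻¹ *ᵥ x) ⬝ᵥ x) - (C⁻¹ *ᵥ x) ⬝ᵥ (B *ᵥ (C⁻¹ *ᵥ x))) := by
    intro x
    rw [key_eq hC x]
    have hsplit : (C⁻¹ *ᵥ x) ⬝ᵥ (C *ᵥ (C⁻¹ *ᵥ x))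
        = (1/2) * ((C⁻¹ *ᵥ x) ⬝ᵥ (A *ᵥ (C⁻¹ *ᵥ x)))
          + (1/2) * ((C⁻¹ *ᵥ x) ⬝ᵥ (B *ᵥ (C⁻¹ *ᵥ x))) := by
      rw [hCdef]
      simp only [Matrix.smul_mulVec, Matrix.add_mulVec, dotProduct_smul,
        dotProduct_add, smul_eq_mul]
      ring
    rw [hsplit]; ring
  have hle : ∀ i : Fin n,
      S i ⬝ᵥ (C⁻¹ *ᵥ S i) ≤ (1/2) * (S i ⬝ᵥ (A⁻¹ *ᵥ S i)) + (1/2) * (S i ⬝ᵥ (B⁻¹ *ᵥ S i)) := by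
    intro i
    have h1 := key_le hA (S i) (C⁻¹ *ᵥ S i)
    have h2 := key_le hB (S i) (C⁻¹ *ᵥ S i)
    rw [hkey (S i)]
    linarith
  have hlt : S i₀ ⬝ᵥ (C⁻¹ *ᵥ S i₀)
      < (1/2) * (S i₀ ⬝ᵥ (A⁻¹ *ᵥ S i₀)) + (1/2) * (S i₀ ⬝ᵥ (B⁻¹ *ᵥ S i₀)) := by
    rw [hkey (S i₀)]
    rcases eq_or_ne (C⁻¹ *ᵥ S i₀) (A⁻¹ *ᵥ S i₀) with h | h
    · have hne2 : (C⁻¹ *ᵥ S i₀) ≠ B⁻¹ *ᵥ S i₀ := by rw [h]; exact hi₀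
      have h1 := key_le hA (S i₀) (C⁻¹ *ᵥ S i₀)
      have h2 := key_lt hB (S i₀) (C⁻¹ *ᵥ S i₀) hne2
      linarith
    · have h1 := key_lt hA (S i₀) (C⁻¹ *ᵥ S i₀) h
      have h2 := key_le hB (S i₀) (C⁻¹ *ᵥ S i₀)
      linarith
  have hsum : gS S C < ∑ i, ((1/2) * (S i ⬝ᵥ (A⁻¹ *ᵥ S i)) + (1/2) * (S i ⬝ᵥ (B⁻¹ *ᵥ S i))) := by
    apply Finset.sum_lt_sum (fun i _ => hle i) ⟨i₀, Finset.mem_univ _, hlt⟩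
  calc gS S C < _ := hsum
    _ = (1/2) * gS S A + (1/2) * gS S B := by
      rw [Finset.sum_add_distrib, ← Finset.mul_sum, ← Finset.mul_sum]; rfl


section Cholesky

lemma lowTri_bt {H : Matrix (Fin n) (Fin n) ℝ} (h : ∀ i j : Fin n, i < j → H i j = 0) :
    H.BlockTriangular (OrderDual.toDual : Fin n → (Fin n)ᵒᵈ) := by
  intro i j hij
  exact h i j (by exact_mod_cast hij)

lemma bt_lowTri {H : Matrix (Fin n) (Fin n) ℝ}
    (h : H.BlockTriangular (OrderDual.toDual : Fin n → (Fin n)ᵒᵈ)) :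
    ∀ i j : Fin n, i < j → H i j = 0 := by
  intro i j hij
  exact h (by exact_mod_cast hij)

lemma posDef_conj {m : Type*} [Fintype m] [DecidableEq m]
    {A N : Matrix m m ℝ} (hA : A.PosDef) (hN : IsUnit N.det) :
    (N * A * Nᴴ).PosDef := by
  have hsymA : Aᵀ = A := by
    rw [← Matrix.conjTranspose_eq_transpose_of_trivial]; exact hA.isHermitian
  rw [Matrix.conjTranspose_eq_transpose_of_trivial]
  rw [Matrix.posDef_iff_dotProduct_mulVec]
  constructor
  · rw [Matrix.IsHermitian, Matrix.conjTranspose_eq_transpose_of_trivial,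
      Matrix.transpose_mul, Matrix.transpose_mul, Matrix.transpose_transpose, hsymA,
      Matrix.mul_assoc]
  · intro x hx
    have hNt : IsUnit Nᵀ.det := by rwa [Matrix.det_transpose]
    have hy : Nᵀ *ᵥ x ≠ 0 := by
      have hu : IsUnit Nᵀ := (Matrix.isUnit_iff_isUnit_det _).2 hNt
      exact ((Matrix.mulVec_injective_iff_isUnit.mpr hu).ne_iff' (by simp)).2 hx
    have heq : star x ⬝ᵥ ((N * A * Nᵀ) *ᵥ x) = star (Nᵀ *ᵥ x) ⬝ᵥ (A *ᵥ (Nᵀ *ᵥ x)) := by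
      rw [star_trivial, star_trivial, ← Matrix.mulVec_mulVec, ← Matrix.mulVec_mulVec,
        Matrix.dotProduct_mulVec (v := x) (A := N), ← Matrix.mulVec_transpose]
    rw [heq]
    exact hA.dotProduct_mulVec_pos hy

lemma posDef_submatrix {M : Matrix (Fin n) (Fin n) ℝ} (hM : M.PosDef) (e : Equiv.Perm (Fin n)) :
    (M.submatrix ⇑e ⇑e).PosDef := by
  refine Matrix.PosDef.of_dotProduct_mulVec_pos (hM.isHermitian.submatrix _) (fun x hx => ?_)
  have hy : (x ∘ ⇑e.symm) ≠ 0 := by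
    intro h0
    apply hx
    funext i
    have := congrFun h0 (e i)
    simpa using this
  have heq : star x ⬝ᵥ ((M.submatrix ⇑e ⇑e) *ᵥ x) =
      star (x ∘ ⇑e.symm) ⬝ᵥ (M *ᵥ (x ∘ ⇑e.symm)) := by
    rw [star_trivial, star_trivial, Matrix.submatrix_mulVec_equiv]
    show ∑ i, x i * ((M *ᵥ (x ∘ ⇑e.symm)) ∘ ⇑e) i
      = ∑ i, (x ∘ ⇑e.symm) i * (M *ᵥ (x ∘ ⇑e.symm)) i
    exact Fintype.sum_equiv e _ _ (fun i => by simp)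
  rw [heq]
  exact hM.dotProduct_mulVec_pos hy

lemma cholesky_aux {m : Type*} [Fintype m] [LinearOrder m] [WellFoundedLT m]
    [LocallyFiniteOrderBot m] {S : Matrix m m ℝ} (hS : S.PosDef) :
    ∃ C : Matrix m m ℝ, (∀ i j : m, i < j → C i j = 0) ∧ C * Cᵀ = S := by
  haveI := LDL.invertibleLowerInv hS
  set d : m → ℝ := LDL.diagEntries hS with hd
  have hlowinv_bt : (LDL.lowerInv hS).BlockTriangular (OrderDual.toDual : m → mᵒᵈ) := by
    intro i j hij
    exact LDL.lowerInv_triangular hS (by exact_mod_cast hij)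
  have hlow_bt : (LDL.lower hS).BlockTriangular (OrderDual.toDual : m → mᵒᵈ) := by
    rw [LDL.lower]
    exact Matrix.blockTriangular_inv_of_blockTriangular hlowinv_bt
  have hdiagPD : (LDL.diag hS).PosDef := by
    rw [LDL.diag_eq_lowerInv_conj]
    exact posDef_conj hS (Matrix.isUnit_det_of_invertible _)
  have hdpos : ∀ i, 0 < d i := (Matrix.posDef_diagonal_iff).mp hdiagPD
  refine ⟨LDL.lower hS * Matrix.diagonal (fun i => Real.sqrt (d i)), ?_, ?_⟩
  · intro i j hij
    exact (hlow_bt.mul (Matrix.blockTriangular_diagonal _)) (OrderDual.toDual_lt_toDual.mpr hij)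
  · have hdd : Matrix.diagonal (fun i => Real.sqrt (d i)) *
        (Matrix.diagonal (fun i => Real.sqrt (d i)))ᵀ = LDL.diag hS := by
      rw [Matrix.diagonal_transpose, Matrix.diagonal_mul_diagonal, LDL.diag,
        show (fun i => Real.sqrt (d i) * Real.sqrt (d i)) = LDL.diagEntries hS from
          funext fun i => Real.mul_self_sqrt (hdpos i).le]
    have hfac := LDL.lower_conj_diag hS
    rw [Matrix.conjTranspose_eq_transpose_of_trivial] at hfac
    rw [Matrix.transpose_mul, ← Matrix.mul_assoc,
      Matrix.mul_assoc (LDL.lower hS) _ (Matrix.diagonal _)ᵀ, hdd, hfac]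

lemma revCholesky_exists {M : Matrix (Fin n) (Fin n) ℝ} (hM : M.PosDef) :
    ∃ L : Matrix (Fin n) (Fin n) ℝ, (∀ i j : Fin n, i < j → L i j = 0) ∧
      (∀ i, 0 < L i i) ∧ IsUnit L.det ∧ Lᵀ * L = M := by
  letI : WellFoundedLT (Fin n) := inferInstance
  set e : Equiv.Perm (Fin n) := Fin.revPerm with he
  have hM' : (M.submatrix ⇑e ⇑e).PosDef := posDef_submatrix hM e
  obtain ⟨L₀, hL₀LT, hL₀fac⟩ := cholesky_aux hM'
  have hL₀bt : L₀.BlockTriangular (OrderDual.toDual : Fin n → (Fin n)ᵒᵈ) := lowTri_bt hL₀LT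
  -- reverse the ordering
  set L1 : Matrix (Fin n) (Fin n) ℝ := (L₀.submatrix ⇑e ⇑e)ᵀ with hL1def
  have hL1LT : ∀ i j : Fin n, i < j → L1 i j = 0 := by
    intro i j hij
    rw [hL1def, Matrix.transpose_apply, Matrix.submatrix_apply]
    refine hL₀bt (OrderDual.toDual_lt_toDual.mpr ?_)
    show Fin.rev j < Fin.rev i
    exact Fin.rev_lt_rev.mpr hij
  have hL1fac : L1ᵀ * L1 = M := by
    rw [hL1def, Matrix.transpose_transpose, Matrix.transpose_submatrix,
      Matrix.submatrix_mul_equiv, hL₀fac]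
    ext i j
    rw [Matrix.submatrix_apply, Matrix.submatrix_apply]
    show M (Fin.rev (Fin.rev i)) (Fin.rev (Fin.rev j)) = M i j
    rw [Fin.rev_rev, Fin.rev_rev]
  -- sign fixing
  set ε : Fin n → ℝ := fun i => if L1 i i < 0 then (-1 : ℝ) else 1 with hε
  have hεsq : ∀ i, ε i * ε i = 1 := by
    intro i; rw [hε]; dsimp only; split <;> norm_num
  set L : Matrix (Fin n) (Fin n) ℝ := Matrix.diagonal ε * L1 with hLdef
  have hLapp : ∀ i j, L i j = ε i * L1 i j := by
    intro i j; rw [hLdef, Matrix.diagonal_mul]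
  have hone : Matrix.diagonal (fun i => ε i * ε i) = (1 : Matrix (Fin n) (Fin n) ℝ) := by
    rw [show (fun i => ε i * ε i) = fun _ : Fin n => (1 : ℝ) from funext hεsq,
      Matrix.diagonal_one]
  have hLfac : Lᵀ * L = M := by
    rw [hLdef, Matrix.transpose_mul, Matrix.diagonal_transpose, Matrix.mul_assoc,
      ← Matrix.mul_assoc (Matrix.diagonal ε) (Matrix.diagonal ε) L1,
      Matrix.diagonal_mul_diagonal, hone, Matrix.one_mul, hL1fac]
  have hLLT : ∀ i j : Fin n, i < j → L i j = 0 := by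
    intro i j hij; rw [hLapp, hL1LT i j hij, mul_zero]
  have hLdet : IsUnit L.det := by
    have hMdet : IsUnit M.det := isUnit_iff_ne_zero.mpr hM.det_pos.ne'
    have : IsUnit (Lᵀ.det * L.det) := by rw [← Matrix.det_mul, hLfac]; exact hMdet
    rw [Matrix.det_transpose] at this
    exact isUnit_of_mul_isUnit_left this
  have hLdiagne : ∀ i, L i i ≠ 0 := by
    intro i hzero
    have hdet0 : L.det = ∏ i, L i i := Matrix.det_of_lowerTriangular L (lowTri_bt hLLT)
    rw [hdet0] at hLdet
    exact isUnit_iff_ne_zero.mp hLdet (Finset.prod_eq_zero (Finset.mem_univ i) hzero)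
  refine ⟨L, hLLT, ?_, hLdet, hLfac⟩
  intro i
  have hne := hLdiagne i
  rw [hLapp] at hne ⊢
  have hL1ne : L1 i i ≠ 0 := fun h0 => hne (by rw [h0, mul_zero])
  rw [hε]
  dsimp only
  split
  · rename_i hneg
    nlinarith
  · rename_i hnneg
    rw [one_mul]
    exact lt_of_le_of_ne (not_lt.mp hnneg) (Ne.symm hL1ne)

lemma revCholesky_unique {L₁ L₂ : Matrix (Fin n) (Fin n) ℝ}
    (t1 : ∀ i j : Fin n, i < j → L₁ i j = 0) (t2 : ∀ i j : Fin n, i < j → L₂ i j = 0)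
    (d1 : ∀ i, 0 < L₁ i i) (d2 : ∀ i, 0 < L₂ i i)
    (h : L₁ᵀ * L₁ = L₂ᵀ * L₂) : L₁ = L₂ := by
  have bt1 := lowTri_bt t1
  have bt2 := lowTri_bt t2
  have hu1 : IsUnit L₁.det := by
    rw [Matrix.det_of_lowerTriangular L₁ bt1]
    exact isUnit_iff_ne_zero.mpr (Finset.prod_pos (fun i _ => d1 i)).ne'
  have hu2 : IsUnit L₂.det := by
    rw [Matrix.det_of_lowerTriangular L₂ bt2]
    exact isUnit_iff_ne_zero.mpr (Finset.prod_pos (fun i _ => d2 i)).ne'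
  have hu1t : IsUnit L₁ᵀ.det := by rwa [Matrix.det_transpose]
  have hu2t : IsUnit L₂ᵀ.det := by rwa [Matrix.det_transpose]
  haveI := L₁.invertibleOfIsUnitDet hu1
  haveI := L₂.invertibleOfIsUnitDet hu2
  set Z := L₂ * L₁⁻¹ with hZdef
  have btZ : Z.BlockTriangular (OrderDual.toDual : Fin n → (Fin n)ᵒᵈ) :=
    bt2.mul (Matrix.blockTriangular_inv_of_blockTriangular bt1)
  have btW : (L₁ * L₂⁻¹).BlockTriangular (OrderDual.toDual : Fin n → (Fin n)ᵒᵈ) :=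
    bt1.mul (Matrix.blockTriangular_inv_of_blockTriangular bt2)
  have hZW : Z = (L₁ * L₂⁻¹)ᵀ := by
    have h1 : L₂ᵀ * (L₂ * L₁⁻¹) = L₁ᵀ := by
      rw [← Matrix.mul_assoc, ← h, Matrix.mul_assoc, Matrix.mul_nonsing_inv _ hu1,
        Matrix.mul_one]
    have h2 : Z = (L₂ᵀ)⁻¹ * L₁ᵀ := by
      rw [← h1, ← Matrix.mul_assoc, Matrix.nonsing_inv_mul _ hu2t, Matrix.one_mul]
    rw [h2, Matrix.transpose_mul, Matrix.transpose_nonsing_inv]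
  have hZoff : ∀ i j : Fin n, i ≠ j → Z i j = 0 := by
    intro i j hij
    rcases lt_or_gt_of_ne hij with hlt | hgt
    · exact bt_lowTri btZ i j hlt
    · rw [hZW, Matrix.transpose_apply]
      exact bt_lowTri btW j i hgt
  have hZL : Z * L₁ = L₂ := by
    rw [hZdef, Matrix.mul_assoc, Matrix.nonsing_inv_mul _ hu1, Matrix.mul_one]
  have hZZ : Zᵀ * Z = 1 := by
    rw [hZdef, Matrix.transpose_mul, Matrix.mul_assoc, ← Matrix.mul_assoc L₂ᵀ, ← h,
      Matrix.transpose_nonsing_inv, ← Matrix.mul_assoc, ← Matrix.mul_assoc,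
      Matrix.nonsing_inv_mul _ hu1t, Matrix.one_mul, Matrix.mul_nonsing_inv _ hu1]
  have hZdiag : ∀ i, Z i i = 1 := by
    intro i
    have hsq : Z i i * Z i i = 1 := by
      have h0 := congrFun (congrFun hZZ i) i
      rw [Matrix.mul_apply, Matrix.one_apply_eq] at h0
      rw [← h0]
      symm
      apply Finset.sum_eq_single i
      · intro j _ hj
        rw [Matrix.transpose_apply, hZoff j i hj, mul_zero]
      · intro hmem; exact absurd (Finset.mem_univ i) hmem
    have hpos : 0 < Z i i := by
      have hL2 : L₂ i i = Z i i * L₁ i i := by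
        rw [← hZL, Matrix.mul_apply]
        apply Finset.sum_eq_single i
        · intro j _ hj
          rw [hZoff i j (Ne.symm hj), zero_mul]
        · intro hmem; exact absurd (Finset.mem_univ i) hmem
      have hd2 := d2 i
      rw [hL2] at hd2
      by_contra hle
      push_neg at hle
      nlinarith [d1 i]
    nlinarith
  have hZ1 : Z = 1 := by
    ext i j
    rcases eq_or_ne i j with rfl | hij
    · rw [hZdiag i, Matrix.one_apply_eq]
    · rw [hZoff i j hij, Matrix.one_apply_ne hij]
  rw [← hZL, hZ1, Matrix.one_mul]

end Cholesky


lemma exists_global_min (S : Matrix (Fin n) (Fin n) ℝ) (hS : IsUnit S.det) :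
    ∃ H : Matrix (Fin n) (Fin n) ℝ, IsUnit H.det ∧ (∀ i, ∑ j, (H j i) ^ 2 ≤ 1) ∧
      ∀ G : Matrix (Fin n) (Fin n) ℝ, IsUnit G.det → (∀ i, ∑ j, (G j i) ^ 2 ≤ 1) →
        ∑ i, ∑ j, ((S * H⁻¹) i j) ^ 2 ≤ ∑ i, ∑ j, ((S * G⁻¹) i j) ^ 2 := by
  classical
  let 𝕄 := Matrix (Fin n) (Fin n) ℝ
  set Φ : 𝕄 × 𝕄 → ℝ := fun p => ∑ i, ∑ j, ((S * p.2) i j) ^ 2 with hΦdef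
  set c₀ : ℝ := ∑ i, ∑ j, (S i j) ^ 2 with hc₀def
  set T : Set (𝕄 × 𝕄) :=
    {p | (∀ i, ∑ j, (p.1 j i) ^ 2 ≤ 1) ∧ p.1 * p.2 = 1 ∧ Φ p ≤ c₀} with hTdef
  have hΦ : Continuous Φ := by
    apply continuous_finset_sum
    intro i _
    apply continuous_finset_sum
    intro j _
    exact ((continuous_const.matrix_mul continuous_snd).matrix_elem i j).pow 2
  have hTclosed : IsClosed T := by
    have h1 : IsClosed {p : 𝕄 × 𝕄 | ∀ i, ∑ j, (p.1 j i) ^ 2 ≤ 1} := by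
      have e1 : {p : 𝕄 × 𝕄 | ∀ i, ∑ j, (p.1 j i) ^ 2 ≤ 1}
          = ⋂ i, {p : 𝕄 × 𝕄 | ∑ j, (p.1 j i) ^ 2 ≤ 1} := by
        ext p; simp [Set.mem_iInter]
      rw [e1]
      refine isClosed_iInter fun i => isClosed_le ?_ continuous_const
      apply continuous_finset_sum
      intro j _
      exact (continuous_fst.matrix_elem j i).pow 2
    have h2 : IsClosed {p : 𝕄 × 𝕄 | p.1 * p.2 = 1} :=
      isClosed_eq (continuous_fst.matrix_mul continuous_snd) continuous_const
    have h3 : IsClosed {p : 𝕄 × 𝕄 | Φ p ≤ c₀} := isClosed_le hΦ continuous_const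
    exact h1.inter (h2.inter h3)
  have hc₀ : 0 ≤ c₀ := Finset.sum_nonneg fun i _ => Finset.sum_nonneg fun j _ => sq_nonneg _
  set r : ℝ := (∑ i, ∑ k, |S⁻¹ i k| + 1) * (Real.sqrt c₀ + 1) with hrdef
  have habs : 0 ≤ ∑ i, ∑ k, |(S⁻¹ : 𝕄) i k| :=
    Finset.sum_nonneg fun i _ => Finset.sum_nonneg fun k _ => abs_nonneg _
  have hsqrt : 0 ≤ Real.sqrt c₀ := Real.sqrt_nonneg _
  have hr1 : 1 ≤ r := by
    rw [hrdef]
    nlinarith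
  set box : Set 𝕄 := Set.univ.pi (fun _ : Fin n => Set.univ.pi
    fun _ : Fin n => Set.Icc (-r) r) with hboxdef
  have hboxmem : ∀ (A : 𝕄), (∀ i j, |A i j| ≤ r) → A ∈ box := by
    intro A hA
    rw [hboxdef]
    intro i _
    intro j _
    exact abs_le.mp (hA i j)
  have hboxcomp : IsCompact box :=
    isCompact_univ_pi fun _ => isCompact_univ_pi fun _ => isCompact_Icc
  have hsub : T ⊆ box ×ˢ box := by
    rintro ⟨H, A⟩ ⟨hcol, hHA, hval⟩
    constructor
    · apply hboxmem
      intro i j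
      have h1 : (H i j) ^ 2 ≤ 1 := by
        calc (H i j) ^ 2 ≤ ∑ k, (H k j) ^ 2 :=
              Finset.single_le_sum (f := fun k => (H k j) ^ 2)
                (fun k _ => sq_nonneg _) (Finset.mem_univ i)
          _ ≤ 1 := hcol j
      have h2 := Real.sqrt_le_sqrt h1
      rw [Real.sqrt_sq_eq_abs, Real.sqrt_one] at h2
      exact h2.trans hr1
    · apply hboxmem
      intro i j
      have hSA : ∀ k l, |(S * A) k l| ≤ Real.sqrt c₀ := by
        intro k l
        have h1 : ((S * A) k l) ^ 2 ≤ c₀ := by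
          calc ((S * A) k l) ^ 2 ≤ ∑ m, ((S * A) k m) ^ 2 :=
                Finset.single_le_sum (f := fun m => ((S * A) k m) ^ 2)
                  (fun m _ => sq_nonneg _) (Finset.mem_univ l)
            _ ≤ ∑ i, ∑ m, ((S * A) i m) ^ 2 :=
                Finset.single_le_sum (f := fun i => ∑ m, ((S * A) i m) ^ 2)
                  (fun i _ => Finset.sum_nonneg fun m _ => sq_nonneg _) (Finset.mem_univ k)
            _ ≤ c₀ := hval
        have h2 := Real.sqrt_le_sqrt h1
        rwa [Real.sqrt_sq_eq_abs] at h2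
      have hAeq : A = S⁻¹ * (S * A) := by
        rw [← Matrix.mul_assoc, Matrix.nonsing_inv_mul _ hS, Matrix.one_mul]
      have h3 : |A i j| ≤ (∑ k, |(S⁻¹ : 𝕄) i k|) * Real.sqrt c₀ := by
        conv_lhs => rw [hAeq]
        rw [Matrix.mul_apply]
        calc |∑ k, (S⁻¹ : 𝕄) i k * (S * A) k j| ≤ ∑ k, |(S⁻¹ : 𝕄) i k * (S * A) k j| :=
              Finset.abs_sum_le_sum_abs _ _
          _ ≤ ∑ k, |(S⁻¹ : 𝕄) i k| * Real.sqrt c₀ := by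
              refine Finset.sum_le_sum fun k _ => ?_
              rw [abs_mul]
              exact mul_le_mul_of_nonneg_left (hSA k j) (abs_nonneg _)
          _ = (∑ k, |(S⁻¹ : 𝕄) i k|) * Real.sqrt c₀ := by rw [Finset.sum_mul]
      refine h3.trans ?_
      rw [hrdef]
      have h4 : (∑ k, |(S⁻¹ : 𝕄) i k|) ≤ ∑ i, ∑ k, |(S⁻¹ : 𝕄) i k| + 1 := by
        have := Finset.single_le_sum
          (f := fun i => ∑ k, |(S⁻¹ : 𝕄) i k|)
          (fun i _ => Finset.sum_nonneg fun k _ => abs_nonneg _) (Finset.mem_univ i)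
        linarith
      have h5 : Real.sqrt c₀ ≤ Real.sqrt c₀ + 1 := by linarith
      have h6 : 0 ≤ ∑ k, |(S⁻¹ : 𝕄) i k| := Finset.sum_nonneg fun k _ => abs_nonneg _
      exact mul_le_mul h4 h5 hsqrt (by linarith)
  have hT : IsCompact T := (hboxcomp.prod hboxcomp).of_isClosed_subset hTclosed hsub
  have hidcol : ∀ i : Fin n, ∑ j, ((1 : 𝕄) j i) ^ 2 = 1 := by
    intro i
    rw [Finset.sum_eq_single i]
    · rw [Matrix.one_apply_eq, one_pow]
    · intro j _ hj
      rw [Matrix.one_apply_ne hj]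
      simp
    · intro h; exact absurd (Finset.mem_univ i) h
  have hne : ((1 : 𝕄), (1 : 𝕄)) ∈ T := by
    refine ⟨fun i => (hidcol i).le, by rw [Matrix.mul_one], ?_⟩
    rw [hΦdef, hc₀def]
    simp [Matrix.mul_one]
  obtain ⟨p, hpT, hpmin⟩ := hT.exists_isMinOn ⟨_, hne⟩ hΦ.continuousOn
  have hHA : p.1 * p.2 = 1 := hpT.2.1
  have hHdet : IsUnit p.1.det := Matrix.isUnit_det_of_right_inverse hHA
  have hHinv : p.1⁻¹ = p.2 := Matrix.inv_eq_right_inv hHA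
  refine ⟨p.1, hHdet, hpT.1, ?_⟩
  intro G hG hGcol
  have hfH : ∑ i, ∑ j, ((S * p.1⁻¹) i j) ^ 2 = Φ p := by rw [hHinv]
  by_cases hc : ∑ i, ∑ j, ((S * G⁻¹) i j) ^ 2 ≤ c₀
  · have hGT : (G, G⁻¹) ∈ T := ⟨hGcol, Matrix.mul_nonsing_inv _ hG, hc⟩
    have := hpmin hGT
    rw [hfH]
    exact this
  · push_neg at hc
    rw [hfH]
    exact (hpT.2.2).trans hc.le



lemma gram_diag (H : Matrix (Fin n) (Fin n) ℝ) (i : Fin n) :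
    (Hᵀ * H) i i = ∑ j, (H j i) ^ 2 := by
  simp [Matrix.mul_apply, pow_two]

end StreamFact


open StreamFact in
/-- Corollary `streaming_achieves_same_loss`: (i) the infimum of
`‖S·H⁻¹‖_F²` over invertible `H` with all column ℓ2-norms at most 1 is
attained by a lower-triangular matrix (so the streaming constraint does not
change the optimal value); (ii) among invertible lower-triangular matrices
with strictly positive diagonal and column norms at most 1 there is exactly
one minimizer. -/
theorem streaming_factorization_optimal (n : ℕ) (hn : 1 ≤ n)
    (S : Matrix (Fin n) (Fin n) ℝ) (hS : IsUnit S.det) :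
    (∃ H : Matrix (Fin n) (Fin n) ℝ,
      IsUnit H.det ∧ (∀ i : Fin n, ∑ j, (H j i) ^ 2 ≤ 1) ∧
      (∀ i j : Fin n, i < j → H i j = 0) ∧
      (∀ G : Matrix (Fin n) (Fin n) ℝ, IsUnit G.det →
        (∀ i : Fin n, ∑ j, (G j i) ^ 2 ≤ 1) →
        ∑ i, ∑ j, ((S * H⁻¹) i j) ^ 2 ≤ ∑ i, ∑ j, ((S * G⁻¹) i j) ^ 2)) ∧
    (∃! H : Matrix (Fin n) (Fin n) ℝ,
      (IsUnit H.det ∧ (∀ i j : Fin n, i < j → H i j = 0) ∧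
        (∀ i : Fin n, 0 < H i i) ∧ (∀ i : Fin n, ∑ j, (H j i) ^ 2 ≤ 1)) ∧
      (∀ G : Matrix (Fin n) (Fin n) ℝ, IsUnit G.det →
        (∀ i j : Fin n, i < j → G i j = 0) →
        (∀ i : Fin n, ∑ j, (G j i) ^ 2 ≤ 1) →
        ∑ i, ∑ j, ((S * H⁻¹) i j) ^ 2 ≤ ∑ i, ∑ j, ((S * G⁻¹) i j) ^ 2)) := by
  classical
  obtain ⟨H₀, hH₀det, hH₀col, hH₀min⟩ := exists_global_min S hS
  have hM : (H₀ᵀ * H₀).PosDef := posDef_transpose_mul_self hH₀det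
  obtain ⟨L, hLLT, hLdiag, hLdet, hLfac⟩ := revCholesky_exists hM
  have hLcol : ∀ i : Fin n, ∑ j, (L j i) ^ 2 ≤ 1 := by
    intro i
    calc ∑ j, (L j i) ^ 2 = (Lᵀ * L) i i := (gram_diag L i).symm
      _ = (H₀ᵀ * H₀) i i := by rw [hLfac]
      _ = ∑ j, (H₀ j i) ^ 2 := gram_diag H₀ i
      _ ≤ 1 := hH₀col i
  have hfLH : ∑ i, ∑ j, ((S * L⁻¹) i j) ^ 2 = ∑ i, ∑ j, ((S * H₀⁻¹) i j) ^ 2 := by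
    rw [f_eq_g S L hLdet, hLfac, ← f_eq_g S H₀ hH₀det]
  have hLmin : ∀ G : Matrix (Fin n) (Fin n) ℝ, IsUnit G.det →
      (∀ i : Fin n, ∑ j, (G j i) ^ 2 ≤ 1) →
      ∑ i, ∑ j, ((S * L⁻¹) i j) ^ 2 ≤ ∑ i, ∑ j, ((S * G⁻¹) i j) ^ 2 := by
    intro G hG hGc
    rw [hfLH]
    exact hH₀min G hG hGc
  constructor
  · exact ⟨L, hLdet, hLcol, hLLT, hLmin⟩
  · refine ⟨L, ⟨⟨hLdet, hLLT, hLdiag, hLcol⟩, fun G hG _ hGc => hLmin G hG hGc⟩, ?_⟩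
    rintro H ⟨⟨hHdet, hHLT, hHdiag, hHcol⟩, hHmin⟩
    have h1 : ∑ i, ∑ j, ((S * H⁻¹) i j) ^ 2 ≤ ∑ i, ∑ j, ((S * L⁻¹) i j) ^ 2 :=
      hHmin L hLdet hLLT hLcol
    have h2 : ∑ i, ∑ j, ((S * L⁻¹) i j) ^ 2 ≤ ∑ i, ∑ j, ((S * H⁻¹) i j) ^ 2 :=
      hLmin H hHdet hHcol
    have hMH : (Hᵀ * H).PosDef := posDef_transpose_mul_self hHdet
    have hML : (Lᵀ * L).PosDef := posDef_transpose_mul_self hLdet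
    by_cases hG : Hᵀ * H = Lᵀ * L
    · exact revCholesky_unique hHLT hLLT hHdiag hLdiag hG
    · exfalso
      have hC : ((1/2 : ℝ) • (Hᵀ * H + Lᵀ * L)).PosDef := posDef_half_add hMH hML
      have hlt := g_strictConvex hS hMH hML hG
      obtain ⟨K, hKLT, hKdiag, hKdet, hKfac⟩ := revCholesky_exists hC
      have hKcol : ∀ i : Fin n, ∑ j, (K j i) ^ 2 ≤ 1 := by
        intro i
        have hci : ((1/2 : ℝ) • (Hᵀ * H + Lᵀ * L)) i i
            = (1/2) * ((Hᵀ * H) i i + (Lᵀ * L) i i) := by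
          simp [Matrix.smul_apply, Matrix.add_apply]
        calc ∑ j, (K j i) ^ 2 = (Kᵀ * K) i i := (gram_diag K i).symm
          _ = ((1/2 : ℝ) • (Hᵀ * H + Lᵀ * L)) i i := by rw [hKfac]
          _ = (1/2) * ((Hᵀ * H) i i + (Lᵀ * L) i i) := hci
          _ ≤ 1 := by
            have hh := hHcol i
            have hl := hLcol i
            rw [gram_diag H i, gram_diag L i]
            linarith
      have h3 : ∑ i, ∑ j, ((S * H⁻¹) i j) ^ 2 ≤ ∑ i, ∑ j, ((S * K⁻¹) i j) ^ 2 :=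
        hHmin K hKdet hKLT hKcol
      have h4 : ∑ i, ∑ j, ((S * K⁻¹) i j) ^ 2 = gS S ((1/2 : ℝ) • (Hᵀ * H + Lᵀ * L)) := by
        rw [f_eq_g S K hKdet, hKfac]
      have h5 : ∑ i, ∑ j, ((S * H⁻¹) i j) ^ 2 = gS S (Hᵀ * H) := f_eq_g S H hHdet
      have h6 : ∑ i, ∑ j, ((S * L⁻¹) i j) ^ 2 = gS S (Lᵀ * L) := f_eq_g S L hLdet
      linarith
end

section
/- Let n ≥ 1 and let S be an invertible n×n matrix with real entries, regarded as a complex matrix. Suppose X is an n×n complex Hermitian positive-definite matrix with all (real) diagonal entries at most 1 such that the (real) trace tr(SᴴS X⁻¹) satisfies tr(SᴴS X⁻¹) ≤ tr(SᴴS Y⁻¹) for every complex Hermitian positive-definite Y with all diagonal entries at most 1. Then all entries of X are real. -/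
open Matrix ComplexOrder

private lemma key_ring {R : Type*} [Ring R] (x y c d g : R)
    (hxc : x * c = 1) (hyd : y * d = 1)
    (hg : (c + d) * g = 1) (hg' : g * (c + d) = 1) :
    (x + y) * (c + d - (c - d) * g * (c - d)) = 4 := by
  have h1 : c + d - (c - d) * g * (c - d) = (2 * d) * g * (2 * c) := by
    have e1 : ((c + d) - (c - d)) * g * ((c + d) + (c - d)) = (2 * d) * g * (2 * c) := by
      noncomm_ring
    have e2 : ((c + d) - (c - d)) * g * ((c + d) + (c - d))
        = c + d - (c - d) * g * (c - d) := by
      rw [sub_mul, sub_mul, hg, one_mul, mul_add, mul_assoc (c - d) g, hg', mul_one]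
      abel
    rw [← e2, e1]
  have h2 : (x + y) * (d * g * c) = 1 := by
    calc (x + y) * (d * g * c) = ((x + y) * d) * (g * c) := by noncomm_ring
    _ = (x * d + x * c) * (g * c) := by rw [add_mul, hyd, hxc]
    _ = x * (((d + c) * g) * c) := by rw [← mul_add]; noncomm_ring
    _ = 1 := by rw [add_comm d c, hg, one_mul, hxc]
  calc (x + y) * (c + d - (c - d) * g * (c - d))
      = 4 * ((x + y) * (d * g * c)) := by rw [h1]; noncomm_ring
  _ = 4 := by rw [h2, mul_one]

private lemma psd_zero_of_trace_re_nonpos {n : ℕ} {P : Matrix (Fin n) (Fin n) ℂ}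
    (hP : P.PosSemidef) (h : P.trace.re ≤ 0) : P = 0 := by
  have hd : ∀ i, 0 ≤ P i i := fun i => by
    have := hP.dotProduct_mulVec_nonneg (Pi.single i 1)
    simpa [dotProduct, Pi.single_apply, apply_ite] using this
  have hre : ∀ i, 0 ≤ (P i i).re := fun i => (Complex.le_def.mp (hd i)).1
  have him : ∀ i, (P i i).im = 0 := fun i => ((Complex.le_def.mp (hd i)).2).symm
  have hsum : ∑ i, (P i i).re = 0 := by
    refine le_antisymm ?_ (Finset.sum_nonneg fun i _ => hre i)
    calc ∑ i, (P i i).re = P.trace.re := by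
          rw [Matrix.trace, Complex.re_sum]; rfl
    _ ≤ 0 := h
  have hzero : ∀ i, P i i = 0 := by
    intro i
    have := (Finset.sum_eq_zero_iff_of_nonneg (fun i _ => hre i)).mp hsum i (Finset.mem_univ i)
    exact Complex.ext this (him i)
  have hcol : ∀ i, P *ᵥ Pi.single i 1 = 0 := by
    intro i
    refine (hP.dotProduct_mulVec_zero_iff _).mp ?_
    have : star (Pi.single i (1:ℂ)) ⬝ᵥ P *ᵥ Pi.single i 1 = P i i := by
      simp [dotProduct, Pi.single_apply, apply_ite]
    rw [this, hzero i]
  ext j i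
  have := congrFun (hcol i) j
  simpa using this

/-- Corollary `real_valued_solution`: for a real invertible `S` (viewed as a
complex matrix), any Hermitian positive-definite minimizer `X` of
`X ↦ tr(SᴴS X⁻¹)` over Hermitian positive-definite matrices with (real)
diagonal entries at most 1 has all entries real. -/
theorem optimal_X_is_real (n : ℕ) (hn : 1 ≤ n)
    (S : Matrix (Fin n) (Fin n) ℝ) (hS : IsUnit S.det)
    (X : Matrix (Fin n) (Fin n) ℂ) (hX : X.PosDef)
    (hdiag : ∀ i : Fin n, (X i i).re ≤ 1)
    (hmin : ∀ Y : Matrix (Fin n) (Fin n) ℂ, Y.PosDef →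
      (∀ i : Fin n, (Y i i).re ≤ 1) →
      (Matrix.trace ((S.map Complex.ofReal)ᴴ * (S.map Complex.ofReal) * X⁻¹)).re ≤
        (Matrix.trace ((S.map Complex.ofReal)ᴴ * (S.map Complex.ofReal) * Y⁻¹)).re) :
    ∀ i j : Fin n, (X i j).im = 0 := by
  set T : Matrix (Fin n) (Fin n) ℂ := S.map Complex.ofReal with hT
  set A : Matrix (Fin n) (Fin n) ℂ := Tᴴ * T with hA
  -- T real entries: Tᴴ = Tᵀ
  have hTH : Tᴴ = Tᵀ := by
    ext i j; simp [hT, Matrix.conjTranspose_apply, Matrix.transpose_apply]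
  have hAT : Aᵀ = A := by
    rw [hA, hTH, Matrix.transpose_mul, Matrix.transpose_transpose]
  -- determinant facts
  have hdX : IsUnit X.det := hX.det_pos.ne'.isUnit
  have hdXt : IsUnit Xᵀ.det := by rwa [Matrix.det_transpose]
  have hXinv : X⁻¹.PosDef := hX.inv
  have hE : (X⁻¹ + (X⁻¹)ᵀ).PosDef := hXinv.add hXinv.transpose
  set E : Matrix (Fin n) (Fin n) ℂ := X⁻¹ + (X⁻¹)ᵀ with hEdef
  set F : Matrix (Fin n) (Fin n) ℂ := X⁻¹ - (X⁻¹)ᵀ with hFdef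
  have hdE : IsUnit E.det := hE.det_pos.ne'.isUnit
  have hEE : E * E⁻¹ = 1 := Matrix.mul_nonsing_inv _ hdE
  have hEE' : E⁻¹ * E = 1 := Matrix.nonsing_inv_mul _ hdE
  have hXX : X * X⁻¹ = 1 := Matrix.mul_nonsing_inv _ hdX
  have hXt : Xᵀ * (X⁻¹)ᵀ = 1 := by
    rw [← Matrix.transpose_mul, Matrix.nonsing_inv_mul _ hdX, Matrix.transpose_one]
  -- key algebraic identity
  have key : (X + Xᵀ) * (E - F * E⁻¹ * F) = 4 := by
    rw [hEdef, hFdef]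
    exact key_ring X Xᵀ X⁻¹ (X⁻¹)ᵀ E⁻¹ hXX hXt hEE hEE'
  -- entrywise Hermitian facts
  have hst : ∀ i j, star (X j i) = X i j := by
    intro i j
    have := congrFun (congrFun hX.1.eq i) j
    simpa [Matrix.conjTranspose_apply] using this
  -- the symmetrized matrix M
  set M : Matrix (Fin n) (Fin n) ℂ := (2:ℂ)⁻¹ • (X + Xᵀ) with hMdef
  have half_pos : (0:ℂ) < (2:ℂ)⁻¹ := by norm_num [Complex.lt_def]
  have hM : M.PosDef := by
    refine Matrix.PosDef.of_dotProduct_mulVec_pos ?_ ?_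
    · show Mᴴ = M
      ext i j
      simp [hMdef, Matrix.conjTranspose_apply, Matrix.smul_apply, Matrix.add_apply,
        Matrix.transpose_apply, smul_eq_mul, star_mul', hst i j, hst j i, Complex.star_def,
        map_inv₀, add_comm]
    · intro x hx
      have h1 := hX.dotProduct_mulVec_pos hx
      have h2 := hX.transpose.dotProduct_mulVec_pos hx
      have : star x ⬝ᵥ M *ᵥ x = (2:ℂ)⁻¹ * (star x ⬝ᵥ X *ᵥ x + star x ⬝ᵥ Xᵀ *ᵥ x) := by
        rw [hMdef, Matrix.smul_mulVec, Matrix.add_mulVec, dotProduct_smul,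
          dotProduct_add, smul_eq_mul]
      rw [this]
      exact mul_pos half_pos (add_pos h1 h2)
  have hMdiag : ∀ i, (M i i).re ≤ 1 := by
    intro i
    have : M i i = (2:ℂ)⁻¹ * (X i i + X i i) := by
      simp [hMdef, Matrix.smul_apply, Matrix.add_apply, Matrix.transpose_apply, smul_eq_mul]
      ring
    rw [this]
    have := hdiag i
    simp [Complex.mul_re, Complex.add_re]
    norm_num
    linarith
  -- inverse of M
  have hMN : M * ((2:ℂ)⁻¹ • (E - F * E⁻¹ * F)) = 1 := by
    have h4 : (4 : Matrix (Fin n) (Fin n) ℂ) = (4:ℂ) • 1 := by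
      rw [← Algebra.algebraMap_eq_smul_one, map_ofNat]
    rw [hMdef, Matrix.smul_mul, Matrix.mul_smul, key, smul_smul, h4, smul_smul]
    norm_num
  have hMinv : M⁻¹ = (2:ℂ)⁻¹ • (E - F * E⁻¹ * F) := Matrix.inv_eq_right_inv hMN
  -- trace computations
  have htransp : (A * (X⁻¹)ᵀ).trace = (A * X⁻¹).trace := by
    calc (A * (X⁻¹)ᵀ).trace = ((A * (X⁻¹)ᵀ)ᵀ).trace := (Matrix.trace_transpose _).symm
    _ = ((X⁻¹)ᵀᵀ * Aᵀ).trace := by rw [Matrix.transpose_mul]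
    _ = (X⁻¹ * A).trace := by rw [Matrix.transpose_transpose, hAT]
    _ = (A * X⁻¹).trace := Matrix.trace_mul_comm _ _
  have htrace : (A * M⁻¹).trace
      = (A * X⁻¹).trace - (2:ℂ)⁻¹ * (A * (F * E⁻¹ * F)).trace := by
    rw [hMinv, Matrix.mul_smul, Matrix.trace_smul, hEdef, mul_sub, mul_add,
      Matrix.trace_sub, Matrix.trace_add, htransp, smul_eq_mul]
    ring
  -- use minimality
  have hmin' := hmin M hM hMdiag
  rw [htrace] at hmin'
  have hΔre : ((A * (F * E⁻¹ * F)).trace).re ≤ 0 := by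
    have h2 : ((2:ℂ)⁻¹ * (A * (F * E⁻¹ * F)).trace).re
        = 2⁻¹ * ((A * (F * E⁻¹ * F)).trace).re := by
      norm_num [Complex.mul_re]
    rw [Complex.sub_re, h2] at hmin'
    linarith
  -- the middle matrix is PSD
  have hFH : Fᴴ = F := by
    rw [hFdef, Matrix.conjTranspose_sub, hXinv.isHermitian.eq, hXinv.isHermitian.transpose.eq]
  have hΔpsd : (F * E⁻¹ * F).PosSemidef := by
    have := (hE.inv.posSemidef).conjTranspose_mul_mul_same F
    rwa [hFH] at this
  have hPpsd : (T * (F * E⁻¹ * F) * Tᴴ).PosSemidef := hΔpsd.mul_mul_conjTranspose_same T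
  have htr2 : (T * (F * E⁻¹ * F) * Tᴴ).trace = (A * (F * E⁻¹ * F)).trace := by
    calc (T * (F * E⁻¹ * F) * Tᴴ).trace = (Tᴴ * (T * (F * E⁻¹ * F))).trace :=
          Matrix.trace_mul_comm _ _
    _ = (A * (F * E⁻¹ * F)).trace := by rw [hA, ← mul_assoc]
  have hP0 : T * (F * E⁻¹ * F) * Tᴴ = 0 :=
    psd_zero_of_trace_re_nonpos hPpsd (by rw [htr2]; exact hΔre)
  -- T is invertible
  have hdT : IsUnit T.det := by
    have h1 : Complex.ofRealHom S.det = (S.map Complex.ofRealHom).det := RingHom.map_det _ _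
    have h2 : IsUnit (Complex.ofRealHom S.det) := hS.map Complex.ofRealHom
    rw [h1] at h2
    exact h2
  have hdTH : IsUnit Tᴴ.det := by
    rw [Matrix.det_conjTranspose]; exact hdT.star
  have hTT : T⁻¹ * T = 1 := Matrix.nonsing_inv_mul _ hdT
  have hTHT : Tᴴ * (Tᴴ)⁻¹ = 1 := Matrix.mul_nonsing_inv _ hdTH
  have hΔ0 : F * E⁻¹ * F = 0 := by
    calc F * E⁻¹ * F = 1 * (F * E⁻¹ * F) * 1 := by rw [one_mul, mul_one]
    _ = (T⁻¹ * T) * (F * E⁻¹ * F) * (Tᴴ * (Tᴴ)⁻¹) := by rw [hTT, hTHT]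
    _ = T⁻¹ * (T * (F * E⁻¹ * F) * Tᴴ) * (Tᴴ)⁻¹ := by noncomm_ring
    _ = 0 := by rw [hP0, mul_zero, zero_mul]
  -- hence F = 0
  have hvec : ∀ x : Fin n → ℂ, F *ᵥ x = 0 := by
    intro x
    by_contra hne
    have hpos := hE.inv.dotProduct_mulVec_pos hne
    have h0 : star (F *ᵥ x) ⬝ᵥ E⁻¹ *ᵥ (F *ᵥ x) = 0 := by
      rw [star_mulVec, hFH, ← dotProduct_mulVec, Matrix.mulVec_mulVec, Matrix.mulVec_mulVec,
        hΔ0, Matrix.zero_mulVec, dotProduct_zero]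
    exact hpos.ne' h0
  have hF0 : X⁻¹ - (X⁻¹)ᵀ = 0 := by
    rw [← hFdef]
    ext i j
    have := congrFun (hvec (Pi.single j 1)) i
    simpa using this
  -- X is symmetric, hence real
  have hXsymm : Xᵀ = X := by
    have h1 : (Xᵀ)⁻¹ = X⁻¹ := by
      rw [← Matrix.transpose_nonsing_inv]
      exact (sub_eq_zero.mp hF0).symm
    calc Xᵀ = ((Xᵀ)⁻¹)⁻¹ := (Matrix.nonsing_inv_nonsing_inv _ hdXt).symm
    _ = (X⁻¹)⁻¹ := by rw [h1]
    _ = X := Matrix.nonsing_inv_nonsing_inv _ hdX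
  intro i j
  have hsym : X j i = X i j := by
    have := congrFun (congrFun hXsymm i) j
    simpa [Matrix.transpose_apply] using this
  have hfix : star (X i j) = X i j := by
    conv_lhs => rw [← hsym]
    exact hst i j
  simpa [Complex.ext_iff, neg_eq_iff_add_eq_zero] using hfix
end

section
/- Let n ≥ 1 and let S be the n×n prefix-sum matrix with entries S_{ij} = 1 if j ≤ i and 0 otherwise. For each k ∈ {1,…,n} set μ_k = 1 / (4·sin²((2k−1)π/(4n+2))). Then each μ_k is an eigenvalue of SᵀS, i.e., det(SᵀS − μ_k·I) = 0 for every k ∈ {1,…,n}, and the values μ₁,…,μₙ are pairwise distinct (so the singular values of S are σ_k = 1/(2·sin((2k−1)π/(4n+2)))). -/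
open Matrix Real

private lemma key1 (φ a : ℝ) :
    Real.sin (a + φ) - Real.sin (a - φ) = 2 * Real.cos a * Real.sin φ := by
  rw [Real.sin_add, Real.sin_sub]; ring

private lemma key2 (φ a : ℝ) :
    Real.cos (a - φ) - Real.cos (a + φ) = 2 * Real.sin a * Real.sin φ := by
  rw [Real.cos_sub, Real.cos_add]; ring

private lemma tele1 (φ : ℝ) (m : ℕ) :
    ∑ j ∈ Finset.range m, Real.cos ((2 * (j:ℝ) + 1) * φ) * (2 * Real.sin φ)
      = Real.sin (2 * (m:ℝ) * φ) := by
  induction m with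
  | zero => simp
  | succ m ih =>
    rw [Finset.sum_range_succ, ih]
    have h := key1 φ ((2 * (m:ℝ) + 1) * φ)
    have e1 : (2 * (m:ℝ) + 1) * φ + φ = 2 * ((m:ℝ) + 1) * φ := by ring
    have e2 : (2 * (m:ℝ) + 1) * φ - φ = 2 * (m:ℝ) * φ := by ring
    rw [e1, e2] at h
    push_cast
    linarith

private lemma tele2 (φ : ℝ) (m : ℕ) :
    ∑ j ∈ Finset.range m, Real.sin (2 * ((j:ℝ) + 1) * φ) * (2 * Real.sin φ)
      = Real.cos φ - Real.cos ((2 * (m:ℝ) + 1) * φ) := by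
  induction m with
  | zero => simp
  | succ m ih =>
    rw [Finset.sum_range_succ, ih]
    have h := key2 φ ((2 * (m:ℝ) + 2) * φ)
    have e1 : (2 * (m:ℝ) + 2) * φ - φ = (2 * (m:ℝ) + 1) * φ := by ring
    have e2 : (2 * (m:ℝ) + 2) * φ + φ = (2 * ((m:ℝ) + 1) + 1) * φ := by ring
    have e3 : (2 * (m:ℝ) + 2) * φ = 2 * ((m:ℝ) + 1) * φ := by ring
    rw [e1, e2, e3] at h
    push_cast
    linarith

private lemma sum_le_eq (n : ℕ) (i : Fin n) (g : ℕ → ℝ) :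
    ∑ j : Fin n, (if (j:ℕ) ≤ (i:ℕ) then g (j:ℕ) else 0)
      = ∑ m ∈ Finset.range ((i:ℕ)+1), g m := by
  calc ∑ j : Fin n, (if (j:ℕ) ≤ (i:ℕ) then g (j:ℕ) else 0)
      = ∑ m ∈ Finset.range n, (if m ≤ (i:ℕ) then g m else 0) :=
        Fin.sum_univ_eq_sum_range (fun m : ℕ => if m ≤ (i:ℕ) then g m else 0) n
    _ = ∑ m ∈ Finset.range ((i:ℕ)+1), g m := by
        rw [← Finset.sum_filter]
        apply Finset.sum_congr _ (fun _ _ => rfl)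
        ext m
        simp only [Finset.mem_filter, Finset.mem_range, Nat.lt_succ_iff]
        exact ⟨fun h => h.2, fun h => ⟨lt_of_le_of_lt h i.isLt, h⟩⟩

private lemma sum_ge_eq (n : ℕ) (j : Fin n) (g : ℕ → ℝ) :
    ∑ i : Fin n, (if (j:ℕ) ≤ (i:ℕ) then g (i:ℕ) else 0)
      = ∑ m ∈ Finset.range n, g m - ∑ m ∈ Finset.range (j:ℕ), g m := by
  calc ∑ i : Fin n, (if (j:ℕ) ≤ (i:ℕ) then g (i:ℕ) else 0)
      = ∑ m ∈ Finset.range n, (if (j:ℕ) ≤ m then g m else 0) :=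
        Fin.sum_univ_eq_sum_range (fun m : ℕ => if (j:ℕ) ≤ m then g m else 0) n
    _ = ∑ m ∈ Finset.Ico (j:ℕ) n, g m := by
        rw [← Finset.sum_filter]
        apply Finset.sum_congr _ (fun _ _ => rfl)
        ext m
        simp [Finset.mem_filter, Finset.mem_range, Finset.mem_Ico, and_comm]
    _ = _ := Finset.sum_Ico_eq_sub _ (le_of_lt j.isLt)

/-- Proposition `prefix_sum_singular_values`: each
`μ_k = 1/(4 sin²((2k−1)π/(4n+2)))` (for `k = 1, …, n`, here `k = (k:Fin n)+1`)
is an eigenvalue of `SᵀS` for the prefix-sum matrix `S`, and these values are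
pairwise distinct. -/
theorem prefix_sum_gram_eigenvalues (n : ℕ) (hn : 1 ≤ n)
    (S : Matrix (Fin n) (Fin n) ℝ)
    (hSdef : ∀ i j : Fin n, S i j = if j ≤ i then 1 else 0)
    (μ : Fin n → ℝ)
    (hμ : ∀ k : Fin n,
      μ k = 1 / (4 * Real.sin ((2 * ((k : ℕ) + 1) - 1) * Real.pi /
        (4 * n + 2)) ^ 2)) :
    (∀ k : Fin n, (Sᵀ * S - μ k • (1 : Matrix (Fin n) (Fin n) ℝ)).det = 0) ∧
    Function.Injective μ := by
  -- basic facts about the angles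
  have hang : ∀ k : Fin n,
      (0:ℝ) < (2 * ((k:ℕ):ℝ) + 1) * Real.pi / (4 * n + 2) ∧
      (2 * ((k:ℕ):ℝ) + 1) * Real.pi / (4 * n + 2) < Real.pi / 2 := by
    intro k
    have hk : ((k:ℕ):ℝ) < n := by exact_mod_cast k.isLt
    have hk0 : (0:ℝ) ≤ ((k:ℕ):ℝ) := by positivity
    constructor
    · positivity
    · rw [div_lt_div_iff₀ (by positivity) (by norm_num)]
      nlinarith [Real.pi_pos]
  have hμ' : ∀ k : Fin n,
      μ k = 1 / (4 * Real.sin ((2 * ((k:ℕ):ℝ) + 1) * Real.pi / (4 * n + 2)) ^ 2) := by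
    intro k
    rw [hμ k]
    congr 3
    ring
  constructor
  · intro k
    set φ : ℝ := (2 * ((k:ℕ):ℝ) + 1) * Real.pi / (4 * n + 2) with hφdef
    obtain ⟨hφpos, hφlt⟩ := hang k
    have hs : 0 < Real.sin φ :=
      Real.sin_pos_of_pos_of_lt_pi hφpos
        (lt_trans hφlt (by linarith [Real.pi_pos]))
    have hs2 : (2 * Real.sin φ) ≠ 0 := by positivity
    have hcosN : Real.cos ((2 * (n:ℝ) + 1) * φ) = 0 := by
      have h : (2 * (n:ℝ) + 1) * φ = (2 * ((k:ℕ):ℤ) + 1) * Real.pi / 2 := by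
        rw [hφdef]
        have : (4 * (n:ℝ) + 2) ≠ 0 := by positivity
        field_simp
        push_cast
        ring
      rw [h, Real.cos_eq_zero_iff]
      exact ⟨(k:ℕ), by push_cast; ring⟩
    set u : Fin n → ℝ := fun j => Real.cos ((2 * ((j:ℕ):ℝ) + 1) * φ) with hudef
    -- S *ᵥ u
    have hSu : ∀ i : Fin n,
        (S *ᵥ u) i = Real.sin (2 * (((i:ℕ):ℝ) + 1) * φ) / (2 * Real.sin φ) := by
      intro i
      rw [Matrix.mulVec, dotProduct]
      have step : ∑ j : Fin n, S i j * u j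
          = ∑ j : Fin n, (if (j:ℕ) ≤ (i:ℕ) then Real.cos ((2 * ((j:ℕ):ℝ) + 1) * φ) else 0) := by
        refine Finset.sum_congr rfl fun j _ => ?_
        simp only [hSdef, hudef, Fin.le_def]
        by_cases h : (j:ℕ) ≤ (i:ℕ) <;> simp [h]
      rw [step, sum_le_eq n i (fun m => Real.cos ((2 * (m:ℝ) + 1) * φ))]
      rw [eq_div_iff hs2, Finset.sum_mul]
      have := tele1 φ ((i:ℕ)+1)
      push_cast at this ⊢
      convert this using 2
    -- Sᵀ *ᵥ (S *ᵥ u)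
    have hSTu : ∀ j : Fin n, (Sᵀ *ᵥ (S *ᵥ u)) j = μ k * u j := by
      intro j
      rw [Matrix.mulVec, dotProduct]
      have step : ∑ i : Fin n, Sᵀ j i * (S *ᵥ u) i
          = ∑ i : Fin n, (if (j:ℕ) ≤ (i:ℕ)
              then Real.sin (2 * (((i:ℕ):ℝ) + 1) * φ) / (2 * Real.sin φ) else 0) := by
        refine Finset.sum_congr rfl fun i _ => ?_
        simp only [Matrix.transpose_apply, hSdef, hSu, Fin.le_def]
        by_cases h : (j:ℕ) ≤ (i:ℕ) <;> simp [h]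
      rw [step, sum_ge_eq n j (fun m => Real.sin (2 * ((m:ℝ) + 1) * φ) / (2 * Real.sin φ))]
      rw [← Finset.sum_div, ← Finset.sum_div]
      have t1 : ∑ m ∈ Finset.range n, Real.sin (2 * ((m:ℝ) + 1) * φ)
          = (Real.cos φ - Real.cos ((2 * (n:ℝ) + 1) * φ)) / (2 * Real.sin φ) := by
        rw [eq_div_iff hs2, Finset.sum_mul]; exact tele2 φ n
      have t2 : ∑ m ∈ Finset.range (j:ℕ), Real.sin (2 * ((m:ℝ) + 1) * φ)
          = (Real.cos φ - Real.cos ((2 * ((j:ℕ):ℝ) + 1) * φ)) / (2 * Real.sin φ) := by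
        rw [eq_div_iff hs2, Finset.sum_mul]; exact tele2 φ (j:ℕ)
      have hg : u j = Real.cos ((2 * ((j:ℕ):ℝ) + 1) * φ) := rfl
      have hsne : Real.sin φ ≠ 0 := ne_of_gt hs
      rw [t1, t2, hcosN, hμ' k, ← hφdef, hg]
      generalize Real.cos ((2 * ((j:ℕ):ℝ) + 1) * φ) = c
      field_simp
      ring_nf
    -- the kernel vector is nonzero
    have hune : u ≠ 0 := by
      intro h
      have h0 : u ⟨0, hn⟩ = 0 := by rw [h]; rfl
      have harg : (2 * (((⟨0, hn⟩ : Fin n) :ℕ):ℝ) + 1) * φ = φ := by norm_num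
      rw [hudef] at h0
      simp only [harg] at h0
      have hc : 0 < Real.cos φ :=
        Real.cos_pos_of_mem_Ioo ⟨by linarith, hφlt⟩
      linarith
    -- the kernel equation
    have hker : (Sᵀ * S - μ k • (1 : Matrix (Fin n) (Fin n) ℝ)) *ᵥ u = 0 := by
      ext j
      rw [Matrix.sub_mulVec, Matrix.smul_mulVec, Matrix.one_mulVec,
        ← Matrix.mulVec_mulVec]
      simp only [Pi.sub_apply, Pi.smul_apply, Pi.zero_apply, smul_eq_mul]
      rw [hSTu j]
      ring
    exact Matrix.exists_mulVec_eq_zero_iff.mp ⟨u, hune, hker⟩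
  · -- injectivity
    have hanti : StrictAnti μ := by
      intro k l hkl
      obtain ⟨hk1, hk2⟩ := hang k
      obtain ⟨hl1, hl2⟩ := hang l
      have hkl' : ((k:ℕ):ℝ) < ((l:ℕ):ℝ) := by exact_mod_cast hkl
      have hlt : (2 * ((k:ℕ):ℝ) + 1) * Real.pi / (4 * n + 2)
          < (2 * ((l:ℕ):ℝ) + 1) * Real.pi / (4 * n + 2) := by
        gcongr
        all_goals first | exact Real.pi_pos.le | linarith
      have hsin : Real.sin ((2 * ((k:ℕ):ℝ) + 1) * Real.pi / (4 * n + 2))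
          < Real.sin ((2 * ((l:ℕ):ℝ) + 1) * Real.pi / (4 * n + 2)) :=
        Real.strictMonoOn_sin ⟨by linarith [Real.pi_pos], hk2.le⟩
          ⟨by linarith [Real.pi_pos], hl2.le⟩ hlt
      have hsk : 0 < Real.sin ((2 * ((k:ℕ):ℝ) + 1) * Real.pi / (4 * n + 2)) :=
        Real.sin_pos_of_pos_of_lt_pi hk1 (by linarith [Real.pi_pos])
      rw [hμ' k, hμ' l]
      apply one_div_lt_one_div_of_lt (by positivity)
      nlinarith
    exact hanti.injective
end

section
/- For every natural number n ≥ 1, ∑_{j=1}^{⌊(n+1)/2⌋} 1 / (2·sin((4j−3)π/(4n+2))) ≥ (n/(2π))·log n, where log denotes the natural logarithm. (The left-hand side is the sum of the odd-indexed singular values σ_{2j−1} = 1/(2 sin((2(2j−1)−1)π/(4n+2))) of the n×n prefix-sum matrix.) -/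
open Real

lemma harmonic_quarter (m : ℕ) :
    (1/4 : ℝ) * Real.log (4*m+1) ≤ ∑ j ∈ Finset.Icc 1 m, 1/(4*(j:ℝ)-3) := by
  induction m with
  | zero => simp
  | succ m ih =>
    rw [Finset.sum_Icc_succ_top (by omega : 1 ≤ m+1)]
    have h1 : (0:ℝ) < 4*(m:ℝ)+1 := by positivity
    have h2 : Real.log (4*((m:ℝ)+1)+1) ≤ Real.log (4*(m:ℝ)+1) + 4/(4*(m:ℝ)+1) := by
      have hpos : (0:ℝ) < (4*((m:ℝ)+1)+1)/(4*(m:ℝ)+1) := by positivity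
      have hlog := Real.log_le_sub_one_of_pos hpos
      rw [Real.log_div (by positivity) (by positivity)] at hlog
      have : (4*((m:ℝ)+1)+1)/(4*(m:ℝ)+1) - 1 = 4/(4*(m:ℝ)+1) := by
        field_simp
        ring
      linarith [hlog, this.le, this.ge]
    push_cast at ih ⊢
    have h3 : 1/(4*((m:ℝ)+1)-3) = 4/(4*(m:ℝ)+1) / 4 := by
      have h4 : 4*((m:ℝ)+1)-3 = 4*(m:ℝ)+1 := by ring
      rw [h4, div_div, eq_comm, div_eq_iff (by positivity)]
      field_simp
    nlinarith [h2]

/-- Proposition `prefix_sum_singular_values`, summed form: for every `n ≥ 1`,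
`∑_{j=1}^{⌊(n+1)/2⌋} 1/(2 sin((4j−3)π/(4n+2))) ≥ (n/(2π)) log n`. -/
theorem odd_singular_values_sum_lower_bound (n : ℕ) (hn : 1 ≤ n) :
    (n / (2 * Real.pi)) * Real.log n ≤
      ∑ j ∈ Finset.Icc 1 ((n + 1) / 2),
        1 / (2 * Real.sin ((4 * (j : ℝ) - 3) * Real.pi / (4 * n + 2))) := by
  set m := (n+1)/2 with hm
  have hpi := Real.pi_pos
  have key : ∀ j ∈ Finset.Icc 1 m,
      ((2*(n:ℝ)+1)/Real.pi) * (1/(4*(j:ℝ)-3)) ≤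
        1 / (2 * Real.sin ((4 * (j : ℝ) - 3) * Real.pi / (4 * n + 2))) := by
    intro j hj
    simp only [Finset.mem_Icc] at hj
    obtain ⟨hj1, hj2⟩ := hj
    have h43 : (1:ℝ) ≤ 4*(j:ℝ)-3 := by
      have : (1:ℝ) ≤ (j:ℝ) := by exact_mod_cast hj1
      linarith
    have hlt : 4*(j:ℝ)-3 < 4*(n:ℝ)+2 := by
      have h2j : 2*j ≤ n+1 := by omega
      have : (2*(j:ℝ)) ≤ (n:ℝ)+1 := by exact_mod_cast h2j
      linarith
    have hden : (0:ℝ) < 4*(n:ℝ)+2 := by positivity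
    set x := (4 * (j : ℝ) - 3) * Real.pi / (4 * (n:ℝ) + 2) with hx
    have hx0 : 0 < x := div_pos (by nlinarith) hden
    have hxpi : x < Real.pi := by
      rw [hx, div_lt_iff₀ hden]
      nlinarith
    have hs0 : 0 < Real.sin x := Real.sin_pos_of_pos_of_lt_pi hx0 hxpi
    have hsle : Real.sin x ≤ x := Real.sin_le hx0.le
    have h1 : 1/(2*x) ≤ 1/(2*Real.sin x) :=
      one_div_le_one_div_of_le (by linarith) (by linarith)
    have h2 : ((2*(n:ℝ)+1)/Real.pi) * (1/(4*(j:ℝ)-3)) = 1/(2*x) := by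
      rw [hx]
      field_simp
      ring
    rw [h2]
    exact h1
  have hsum := Finset.sum_le_sum key
  rw [← Finset.mul_sum] at hsum
  have hH := harmonic_quarter m
  have h2m : n ≤ 2*m := by omega
  have hmn : (n:ℝ) ≤ 4*(m:ℝ)+1 := by
    have : (n:ℝ) ≤ 2*(m:ℝ) := by exact_mod_cast h2m
    linarith
  have hn1 : (1:ℝ) ≤ (n:ℝ) := by exact_mod_cast hn
  have hlog : Real.log n ≤ Real.log (4*(m:ℝ)+1) := Real.log_le_log (by linarith) hmn
  have hlogn : 0 ≤ Real.log n := Real.log_nonneg hn1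
  have hc : 0 ≤ (2*(n:ℝ)+1)/Real.pi := by positivity
  calc (n / (2 * Real.pi)) * Real.log n
      ≤ ((2*(n:ℝ)+1)/Real.pi) * ((1/4) * Real.log n) := by
        rw [div_mul_eq_mul_div, div_mul_eq_mul_div]
        rw [div_le_div_iff₀ (by positivity) hpi]
        nlinarith [mul_nonneg hlogn hpi.le]
    _ ≤ ((2*(n:ℝ)+1)/Real.pi) * ((1/4) * Real.log (4*(m:ℝ)+1)) := by
        apply mul_le_mul_of_nonneg_left (by linarith) hc
    _ ≤ _ := by
        refine le_trans (mul_le_mul_of_nonneg_left hH hc) hsum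
end
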